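/- arXiv:2305.18268 — 5 statements merged into one kernel-verified Lean document; each statement's English description precedes it below -/
import Mathlib

section
/- Let P be an irreducible transition matrix on a finite state space S, reversible with respect to π, with orthonormal (in L²(π)) eigenbasis v_1=𝟙, v_2,…,v_n and eigenvalues λ_1=1 ≥ λ_2 ≥ … ≥ λ_n. If f ∈ L²₀(π) with f = Σ_i a_i v_i, then the asymptotic variance v(f,P) = lim_{N→∞} (1/N) Var_{π,P}(Σ_{i=1}^N f(X_i)) exists and equals Σ_{i=2}^n a_i² (1+λ_i)/(1-λ_i). -/
open Matrix BigOperators Filter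

def IsStochastic {n : ℕ} (P : Matrix (Fin n) (Fin n) ℝ) : Prop :=
  (∀ x y, 0 ≤ P x y) ∧ ∀ x, ∑ y, P x y = 1

def IsReversible {n : ℕ} (π : Fin n → ℝ) (P : Matrix (Fin n) (Fin n) ℝ) : Prop :=
  ∀ x y, π x * P x y = π y * P y x

def MatIrreducible {n : ℕ} (P : Matrix (Fin n) (Fin n) ℝ) : Prop :=
  ∀ x y, ∃ k : ℕ, 0 < (P ^ k) x y

noncomputable def pInner {n : ℕ} (π f g : Fin n → ℝ) : ℝ := ∑ x, f x * g x * π x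

noncomputable def autocov {n : ℕ} (π : Fin n → ℝ) (P : Matrix (Fin n) (Fin n) ℝ)
    (f : Fin n → ℝ) (k : ℕ) : ℝ :=
  ∑ x, ∑ y, π x * (f x - ∑ z, π z * f z) * (P ^ k) x y * (f y - ∑ z, π z * f z)

noncomputable def varN {n : ℕ} (π : Fin n → ℝ) (P : Matrix (Fin n) (Fin n) ℝ)
    (f : Fin n → ℝ) (N : ℕ) : ℝ :=
  ((N : ℝ))⁻¹ * ∑ i ∈ Finset.range N, ∑ j ∈ Finset.range N,
    autocov π P f (max i j - min i j)

def HasAsymptVar {n : ℕ} (π : Fin n → ℝ) (P : Matrix (Fin n) (Fin n) ℝ)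
    (f : Fin n → ℝ) (v : ℝ) : Prop :=
  Tendsto (varN π P f) atTop (nhds v)

def EffDom {n : ℕ} (π : Fin n → ℝ) (P Q : Matrix (Fin n) (Fin n) ℝ) : Prop :=
  ∀ (f : Fin n → ℝ) (vP vQ : ℝ),
    HasAsymptVar π P f vP → HasAsymptVar π Q f vQ → vP ≤ vQ

section Aux
open Finset

/-- The key analytic limit. -/
lemma Tlim {l : ℝ} (h1 : -1 ≤ l) (h2 : l < 1) :
    Tendsto (fun N : ℕ => (N:ℝ)⁻¹ * ∑ i ∈ range N, ∑ j ∈ range N, l ^ (max i j - min i j))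
      atTop (nhds ((1+l)/(1-l))) := by
  rcases eq_or_lt_of_le h1 with heq | hlt
  · -- l = -1
    subst heq
    have hS : ∀ N : ℕ, ∑ i ∈ range N, ∑ j ∈ range N, (-1:ℝ) ^ (max i j - min i j)
        = (∑ i ∈ range N, (-1:ℝ)^i) * (∑ j ∈ range N, (-1:ℝ)^j) := by
      intro N
      rw [Finset.sum_mul_sum]
      refine Finset.sum_congr rfl fun i _ => Finset.sum_congr rfl fun j _ => ?_
      have h1 : (-1:ℝ) ^ (max i j - min i j)
          = (-1:ℝ) ^ (max i j - min i j) * ((-1:ℝ)^2)^(min i j) := by norm_num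
      rw [h1, ← pow_mul, ← pow_add]
      have h2 : max i j - min i j + 2 * min i j = i + j := by
        rcases le_total i j with h | h <;>
          simp [max_eq_right, max_eq_left, min_eq_left, min_eq_right, h] <;> omega
      rw [h2, pow_add]
    have hbound : ∀ N : ℕ, (∑ i ∈ range N, (-1:ℝ)^i) * (∑ j ∈ range N, (-1:ℝ)^j) ≤ 1 ∧
        0 ≤ (∑ i ∈ range N, (-1:ℝ)^i) * (∑ j ∈ range N, (-1:ℝ)^j) := by
      intro N
      rw [neg_one_geom_sum]
      split <;> norm_num
    have h0 : ((1:ℝ)+(-1))/(1-(-1)) = 0 := by norm_num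
    rw [h0]
    apply squeeze_zero (g := fun N : ℕ => (N:ℝ)⁻¹)
    · intro N
      rw [hS]
      exact mul_nonneg (by positivity) (hbound N).2
    · intro N
      rw [hS]
      calc (N:ℝ)⁻¹ * ((∑ i ∈ range N, (-1:ℝ)^i) * (∑ j ∈ range N, (-1:ℝ)^j))
          ≤ (N:ℝ)⁻¹ * 1 := mul_le_mul_of_nonneg_left (hbound N).1 (by positivity)
        _ = (N:ℝ)⁻¹ := mul_one _
    · exact tendsto_inv_atTop_zero.comp tendsto_natCast_atTop_atTop
  · -- |l| < 1
    have habs : |l| < 1 := abs_lt.2 ⟨hlt, h2⟩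
    have hkey : ∀ N : ℕ, ∑ i ∈ range N, ∑ j ∈ range N, l ^ (max i j - min i j)
        = ∑ m ∈ range N, (1 + 2 * ∑ k ∈ range m, l^(k+1)) := by
      intro N
      induction N with
      | zero => simp
      | succ N ih =>
        have hrefl : ∑ i ∈ range N, l ^ (N - i) = ∑ k ∈ range N, l^(k+1) := by
          rw [← Finset.sum_range_reflect (fun k => l^(k+1)) N]
          refine Finset.sum_congr rfl fun j hj => ?_
          rw [Finset.mem_range] at hj
          congr 1
          omega
        calc ∑ i ∈ range (N+1), ∑ j ∈ range (N+1), l ^ (max i j - min i j)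
            = ∑ i ∈ range (N+1), ((∑ j ∈ range N, l ^ (max i j - min i j))
                + l ^ (max i N - min i N)) := by
              refine Finset.sum_congr rfl fun i _ => ?_
              rw [Finset.sum_range_succ]
          _ = (∑ i ∈ range N, ((∑ j ∈ range N, l ^ (max i j - min i j))
                + l ^ (max i N - min i N)))
              + ((∑ j ∈ range N, l ^ (max N j - min N j)) + l ^ (max N N - min N N)) := by
              rw [Finset.sum_range_succ]
          _ = (∑ i ∈ range N, ∑ j ∈ range N, l ^ (max i j - min i j))
              + (∑ i ∈ range N, l ^ (max i N - min i N))
              + ((∑ j ∈ range N, l ^ (max N j - min N j)) + 1) := by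
              rw [Finset.sum_add_distrib]; simp
          _ = (∑ m ∈ range N, (1 + 2 * ∑ k ∈ range m, l^(k+1)))
              + (1 + 2 * ∑ k ∈ range N, l^(k+1)) := by
              rw [ih]
              have e1 : ∀ i ∈ range N, l ^ (max i N - min i N) = l ^ (N - i) := by
                intro i hi; rw [mem_range] at hi
                congr 1
                rw [max_eq_right (le_of_lt hi), min_eq_left (le_of_lt hi)]
              have e2 : ∀ j ∈ range N, l ^ (max N j - min N j) = l ^ (N - j) := by
                intro j hj; rw [mem_range] at hj
                congr 1
                rw [max_eq_left (le_of_lt hj), min_eq_right (le_of_lt hj)]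
              rw [Finset.sum_congr rfl e1, Finset.sum_congr rfl e2, hrefl]
              ring
          _ = ∑ m ∈ range (N+1), (1 + 2 * ∑ k ∈ range m, l^(k+1)) := by
              rw [Finset.sum_range_succ]
    have hc : Tendsto (fun m : ℕ => 1 + 2 * ∑ k ∈ range m, l^(k+1)) atTop
        (nhds ((1+l)/(1-l))) := by
      have hgeom : Tendsto (fun m : ℕ => ∑ k ∈ range m, l^k) atTop (nhds ((1-l)⁻¹)) :=
        (hasSum_geometric_of_abs_lt_one habs).tendsto_sum_nat
      have h2' : Tendsto (fun m : ℕ => ∑ k ∈ range m, l^(k+1)) atTop (nhds (l * (1-l)⁻¹)) := by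
        have : (fun m : ℕ => ∑ k ∈ range m, l^(k+1)) = fun m => l * ∑ k ∈ range m, l^k := by
          funext m; rw [Finset.mul_sum]; exact Finset.sum_congr rfl fun k _ => by ring
        rw [this]
        exact hgeom.const_mul l
      have heq : (1:ℝ) + 2 * (l * (1-l)⁻¹) = (1+l)/(1-l) := by
        have : (1:ℝ) - l ≠ 0 := by linarith
        field_simp
        ring
      rw [← heq]
      exact tendsto_const_nhds.add (h2'.const_mul 2)
    exact hc.cesaro.congr fun N => by rw [hkey]

lemma stoch_pow {n : ℕ} {P : Matrix (Fin n) (Fin n) ℝ} (hP : IsStochastic P) (k : ℕ) :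
    IsStochastic (P ^ k) := by
  induction k with
  | zero =>
    constructor
    · intro x y
      simp [Matrix.one_apply]
      split <;> norm_num
    · intro x; simp [Matrix.one_apply]
  | succ k ih =>
    rw [pow_succ]
    constructor
    · intro x y
      rw [Matrix.mul_apply]
      exact Finset.sum_nonneg fun z _ => mul_nonneg (ih.1 x z) (hP.1 z y)
    · intro x
      simp only [Matrix.mul_apply]
      rw [Finset.sum_comm]
      calc ∑ z, ∑ y, (P^k) x z * P z y = ∑ z, (P^k) x z * ∑ y, P z y := by
            simp [Finset.mul_sum]
        _ = 1 := by simp [hP.2, ih.2 x]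

lemma eig_pow {n : ℕ} {P : Matrix (Fin n) (Fin n) ℝ} {v : Fin n → ℝ} {l : ℝ}
    (h : P.mulVec v = l • v) (k : ℕ) : (P ^ k).mulVec v = (l ^ k) • v := by
  induction k with
  | zero => simp
  | succ k ih =>
    rw [pow_succ, ← Matrix.mulVec_mulVec, h, Matrix.mulVec_smul, ih, smul_smul, pow_succ]
    ring_nf

lemma v_ne_zero {n : ℕ} {π w : Fin n → ℝ} (h : pInner π w w = 1) : ∃ x, w x ≠ 0 := by
  by_contra hc
  push_neg at hc
  rw [pInner] at h
  simp [hc] at h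

/-- |λ| ≤ 1 for any eigenvalue of a stochastic matrix with nonzero eigenvector. -/
lemma eig_abs_le {n : ℕ} [NeZero n] {P : Matrix (Fin n) (Fin n) ℝ} (hP : IsStochastic P)
    {w : Fin n → ℝ} {l : ℝ} (h : P.mulVec w = l • w) (hw : ∃ x, w x ≠ 0) : |l| ≤ 1 := by
  obtain ⟨x₀, _, hx₀⟩ := Finset.exists_max_image Finset.univ (fun x => |w x|) univ_nonempty
  obtain ⟨x, hx⟩ := hw
  have hM : 0 < |w x₀| := lt_of_lt_of_le (abs_pos.2 hx) (hx₀ x (mem_univ x))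
  have heq : P.mulVec w x₀ = l * w x₀ := by rw [h]; rfl
  have hb : |l| * |w x₀| ≤ |w x₀| := by
    rw [← abs_mul, ← heq, Matrix.mulVec, dotProduct]
    calc |∑ y, P x₀ y * w y| ≤ ∑ y, |P x₀ y * w y| := Finset.abs_sum_le_sum_abs _ _
      _ = ∑ y, P x₀ y * |w y| := by
          refine Finset.sum_congr rfl fun y _ => ?_
          rw [abs_mul, abs_of_nonneg (hP.1 x₀ y)]
      _ ≤ ∑ y, P x₀ y * |w x₀| := by
          refine Finset.sum_le_sum fun y _ => ?_
          exact mul_le_mul_of_nonneg_left (hx₀ y (mem_univ y)) (hP.1 x₀ y)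
      _ = |w x₀| := by rw [← Finset.sum_mul, hP.2 x₀, one_mul]
  exact le_of_mul_le_mul_right (by linarith [hb]) hM

/-- Maximum principle: harmonic functions of an irreducible stochastic matrix are constant. -/
lemma harmonic_const {n : ℕ} [NeZero n] {P : Matrix (Fin n) (Fin n) ℝ} (hP : IsStochastic P)
    (hirr : MatIrreducible P) {w : Fin n → ℝ} (h : P.mulVec w = w) :
    ∃ c, ∀ y, w y = c := by
  obtain ⟨x₀, _, hx₀⟩ := Finset.exists_max_image Finset.univ w univ_nonempty
  refine ⟨w x₀, fun y => ?_⟩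
  obtain ⟨k, hk⟩ := hirr x₀ y
  have hPk := stoch_pow hP k
  have hfix : (P ^ k).mulVec w = w := by
    have := eig_pow (l := 1) (by simpa using h) k
    simpa using this
  have hsum0 : ∑ z, (P ^ k) x₀ z * (w x₀ - w z) = 0 := by
    have h1 : ∑ z, (P ^ k) x₀ z * (w x₀ - w z)
        = (∑ z, (P ^ k) x₀ z) * w x₀ - ∑ z, (P ^ k) x₀ z * w z := by
      rw [Finset.sum_mul, ← Finset.sum_sub_distrib]
      exact Finset.sum_congr rfl fun z _ => by ring
    have h2 : ∑ z, (P ^ k) x₀ z * w z = w x₀ := by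
      have := congrFun hfix x₀
      rw [Matrix.mulVec, dotProduct] at this
      exact this
    rw [h1, h2, hPk.2 x₀, one_mul, sub_self]
  have hzero := (Finset.sum_eq_zero_iff_of_nonneg
    (fun z _ => mul_nonneg (hPk.1 x₀ z) (by linarith [hx₀ z (mem_univ z)]))).1 hsum0
  have := hzero y (mem_univ y)
  rcases mul_eq_zero.1 this with h' | h'
  · exact absurd h' (ne_of_gt hk)
  · linarith [sub_eq_zero.1 h']

end Aux

theorem stmt2 {n : ℕ} [NeZero n] (π : Fin n → ℝ) (P : Matrix (Fin n) (Fin n) ℝ)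
    (hπpos : ∀ x, 0 < π x) (hπsum : ∑ x, π x = 1)
    (hP : IsStochastic P) (hirr : MatIrreducible P) (hrev : IsReversible π P)
    (v : Fin n → Fin n → ℝ) (lam : Fin n → ℝ)
    (hortho : ∀ i j, pInner π (v i) (v j) = if i = j then 1 else 0)
    (heig : ∀ i, P.mulVec (v i) = lam i • v i)
    (hlam1 : lam 0 = 1) (hv1 : v 0 = fun _ => 1)
    (hmono : Antitone lam)
    (f a : Fin n → ℝ) (hf : f = fun x => ∑ i, a i * v i x)
    (hmean : ∑ x, π x * f x = 0) :
    HasAsymptVar π P f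
      (∑ i ∈ Finset.univ.erase (0 : Fin n), a i ^ 2 * (1 + lam i) / (1 - lam i)) := by
  classical
  -- eigenvector nonzero
  have hvne : ∀ i, ∃ x, v i x ≠ 0 := fun i => v_ne_zero (by simpa using hortho i i)
  have habs : ∀ i, |lam i| ≤ 1 := fun i => eig_abs_le hP (heig i) (hvne i)
  -- strict bound for i ≠ 0
  have hlt : ∀ i : Fin n, i ≠ 0 → lam i < 1 := by
    intro i hi
    by_contra hc
    push_neg at hc
    have h1 : lam i = 1 := le_antisymm ((abs_le.1 (habs i)).2) hc
    have hharm : P.mulVec (v i) = v i := by rw [heig i, h1, one_smul]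
    obtain ⟨c, hcs⟩ := harmonic_const hP hirr hharm
    have hio : pInner π (v i) (v 0) = 0 := by rw [hortho i 0]; simp [hi]
    have hcc : pInner π (v i) (v 0) = c := by
      rw [pInner, hv1]
      calc ∑ x, v i x * (fun _ => (1:ℝ)) x * π x = ∑ x, c * π x := by
            refine Finset.sum_congr rfl fun x _ => ?_
            rw [hcs x]; ring
        _ = c := by rw [← Finset.mul_sum, hπsum, mul_one]
    have hc0 : c = 0 := by rw [← hcc, hio]
    have h11 : pInner π (v i) (v i) = 1 := by simpa using hortho i i
    rw [pInner] at h11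
    have : ∑ x, v i x * v i x * π x = 0 := by
      refine Finset.sum_eq_zero fun x _ => ?_
      rw [hcs x, hc0]; ring
    rw [this] at h11
    norm_num at h11
  have hge : ∀ i : Fin n, -1 ≤ lam i := fun i => (abs_le.1 (habs i)).1
  -- projection formula
  have hproj : ∀ m, ∑ x, f x * v m x * π x = a m := by
    intro m
    rw [hf]
    calc ∑ x, (∑ i, a i * v i x) * v m x * π x
        = ∑ x, ∑ i, a i * (v i x * v m x * π x) := by
          refine Finset.sum_congr rfl fun x _ => ?_
          rw [Finset.sum_mul, Finset.sum_mul]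
          exact Finset.sum_congr rfl fun i _ => by ring
      _ = ∑ i, a i * ∑ x, v i x * v m x * π x := by
          rw [Finset.sum_comm]
          exact Finset.sum_congr rfl fun i _ => by rw [Finset.mul_sum]
      _ = ∑ i, a i * (if i = m then 1 else 0) := by
          refine Finset.sum_congr rfl fun i _ => ?_
          rw [← pInner, hortho i m]
      _ = a m := by simp
  have ha0 : a 0 = 0 := by
    have h := hproj 0
    rw [hv1] at h
    simp only [mul_one] at h
    rw [← h, ← hmean]
    exact Finset.sum_congr rfl fun x _ => mul_comm _ _
  -- autocovariance formula
  have hauto : ∀ k, autocov π P f k = ∑ m, a m ^ 2 * lam m ^ k := by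
    intro k
    unfold autocov
    simp only [hmean, sub_zero]
    have hPkf : ∀ x, ∑ y, (P ^ k) x y * f y = ∑ m, a m * (lam m ^ k * v m x) := by
      intro x
      conv_lhs => rw [hf]
      calc ∑ y, (P ^ k) x y * ∑ m, a m * v m y
          = ∑ y, ∑ m, a m * ((P ^ k) x y * v m y) := by
            refine Finset.sum_congr rfl fun y _ => ?_
            rw [Finset.mul_sum]
            exact Finset.sum_congr rfl fun m _ => by ring
        _ = ∑ m, a m * ∑ y, (P ^ k) x y * v m y := by
            rw [Finset.sum_comm]
            exact Finset.sum_congr rfl fun m _ => by rw [Finset.mul_sum]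
        _ = ∑ m, a m * (lam m ^ k * v m x) := by
            refine Finset.sum_congr rfl fun m _ => ?_
            congr 1
            have := congrFun (eig_pow (heig m) k) x
            rw [Matrix.mulVec, dotProduct] at this
            rw [this]; rfl
    calc ∑ x, ∑ y, π x * f x * (P ^ k) x y * f y
        = ∑ x, π x * f x * ∑ y, (P ^ k) x y * f y := by
          refine Finset.sum_congr rfl fun x _ => ?_
          rw [Finset.mul_sum]
          exact Finset.sum_congr rfl fun y _ => by ring
      _ = ∑ x, ∑ m, (a m * lam m ^ k) * (f x * v m x * π x) := by
          refine Finset.sum_congr rfl fun x _ => ?_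
          rw [hPkf x, Finset.mul_sum]
          exact Finset.sum_congr rfl fun m _ => by ring
      _ = ∑ m, (a m * lam m ^ k) * ∑ x, f x * v m x * π x := by
          rw [Finset.sum_comm]
          exact Finset.sum_congr rfl fun m _ => by rw [Finset.mul_sum]
      _ = ∑ m, a m ^ 2 * lam m ^ k := by
          refine Finset.sum_congr rfl fun m _ => ?_
          rw [hproj m]; ring
  -- rewrite varN
  have hvar : ∀ N : ℕ, varN π P f N
      = ∑ m ∈ Finset.univ.erase (0 : Fin n), a m ^ 2 *
          ((N:ℝ)⁻¹ * ∑ i ∈ Finset.range N, ∑ j ∈ Finset.range N,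
            lam m ^ (max i j - min i j)) := by
    intro N
    unfold varN
    simp only [hauto]
    have hswap : ∑ i ∈ Finset.range N, ∑ j ∈ Finset.range N,
        ∑ m, a m ^ 2 * lam m ^ (max i j - min i j)
        = ∑ m, a m ^ 2 * ∑ i ∈ Finset.range N, ∑ j ∈ Finset.range N,
            lam m ^ (max i j - min i j) := by
      calc ∑ i ∈ Finset.range N, ∑ j ∈ Finset.range N,
            ∑ m, a m ^ 2 * lam m ^ (max i j - min i j)
          = ∑ i ∈ Finset.range N, ∑ m, ∑ j ∈ Finset.range N,
              a m ^ 2 * lam m ^ (max i j - min i j) :=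
            Finset.sum_congr rfl fun i _ => Finset.sum_comm
        _ = ∑ m, ∑ i ∈ Finset.range N, ∑ j ∈ Finset.range N,
              a m ^ 2 * lam m ^ (max i j - min i j) := Finset.sum_comm
        _ = ∑ m, a m ^ 2 * ∑ i ∈ Finset.range N, ∑ j ∈ Finset.range N,
              lam m ^ (max i j - min i j) := by
            refine Finset.sum_congr rfl fun m _ => ?_
            rw [Finset.mul_sum]
            exact Finset.sum_congr rfl fun i _ => by rw [Finset.mul_sum]
    rw [hswap, Finset.mul_sum]
    rw [← Finset.sum_erase_add _ _ (Finset.mem_univ (0 : Fin n))]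
    rw [ha0]
    simp only [ne_eq, OfNat.ofNat_ne_zero, not_false_eq_true, zero_pow, zero_mul,
      mul_zero, add_zero]
    refine Finset.sum_congr rfl fun m _ => by ring
  -- final limit
  have main : Tendsto (fun N : ℕ => ∑ m ∈ Finset.univ.erase (0 : Fin n), a m ^ 2 *
        ((N:ℝ)⁻¹ * ∑ i ∈ Finset.range N, ∑ j ∈ Finset.range N,
          lam m ^ (max i j - min i j))) atTop
      (nhds (∑ i ∈ Finset.univ.erase (0 : Fin n), a i ^ 2 * (1 + lam i) / (1 - lam i))) := by
    refine tendsto_finset_sum _ fun m hm => ?_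
    have hm0 : m ≠ 0 := (Finset.mem_erase.1 hm).1
    have h := (Tlim (hge m) (hlt m hm0)).const_mul (a m ^ 2)
    have : a m ^ 2 * ((1 + lam m) / (1 - lam m)) = a m ^ 2 * (1 + lam m) / (1 - lam m) := by
      ring
    rwa [this] at h
  exact main.congr fun N => (hvar N).symm
end

section
/- If P is an irreducible transition matrix on a finite state space reversible with respect to π, then for any f ∈ L²₀(π), v(f,P) = ⟨f, (I+P)(I−P)^{-1} f⟩, where (I−P)^{-1} denotes the inverse of I−P restricted to L²₀(π). -/
open Matrix BigOperators Filter

/-- Auxiliary sequence: `⟨f, P^m g⟩_π`. -/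
noncomputable def Aseq {n : ℕ} (π f : Fin n → ℝ) (P : Matrix (Fin n) (Fin n) ℝ)
    (g : Fin n → ℝ) (m : ℕ) : ℝ := ∑ x, π x * f x * ((P ^ m).mulVec g) x

/-- Combinatorial double-sum identity for doubly telescoping sequences. -/
theorem doubleSum_aux (γ A B : ℕ → ℝ) (hγ : ∀ k, γ k = A k - A (k+1))
    (hA : ∀ m, A m = B m - B (m+1)) (N : ℕ) :
    ∑ i ∈ Finset.range N, ∑ j ∈ Finset.range N, γ (max i j - min i j)
      = N * (A 0 + A 1) - 2 * (B 1 - B (N+1)) := by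
  have hrow : ∀ i ∈ Finset.range N,
      ∑ j ∈ Finset.range N, γ (max i j - min i j) = A 0 + A 1 - A (i+1) - A (N - i) := by
    intro i hi
    rw [Finset.mem_range] at hi
    have hsplit : ∑ j ∈ Finset.range N, γ (max i j - min i j)
        = (∑ j ∈ Finset.Ico 0 (i+1), γ (max i j - min i j))
          + ∑ j ∈ Finset.Ico (i+1) N, γ (max i j - min i j) := by
      rw [Finset.range_eq_Ico, Finset.sum_Ico_consecutive _ (Nat.zero_le (i+1)) hi]
    have h1 : ∑ j ∈ Finset.Ico 0 (i+1), γ (max i j - min i j) = A 0 - A (i+1) := by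
      rw [← Finset.range_eq_Ico]
      have e : ∀ j ∈ Finset.range (i+1),
          γ (max i j - min i j) = A (i - j) - A (i - j + 1) := by
        intro j hj
        rw [Finset.mem_range, Nat.lt_succ_iff] at hj
        rw [max_eq_left hj, min_eq_right hj, hγ]
      rw [Finset.sum_congr rfl e]
      have := Finset.sum_range_reflect (fun k => A k - A (k+1)) (i+1)
      simp only [Nat.add_sub_cancel] at this
      rw [this, Finset.sum_range_sub' A]
    have h2 : ∑ j ∈ Finset.Ico (i+1) N, γ (max i j - min i j) = A 1 - A (N - i) := by
      rw [Finset.sum_Ico_eq_sum_range]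
      have e : ∀ t ∈ Finset.range (N - (i+1)),
          γ (max i (i+1+t) - min i (i+1+t)) = A (t+1) - A (t+1+1) := by
        intro t _
        have hle : i ≤ i+1+t := by omega
        rw [max_eq_right hle, min_eq_left hle, hγ]
        congr 2 <;> omega
      rw [Finset.sum_congr rfl e, Finset.sum_range_sub' (fun k => A (k+1))]
      have : N - (i+1) + 1 = N - i := by omega
      rw [this]
    rw [hsplit, h1, h2]; ring
  rw [Finset.sum_congr rfl hrow]
  have hrefl : ∑ i ∈ Finset.range N, A (N - i) = ∑ i ∈ Finset.range N, A (i+1) := by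
    rw [← Finset.sum_range_reflect (fun i => A (i+1)) N]
    refine Finset.sum_congr rfl fun i hi => ?_
    rw [Finset.mem_range] at hi
    congr 1; omega
  have htel : ∑ i ∈ Finset.range N, A (i+1) = B 1 - B (N+1) := by
    have e : ∀ i ∈ Finset.range N, A (i+1) = B (i+1) - B (i+1+1) :=
      fun i _ => hA (i+1)
    rw [Finset.sum_congr rfl e, Finset.sum_range_sub' (fun k => B (k+1))]
  have expand : ∑ i ∈ Finset.range N, (A 0 + A 1 - A (i+1) - A (N - i))
      = N * (A 0 + A 1) - (∑ i ∈ Finset.range N, A (i+1))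
        - ∑ i ∈ Finset.range N, A (N - i) := by
    rw [Finset.sum_sub_distrib, Finset.sum_sub_distrib, Finset.sum_const, Finset.card_range,
      nsmul_eq_mul]
  rw [expand, hrefl, htel]; ring

/-- Limit of the normalized sums when the boundary sequence is bounded. -/
theorem limLem_aux (B : ℕ → ℝ) (C : ℝ) (hB : ∀ m, |B m| ≤ C) (L : ℝ) :
    Tendsto (fun N : ℕ => ((N : ℝ))⁻¹ * (N * L - 2 * (B 1 - B (N+1)))) atTop (nhds L) := by
  have h0 : Tendsto (fun N : ℕ => 2 * (B 1 - B (N+1)) / N) atTop (nhds 0) := by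
    refine squeeze_zero_norm (a := fun N : ℕ => 4 * C / N) ?_ ?_
    · intro N
      rw [Real.norm_eq_abs, abs_div, abs_of_nonneg (Nat.cast_nonneg N : (0:ℝ) ≤ N)]
      rcases Nat.eq_zero_or_pos N with h | h
      · simp [h]
      · have hNpos : (0:ℝ) < N := by exact_mod_cast h
        rw [div_le_div_iff_of_pos_right hNpos]
        calc |2 * (B 1 - B (N+1))| = 2 * |B 1 - B (N+1)| := by
              rw [abs_mul]; norm_num
          _ ≤ 2 * (|B 1| + |B (N+1)|) := by
              nlinarith [abs_sub_abs_le_abs_sub (B 1) (B (N+1)), abs_sub (B 1) (B (N+1))]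
          _ ≤ 4 * C := by nlinarith [hB 1, hB (N+1)]
    · exact tendsto_const_div_atTop_nhds_zero_nat (4 * C)
  have h1 : Tendsto (fun N : ℕ => L - 2 * (B 1 - B (N+1)) / N) atTop (nhds (L - 0)) :=
    tendsto_const_nhds.sub h0
  rw [sub_zero] at h1
  refine h1.congr' ?_
  filter_upwards [eventually_ge_atTop 1] with N hN
  have hN0 : (N : ℝ) ≠ 0 := by positivity
  field_simp

theorem stmt4 {n : ℕ} (π : Fin n → ℝ) (P : Matrix (Fin n) (Fin n) ℝ)
    (hπpos : ∀ x, 0 < π x) (hπsum : ∑ x, π x = 1)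
    (hP : IsStochastic P) (hirr : MatIrreducible P) (hrev : IsReversible π P)
    (f g : Fin n → ℝ) (hmeanf : ∑ x, π x * f x = 0) (hmeang : ∑ x, π x * g x = 0)
    (hg : ((1 : Matrix (Fin n) (Fin n) ℝ) - P).mulVec g = f) :
    HasAsymptVar π P f (pInner π f (g + P.mulVec g)) := by
  classical
  -- telescoping for the autocovariances
  have hPkf : ∀ k : ℕ, (P ^ k).mulVec f = (P ^ k).mulVec g - (P ^ (k+1)).mulVec g := by
    intro k
    rw [← hg, Matrix.mulVec_mulVec, Matrix.mul_sub, Matrix.mul_one, ← pow_succ,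
      Matrix.sub_mulVec]
  have hγ : ∀ k, autocov π P f k = Aseq π f P g k - Aseq π f P g (k+1) := by
    intro k
    have hauto : autocov π P f k = ∑ x, π x * f x * ((P ^ k).mulVec f) x := by
      unfold autocov
      simp only [hmeanf, sub_zero, Matrix.mulVec, dotProduct, Finset.mul_sum]
      exact Finset.sum_congr rfl fun x _ => Finset.sum_congr rfl fun y _ => by ring
    rw [hauto, hPkf]
    unfold Aseq
    rw [← Finset.sum_sub_distrib]
    exact Finset.sum_congr rfl fun x _ => by simp [Pi.sub_apply]; ring
  -- telescoping via reversibility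
  have hf : f = g - P.mulVec g := by
    rw [← hg, Matrix.sub_mulVec, Matrix.one_mulVec]
  have hrevlem : ∀ u v : Fin n → ℝ,
      ∑ x, π x * (P.mulVec u) x * v x = ∑ x, π x * u x * (P.mulVec v) x := by
    intro u v
    have l1 : ∑ x, π x * (P.mulVec u) x * v x = ∑ x, ∑ z, π z * P z x * (u z * v x) := by
      refine Finset.sum_congr rfl fun x _ => ?_
      simp only [Matrix.mulVec, dotProduct, Finset.mul_sum, Finset.sum_mul]
      refine Finset.sum_congr rfl fun z _ => ?_
      linear_combination u z * v x * (hrev x z)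
    have l2 : ∑ x, π x * u x * (P.mulVec v) x = ∑ x, ∑ z, π x * P x z * (u x * v z) := by
      refine Finset.sum_congr rfl fun x _ => ?_
      simp only [Matrix.mulVec, dotProduct, Finset.mul_sum]
      exact Finset.sum_congr rfl fun z _ => by ring
    rw [l1, l2]
    exact Finset.sum_comm
  have hA : ∀ m, Aseq π f P g m = Aseq π g P g m - Aseq π g P g (m+1) := by
    intro m
    have step1 : Aseq π f P g m
        = Aseq π g P g m - ∑ x, π x * (P.mulVec g) x * ((P ^ m).mulVec g) x := by
      unfold Aseq
      rw [← Finset.sum_sub_distrib]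
      refine Finset.sum_congr rfl fun x _ => ?_
      rw [hf]; simp [Pi.sub_apply]; ring
    rw [step1, hrevlem g ((P ^ m).mulVec g), Matrix.mulVec_mulVec, ← pow_succ']
    rfl
  -- boundedness of B
  have hpow : ∀ m : ℕ, (∀ x y, 0 ≤ (P ^ m) x y) ∧ (∀ x, ∑ y, (P ^ m) x y = 1) := by
    intro m
    induction m with
    | zero =>
      refine ⟨fun x y => ?_, fun x => ?_⟩
      · rw [pow_zero]
        by_cases h : x = y <;> simp [Matrix.one_apply, h]
      · rw [pow_zero]; simp [Matrix.one_apply]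
    | succ m ih =>
      refine ⟨fun x y => ?_, fun x => ?_⟩
      · rw [pow_succ, Matrix.mul_apply]
        exact Finset.sum_nonneg fun z _ => mul_nonneg (ih.1 x z) (hP.1 z y)
      · rw [pow_succ]
        simp only [Matrix.mul_apply]
        rw [Finset.sum_comm]
        calc ∑ z, ∑ y, (P ^ m) x z * P z y = ∑ z, (P ^ m) x z * ∑ y, P z y := by
              simp [Finset.mul_sum]
          _ = 1 := by simp only [hP.2, mul_one]; exact ih.2 x
  have hBbd : ∀ m, |Aseq π g P g m| ≤ ∑ x, ∑ y, π x * |g x| * |g y| := by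
    intro m
    have hle1 : ∀ x y, (P ^ m) x y ≤ 1 := by
      intro x y
      calc (P ^ m) x y ≤ ∑ z, (P ^ m) x z :=
            Finset.single_le_sum (fun z _ => (hpow m).1 x z) (Finset.mem_univ y)
        _ = 1 := (hpow m).2 x
    have expand : Aseq π g P g m = ∑ x, ∑ y, π x * g x * ((P ^ m) x y * g y) := by
      unfold Aseq
      simp [Matrix.mulVec, dotProduct, Finset.mul_sum]
    rw [expand]
    refine (Finset.abs_sum_le_sum_abs _ _).trans ?_
    refine (Finset.sum_le_sum fun x _ => Finset.abs_sum_le_sum_abs _ _).trans ?_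
    refine Finset.sum_le_sum fun x _ => Finset.sum_le_sum fun y _ => ?_
    rw [abs_mul, abs_mul, abs_mul, abs_of_nonneg (hπpos x).le, abs_of_nonneg ((hpow m).1 x y)]
    have h1 : 0 ≤ π x * |g x| := mul_nonneg (hπpos x).le (abs_nonneg _)
    calc π x * |g x| * ((P ^ m) x y * |g y|) ≤ π x * |g x| * (1 * |g y|) :=
          mul_le_mul_of_nonneg_left
            (mul_le_mul_of_nonneg_right (hle1 x y) (abs_nonneg _)) h1
      _ = π x * |g x| * |g y| := by ring
  -- identify the limit value
  have hpi : pInner π f (g + P.mulVec g) = Aseq π f P g 0 + Aseq π f P g 1 := by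
    unfold pInner Aseq
    rw [pow_zero, pow_one, Matrix.one_mulVec, ← Finset.sum_add_distrib]
    exact Finset.sum_congr rfl fun x _ => by simp [Pi.add_apply]; ring
  rw [HasAsymptVar, hpi]
  refine (limLem_aux (Aseq π g P g) _ hBbd (Aseq π f P g 0 + Aseq π f P g 1)).congr
    fun N => ?_
  unfold varN
  rw [doubleSum_aux (autocov π P f) (Aseq π f P g) (Aseq π g P g) hγ hA N]
end

section
/- For transition matrices P and Q, both irreducible and reversible with respect to π on a finite state space, P efficiency-dominates Q (i.e., v(f,P) ≤ v(f,Q) for all f) if and only if ⟨f, Pf⟩ ≤ ⟨f, Qf⟩ for all f ∈ L²₀(π). -/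
open Matrix BigOperators Filter


namespace Stmt5Aux

variable {n : ℕ}

noncomputable def sqpi (π : Fin n → ℝ) : Fin n → ℝ := fun x => Real.sqrt (π x)

noncomputable def gv (π f : Fin n → ℝ) : Fin n → ℝ := fun x => sqpi π x * f x

noncomputable def symA (π : Fin n → ℝ) (P : Matrix (Fin n) (Fin n) ℝ) :
    Matrix (Fin n) (Fin n) ℝ := Matrix.of fun x y => sqpi π x * P x y * (sqpi π y)⁻¹

def ctr (π f : Fin n → ℝ) : Fin n → ℝ := fun x => f x - ∑ z, π z * f z

noncomputable def Mm (π : Fin n → ℝ) (P : Matrix (Fin n) (Fin n) ℝ) :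
    Matrix (Fin n) (Fin n) ℝ := 1 - symA π P + vecMulVec (sqpi π) (sqpi π)

noncomputable def Vv (π : Fin n → ℝ) (P : Matrix (Fin n) (Fin n) ℝ) (f : Fin n → ℝ) : ℝ :=
  2 * (gv π (ctr π f) ⬝ᵥ ((Mm π P)⁻¹ *ᵥ gv π (ctr π f))) -
    gv π (ctr π f) ⬝ᵥ gv π (ctr π f)

section basics
variable {π : Fin n → ℝ} (hπ : ∀ x, 0 < π x)
include hπ

lemma sqpi_pos (x : Fin n) : 0 < sqpi π x := Real.sqrt_pos.2 (hπ x)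

lemma sqpi_ne (x : Fin n) : sqpi π x ≠ 0 := (sqpi_pos hπ x).ne'

lemma sqpi_mul_self (x : Fin n) : sqpi π x * sqpi π x = π x :=
  Real.mul_self_sqrt (hπ x).le

lemma symA_one : symA π (1 : Matrix (Fin n) (Fin n) ℝ) = 1 := by
  ext x y
  by_cases h : x = y
  · subst h; simp [symA, Matrix.one_apply, mul_inv_cancel₀ (sqpi_ne hπ x)]
  · simp [symA, Matrix.one_apply, h]

lemma symA_mul (P Q : Matrix (Fin n) (Fin n) ℝ) :
    symA π (P * Q) = symA π P * symA π Q := by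
  ext x y
  simp only [symA, Matrix.mul_apply, Matrix.of_apply, Finset.mul_sum, Finset.sum_mul]
  refine Finset.sum_congr rfl fun z _ => ?_
  rw [show sqpi π x * P x z * (sqpi π z)⁻¹ * (sqpi π z * Q z y * (sqpi π y)⁻¹)
      = sqpi π x * (P x z * Q z y) * (sqpi π y)⁻¹ * ((sqpi π z)⁻¹ * sqpi π z) by ring,
    inv_mul_cancel₀ (sqpi_ne hπ z), mul_one]

lemma symA_pow (P : Matrix (Fin n) (Fin n) ℝ) (k : ℕ) :
    symA π (P ^ k) = (symA π P) ^ k := by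
  induction k with
  | zero => simpa [pow_zero] using symA_one hπ
  | succ k ih => rw [pow_succ, pow_succ, symA_mul hπ, ih]

lemma gv_dot (a b : Fin n → ℝ) : gv π a ⬝ᵥ gv π b = pInner π a b := by
  simp only [gv, dotProduct, pInner]
  refine Finset.sum_congr rfl fun x _ => ?_
  rw [show sqpi π x * a x * (sqpi π x * b x) = a x * b x * (sqpi π x * sqpi π x) by ring,
    sqpi_mul_self hπ]

lemma gv_mulVec (P : Matrix (Fin n) (Fin n) ℝ) (f : Fin n → ℝ) :
    gv π (P.mulVec f) = symA π P *ᵥ gv π f := by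
  funext x
  simp only [gv, symA, Matrix.mulVec, dotProduct, Matrix.of_apply, Finset.mul_sum]
  refine Finset.sum_congr rfl fun y _ => ?_
  rw [show sqpi π x * P x y * (sqpi π y)⁻¹ * (sqpi π y * f y)
      = sqpi π x * (P x y * f y) * ((sqpi π y)⁻¹ * sqpi π y) by ring,
    inv_mul_cancel₀ (sqpi_ne hπ y), mul_one]

end basics

section spectralfacts
variable {π : Fin n → ℝ} {P : Matrix (Fin n) (Fin n) ℝ}

lemma isHermitian_symA (hπ : ∀ x, 0 < π x) (hrev : IsReversible π P) :
    (symA π P).IsHermitian := by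
  ext x y
  simp only [conjTranspose_apply, symA, Matrix.of_apply, star_trivial]
  have h := hrev x y
  rw [← sqpi_mul_self hπ x, ← sqpi_mul_self hπ y] at h
  field_simp [sqpi_ne hπ x, sqpi_ne hπ y]
  nlinarith [h]

lemma pow_entry_nonneg (hP : IsStochastic P) (k : ℕ) (x y : Fin n) :
    0 ≤ (P ^ k) x y := by
  induction k generalizing x y with
  | zero => by_cases h : x = y <;> simp [pow_zero, Matrix.one_apply, h]
  | succ k ih =>
    rw [pow_succ, Matrix.mul_apply]
    exact Finset.sum_nonneg fun z _ => mul_nonneg (ih x z) (hP.1 z y)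

lemma symA_mulVec_sq (hπ : ∀ x, 0 < π x) (hP : IsStochastic P) :
    symA π P *ᵥ sqpi π = sqpi π := by
  funext x
  simp only [Matrix.mulVec, dotProduct, symA, Matrix.of_apply]
  have : ∀ y, sqpi π x * P x y * (sqpi π y)⁻¹ * sqpi π y = sqpi π x * P x y := by
    intro y
    rw [mul_assoc, inv_mul_cancel₀ (sqpi_ne hπ y), mul_one]
  rw [Finset.sum_congr rfl fun y _ => this y, ← Finset.mul_sum, hP.2 x, mul_one]

lemma marg1 (hP : IsStochastic P) (f : Fin n → ℝ) :
    ∑ x, ∑ y, π x * P x y * (f x * f x) = ∑ x, π x * (f x * f x) := by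
  refine Finset.sum_congr rfl fun x _ => ?_
  rw [show ∑ y, π x * P x y * (f x * f x) = (π x * (f x * f x)) * ∑ y, P x y by
    rw [Finset.mul_sum]; exact Finset.sum_congr rfl fun y _ => by ring, hP.2 x, mul_one]

lemma marg2 (hP : IsStochastic P) (hrev : IsReversible π P) (f : Fin n → ℝ) :
    ∑ x, ∑ y, π x * P x y * (f y * f y) = ∑ x, π x * (f x * f x) := by
  rw [Finset.sum_comm]
  calc ∑ y, ∑ x, π x * P x y * (f y * f y)
      = ∑ y, ∑ x, π y * P y x * (f y * f y) :=
        Finset.sum_congr rfl fun y _ => Finset.sum_congr rfl fun x _ => by rw [hrev x y]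
    _ = ∑ y, π y * (f y * f y) := marg1 hP f

lemma sum_split (F G : Fin n → Fin n → ℝ) :
    ∑ x, ∑ y, (F x y + G x y) = (∑ x, ∑ y, F x y) + ∑ x, ∑ y, G x y := by
  rw [← Finset.sum_add_distrib]
  exact Finset.sum_congr rfl fun x _ => Finset.sum_add_distrib

lemma quad_upper (hπ : ∀ x, 0 < π x) (hP : IsStochastic P) (hrev : IsReversible π P)
    (f : Fin n → ℝ) :
    ∑ x, ∑ y, π x * P x y * (f x * f y) ≤ ∑ x, π x * (f x * f x) := by
  have pos : 0 ≤ ∑ x, ∑ y, π x * P x y * ((f x - f y) * (f x - f y)) :=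
    Finset.sum_nonneg fun x _ => Finset.sum_nonneg fun y _ =>
      mul_nonneg (mul_nonneg (hπ x).le (hP.1 x y)) (mul_self_nonneg _)
  have expand : ∑ x, ∑ y, π x * P x y * ((f x - f y) * (f x - f y))
      = (∑ x, ∑ y, (π x * P x y * (f x * f x) + π x * P x y * (f y * f y)))
        + ∑ x, ∑ y, (-2) * (π x * P x y * (f x * f y)) := by
    rw [← sum_split]
    exact Finset.sum_congr rfl fun x _ => Finset.sum_congr rfl fun y _ => by ring
  rw [sum_split] at expand
  have m1 := marg1 (π := π) hP f
  have m2 := marg2 (π := π) hP hrev f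
  have neg2 : ∑ x, ∑ y, (-2 : ℝ) * (π x * P x y * (f x * f y))
      = (-2) * ∑ x, ∑ y, π x * P x y * (f x * f y) := by
    rw [Finset.mul_sum]
    exact Finset.sum_congr rfl fun x _ => (Finset.mul_sum _ _ _).symm
  rw [neg2] at expand
  linarith [pos, expand]

lemma quad_lower (hπ : ∀ x, 0 < π x) (hP : IsStochastic P) (hrev : IsReversible π P)
    (f : Fin n → ℝ) :
    -∑ x, π x * (f x * f x) ≤ ∑ x, ∑ y, π x * P x y * (f x * f y) := by
  have pos : 0 ≤ ∑ x, ∑ y, π x * P x y * ((f x + f y) * (f x + f y)) :=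
    Finset.sum_nonneg fun x _ => Finset.sum_nonneg fun y _ =>
      mul_nonneg (mul_nonneg (hπ x).le (hP.1 x y)) (mul_self_nonneg _)
  have expand : ∑ x, ∑ y, π x * P x y * ((f x + f y) * (f x + f y))
      = (∑ x, ∑ y, (π x * P x y * (f x * f x) + π x * P x y * (f y * f y)))
        + ∑ x, ∑ y, (2 : ℝ) * (π x * P x y * (f x * f y)) := by
    rw [← sum_split]
    exact Finset.sum_congr rfl fun x _ => Finset.sum_congr rfl fun y _ => by ring
  rw [sum_split] at expand
  have m1 := marg1 (π := π) hP f
  have m2 := marg2 (π := π) hP hrev f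
  have two : ∑ x, ∑ y, (2 : ℝ) * (π x * P x y * (f x * f y))
      = 2 * ∑ x, ∑ y, π x * P x y * (f x * f y) := by
    rw [Finset.mul_sum]
    exact Finset.sum_congr rfl fun x _ => (Finset.mul_sum _ _ _).symm
  rw [two] at expand
  linarith [pos, expand]

lemma quad_eq_fixed (hπ : ∀ x, 0 < π x) (hP : IsStochastic P) (hrev : IsReversible π P)
    (f : Fin n → ℝ)
    (heq : ∑ x, ∑ y, π x * P x y * (f x * f y) = ∑ x, π x * (f x * f x)) :
    P.mulVec f = f := by
  have expand : ∑ x, ∑ y, π x * P x y * ((f x - f y) * (f x - f y))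
      = (∑ x, ∑ y, (π x * P x y * (f x * f x) + π x * P x y * (f y * f y)))
        + ∑ x, ∑ y, (-2) * (π x * P x y * (f x * f y)) := by
    rw [← sum_split]
    exact Finset.sum_congr rfl fun x _ => Finset.sum_congr rfl fun y _ => by ring
  rw [sum_split] at expand
  have m1 := marg1 (π := π) hP f
  have m2 := marg2 (π := π) hP hrev f
  have neg2 : ∑ x, ∑ y, (-2 : ℝ) * (π x * P x y * (f x * f y))
      = (-2) * ∑ x, ∑ y, π x * P x y * (f x * f y) := by
    rw [Finset.mul_sum]
    exact Finset.sum_congr rfl fun x _ => (Finset.mul_sum _ _ _).symm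
  rw [neg2] at expand
  have hE : ∑ x, ∑ y, π x * P x y * ((f x - f y) * (f x - f y)) = 0 := by
    rw [expand]; linarith
  have hterm : ∀ x ∈ Finset.univ, ∀ y ∈ (Finset.univ : Finset (Fin n)),
      π x * P x y * ((f x - f y) * (f x - f y)) = 0 := by
    have hnn : ∀ x ∈ (Finset.univ : Finset (Fin n)),
        0 ≤ ∑ y, π x * P x y * ((f x - f y) * (f x - f y)) :=
      fun x _ => Finset.sum_nonneg fun y _ =>
        mul_nonneg (mul_nonneg (hπ x).le (hP.1 x y)) (mul_self_nonneg _)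
    have hrow := (Finset.sum_eq_zero_iff_of_nonneg hnn).1 hE
    intro x hx y hy
    exact (Finset.sum_eq_zero_iff_of_nonneg fun y _ =>
      mul_nonneg (mul_nonneg (hπ x).le (hP.1 x y)) (mul_self_nonneg _)).1 (hrow x hx) y hy
  funext x
  have hzero : ∀ y, P x y * (f y - f x) = 0 := by
    intro y
    have h := hterm x (Finset.mem_univ x) y (Finset.mem_univ y)
    rcases mul_eq_zero.1 h with h1 | h2
    · rcases mul_eq_zero.1 h1 with h3 | h4
      · exact absurd h3 (hπ x).ne'
      · rw [h4, zero_mul]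
    · have : f x - f y = 0 := by nlinarith [h2]
      have : f y = f x := by linarith
      rw [this, sub_self, mul_zero]
  have : P.mulVec f x = ∑ y, P x y * f y := rfl
  rw [this]
  have : ∑ y, P x y * f y = ∑ y, P x y * f x := by
    refine Finset.sum_congr rfl fun y _ => ?_
    have := hzero y
    nlinarith [this]
  rw [this, ← Finset.sum_mul, hP.2 x, one_mul]

lemma fixed_const (hP : IsStochastic P) (hirr : MatIrreducible P)
    {f : Fin n → ℝ} (hf : P.mulVec f = f) (x y : Fin n) : f x = f y := by
  -- let x₀ be a maximizer of f
  obtain ⟨x₀, -, hmax⟩ := Finset.exists_max_image Finset.univ f ⟨x, Finset.mem_univ x⟩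
  -- one step preservation of the maximum
  have step : ∀ w z, f w = f x₀ → 0 < P w z → f z = f x₀ := by
    intro w z hw hpz
    have hfw : ∑ u, P w u * f u = f w := congrFun hf w
    have hzero : ∑ u, P w u * (f x₀ - f u) = 0 := by
      have : ∑ u, P w u * (f x₀ - f u) = (∑ u, P w u) * f x₀ - ∑ u, P w u * f u := by
        rw [Finset.sum_mul, ← Finset.sum_sub_distrib]
        exact Finset.sum_congr rfl fun u _ => by ring
      rw [this, hP.2 w, hfw, hw, one_mul, sub_self]
    have hterm := (Finset.sum_eq_zero_iff_of_nonneg fun u _ =>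
      mul_nonneg (hP.1 w u) (sub_nonneg.2 (hmax u (Finset.mem_univ u)))).1 hzero z
      (Finset.mem_univ z)
    rcases mul_eq_zero.1 hterm with h | h
    · exact absurd h hpz.ne'
    · linarith [sub_eq_zero.1 h]
  -- k-step preservation
  have main : ∀ k z, 0 < (P ^ k) x₀ z → f z = f x₀ := by
    intro k
    induction k with
    | zero =>
      intro z hz
      by_cases h : x₀ = z
      · rw [h]
      · simp [pow_zero, Matrix.one_apply, h] at hz
    | succ k ih =>
      intro z hz
      rw [pow_succ, Matrix.mul_apply] at hz
      obtain ⟨w, -, hw⟩ := Finset.exists_ne_zero_of_sum_ne_zero hz.ne'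
      have h1 : 0 < (P ^ k) x₀ w := by
        rcases lt_or_eq_of_le (pow_entry_nonneg hP k x₀ w) with h | h
        · exact h
        · exact absurd (by rw [← h, zero_mul]) hw
      have h2 : 0 < P w z := by
        rcases lt_or_eq_of_le (hP.1 w z) with h | h
        · exact h
        · exact absurd (by rw [← h, mul_zero]) hw
      exact step w z (ih w h1) h2
  obtain ⟨k₁, hk₁⟩ := hirr x₀ x
  obtain ⟨k₂, hk₂⟩ := hirr x₀ y
  rw [main k₁ x hk₁, main k₂ y hk₂]

lemma eig_one (hπ : ∀ x, 0 < π x) (hπs : ∑ x, π x = 1) (hP : IsStochastic P)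
    (hirr : MatIrreducible P) {u : Fin n → ℝ} (hu : symA π P *ᵥ u = u) :
    u = (sqpi π ⬝ᵥ u) • sqpi π := by
  set f : Fin n → ℝ := fun i => u i / sqpi π i with hfdef
  have hgf : gv π f = u := by
    funext i
    simp only [gv, hfdef]
    rw [mul_div_cancel₀ _ (sqpi_ne hπ i)]
  have hPf : P.mulVec f = f := by
    have h1 : gv π (P.mulVec f) = gv π f := by
      rw [gv_mulVec hπ, hgf, hu]
    funext i
    have := congrFun h1 i
    simp only [gv] at this
    exact mul_left_cancel₀ (sqpi_ne hπ i) this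
  by_cases hn : n = 0
  · subst hn; funext i; exact absurd i.2 (by omega)
  have hne : Nonempty (Fin n) := ⟨⟨0, Nat.pos_of_ne_zero hn⟩⟩
  obtain ⟨i₀⟩ := hne
  have hconst : ∀ i, f i = f i₀ := fun i => fixed_const hP hirr hPf i i₀
  have hu' : ∀ i, u i = f i₀ * sqpi π i := by
    intro i
    rw [← hgf]
    simp only [gv]
    rw [hconst i]; ring
  have hdot : sqpi π ⬝ᵥ u = f i₀ := by
    simp only [dotProduct]
    calc ∑ i, sqpi π i * u i = ∑ i, π i * f i₀ := by
          refine Finset.sum_congr rfl fun i _ => ?_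
          rw [hu' i, ← sqpi_mul_self hπ i]; ring
      _ = f i₀ := by rw [← Finset.sum_mul, hπs, one_mul]
  funext i
  simp only [Pi.smul_apply, smul_eq_mul, hdot]
  rw [hu' i]

end spectralfacts

section general
variable {n : ℕ}

lemma herm_trans {M : Matrix (Fin n) (Fin n) ℝ} (hsym : M.IsHermitian) : Mᵀ = M := by
  ext i j
  have h := congrFun (congrFun hsym i) j
  simpa [conjTranspose_apply] using h

lemma dot_symm {M : Matrix (Fin n) (Fin n) ℝ} (hsym : M.IsHermitian) (a b : Fin n → ℝ) :
    a ⬝ᵥ M *ᵥ b = b ⬝ᵥ M *ᵥ a := by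
  rw [dotProduct_mulVec, ← Matrix.mulVec_transpose, herm_trans hsym, dotProduct_comm]

lemma cs_psd {M : Matrix (Fin n) (Fin n) ℝ} (hsym : M.IsHermitian)
    (hpsd : ∀ x, 0 ≤ x ⬝ᵥ M *ᵥ x) (a b : Fin n → ℝ) :
    (a ⬝ᵥ M *ᵥ b) ^ 2 ≤ (a ⬝ᵥ M *ᵥ a) * (b ⬝ᵥ M *ᵥ b) := by
  have hquad : ∀ t : ℝ, 0 ≤ (b ⬝ᵥ M *ᵥ b) * (t * t) + (2 * (a ⬝ᵥ M *ᵥ b)) * t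
      + (a ⬝ᵥ M *ᵥ a) := by
    intro t
    have h := hpsd (a + t • b)
    have hexp : (a + t • b) ⬝ᵥ M *ᵥ (a + t • b)
        = (b ⬝ᵥ M *ᵥ b) * (t * t) + (2 * (a ⬝ᵥ M *ᵥ b)) * t + (a ⬝ᵥ M *ᵥ a) := by
      rw [Matrix.mulVec_add, Matrix.mulVec_smul, add_dotProduct, smul_dotProduct,
        dotProduct_add, dotProduct_add, dotProduct_smul, dotProduct_smul,
        dot_symm hsym b a]
      simp only [smul_eq_mul]
      ring
    rw [hexp] at h
    exact h
  have hd := discrim_le_zero hquad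
  rw [discrim] at hd
  nlinarith [hd]

lemma psd_of_posdef {M : Matrix (Fin n) (Fin n) ℝ} (hM : M.PosDef) (x : Fin n → ℝ) :
    0 ≤ x ⬝ᵥ M *ᵥ x := by
  by_cases hx : x = 0
  · subst hx; simp
  · have := hM.dotProduct_mulVec_pos hx
    simpa using this.le

lemma posdef_mulVec_inv {M : Matrix (Fin n) (Fin n) ℝ} (hM : M.PosDef) (v : Fin n → ℝ) :
    M *ᵥ (M⁻¹ *ᵥ v) = v := by
  rw [Matrix.mulVec_mulVec, Matrix.mul_nonsing_inv _ ((Matrix.isUnit_iff_isUnit_det M).1 hM.isUnit),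
    Matrix.one_mulVec]

lemma inv_anti {X Y : Matrix (Fin n) (Fin n) ℝ} (hX : X.PosDef) (hY : Y.PosDef)
    (hle : ∀ x, x ⬝ᵥ Y *ᵥ x ≤ x ⬝ᵥ X *ᵥ x) (v : Fin n → ℝ) :
    v ⬝ᵥ X⁻¹ *ᵥ v ≤ v ⬝ᵥ Y⁻¹ *ᵥ v := by
  set a := X⁻¹ *ᵥ v with ha
  set b := Y⁻¹ *ᵥ v with hb
  have hXa : X *ᵥ a = v := posdef_mulVec_inv hX v
  have hYb : Y *ᵥ b = v := posdef_mulVec_inv hY v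
  have ht : v ⬝ᵥ X⁻¹ *ᵥ v = a ⬝ᵥ v := by rw [← ha, dotProduct_comm]
  have hs : v ⬝ᵥ Y⁻¹ *ᵥ v = b ⬝ᵥ v := by rw [← hb, dotProduct_comm]
  have htnn : 0 ≤ a ⬝ᵥ v := by
    rw [← ht]; exact psd_of_posdef hX.inv v
  have hsnn : 0 ≤ b ⬝ᵥ v := by
    rw [← hs]; exact psd_of_posdef hY.inv v
  have hcs : (a ⬝ᵥ Y *ᵥ b) ^ 2 ≤ (a ⬝ᵥ Y *ᵥ a) * (b ⬝ᵥ Y *ᵥ b) :=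
    cs_psd hY.1 (psd_of_posdef hY) a b
  rw [hYb] at hcs
  have h1 : a ⬝ᵥ Y *ᵥ a ≤ a ⬝ᵥ v := by
    have := hle a
    rwa [hXa] at this
  have hkey : (a ⬝ᵥ v) ^ 2 ≤ (a ⬝ᵥ v) * (b ⬝ᵥ v) := by
    calc (a ⬝ᵥ v) ^ 2 ≤ (a ⬝ᵥ Y *ᵥ a) * (b ⬝ᵥ v) := hcs
      _ ≤ (a ⬝ᵥ v) * (b ⬝ᵥ v) := mul_le_mul_of_nonneg_right h1 hsnn
  rw [dotProduct_comm v a, dotProduct_comm v b]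
  rcases eq_or_lt_of_le htnn with h | h
  · rw [← h]; exact hsnn
  · nlinarith [hkey]

lemma Sgeom (lam : ℝ) (hne : lam ≠ 1) (N : ℕ) :
    ∑ i ∈ Finset.range N, ∑ j ∈ Finset.range N, lam ^ (max i j - min i j)
      = ((N : ℝ) * (1 - lam) * (1 + lam) - 2 * lam * (1 - lam ^ N)) / (1 - lam) ^ 2 := by
  have hden : (1 : ℝ) - lam ≠ 0 := sub_ne_zero.2 (Ne.symm hne)
  induction N with
  | zero => simp
  | succ N ih =>
    have hG : ∑ i ∈ Finset.range N, lam ^ (N - i) = lam * (lam ^ N - 1) / (lam - 1) := by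
      have hrefl := Finset.sum_range_reflect (fun i => lam ^ (N - i)) N
      have hcongr : ∑ j ∈ Finset.range N, lam ^ (N - (N - 1 - j))
          = ∑ j ∈ Finset.range N, lam ^ (j + 1) := by
        refine Finset.sum_congr rfl fun j hj => ?_
        have hj' := Finset.mem_range.1 hj
        congr 1
        omega
      rw [← hrefl, hcongr]
      have : ∑ j ∈ Finset.range N, lam ^ (j + 1) = lam * ∑ j ∈ Finset.range N, lam ^ j := by
        rw [Finset.mul_sum]
        exact Finset.sum_congr rfl fun j _ => by ring
      rw [this, geom_sum_eq hne N, mul_div_assoc]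
    have hsplit : ∑ i ∈ Finset.range (N + 1), ∑ j ∈ Finset.range (N + 1),
        lam ^ (max i j - min i j)
        = (∑ i ∈ Finset.range N, ∑ j ∈ Finset.range N, lam ^ (max i j - min i j))
          + (∑ i ∈ Finset.range N, lam ^ (N - i))
          + (∑ j ∈ Finset.range N, lam ^ (N - j)) + 1 := by
      rw [Finset.sum_range_succ]
      have hNrow : ∑ j ∈ Finset.range (N + 1), lam ^ (max N j - min N j)
          = (∑ j ∈ Finset.range N, lam ^ (N - j)) + 1 := by
        rw [Finset.sum_range_succ]
        congr 1
        · refine Finset.sum_congr rfl fun j hj => ?_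
          have hj' := Finset.mem_range.1 hj
          rw [max_eq_left hj'.le, min_eq_right hj'.le]
        · simp
      have hicol : ∀ i ∈ Finset.range N, ∑ j ∈ Finset.range (N + 1),
          lam ^ (max i j - min i j)
          = (∑ j ∈ Finset.range N, lam ^ (max i j - min i j)) + lam ^ (N - i) := by
        intro i hi
        have hi' := Finset.mem_range.1 hi
        rw [Finset.sum_range_succ, max_eq_right hi'.le, min_eq_left hi'.le]
      rw [Finset.sum_congr rfl hicol, Finset.sum_add_distrib, hNrow]
      ring
    have hden' : lam - 1 ≠ 0 := sub_ne_zero.2 hne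
    rw [hsplit, ih, hG]
    push_cast
    field_simp
    ring

lemma hN_tendsto {lam : ℝ} (h1 : -1 ≤ lam) (h2 : lam < 1) :
    Tendsto (fun N : ℕ => (N : ℝ)⁻¹ * ∑ i ∈ Finset.range N, ∑ j ∈ Finset.range N,
      lam ^ (max i j - min i j)) atTop (nhds ((1 + lam) / (1 - lam))) := by
  have hne : lam ≠ 1 := h2.ne
  have hden : (1 : ℝ) - lam ≠ 0 := sub_ne_zero.2 (Ne.symm hne)
  have hdpos : 0 < 1 - lam := by linarith
  have habs : |lam| ≤ 1 := abs_le.2 ⟨h1, h2.le⟩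
  set C : ℝ := 4 / (1 - lam) ^ 2 with hC
  have hzero : Tendsto (fun N : ℕ => (N : ℝ)⁻¹ * (2 * lam * (1 - lam ^ N) / (1 - lam) ^ 2))
      atTop (nhds 0) := by
    apply squeeze_zero_norm (a := fun N : ℕ => C / (N : ℝ))
    · intro N
      have hpowabs : |lam ^ N| ≤ 1 := by
        rw [abs_pow]; exact pow_le_one₀ (abs_nonneg lam) habs
      have hnum : |2 * lam * (1 - lam ^ N)| ≤ 4 := by
        rw [abs_mul, abs_mul]
        have h1a : |(2 : ℝ)| = 2 := by norm_num
        have h2a : |1 - lam ^ N| ≤ 2 := by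
          calc |1 - lam ^ N| ≤ |(1 : ℝ)| + |lam ^ N| := abs_sub _ _
            _ ≤ 1 + 1 := by rw [abs_one]; linarith
            _ = 2 := by norm_num
        rw [h1a]
        nlinarith [abs_nonneg lam, abs_nonneg (1 - lam ^ N)]
      have heq : ‖(N : ℝ)⁻¹ * (2 * lam * (1 - lam ^ N) / (1 - lam) ^ 2)‖
          = (N : ℝ)⁻¹ * (|2 * lam * (1 - lam ^ N)| / (1 - lam) ^ 2) := by
        rw [norm_mul, Real.norm_eq_abs, Real.norm_eq_abs, abs_inv, Nat.abs_cast,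
          abs_div, abs_of_nonneg (sq_nonneg (1 - lam))]
      rw [heq, hC, div_eq_mul_inv (4 / (1 - lam) ^ 2), mul_comm (4 / (1 - lam) ^ 2)]
      refine mul_le_mul_of_nonneg_left ?_ (by positivity)
      exact (div_le_div_iff_of_pos_right (by positivity)).2 hnum
    · exact tendsto_const_div_atTop_nhds_zero_nat C
  have hg : Tendsto (fun N : ℕ => (1 + lam) / (1 - lam)
      - (N : ℝ)⁻¹ * (2 * lam * (1 - lam ^ N) / (1 - lam) ^ 2)) atTop
      (nhds ((1 + lam) / (1 - lam))) := by
    have := (tendsto_const_nhds :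
      Tendsto (fun _ : ℕ => (1 + lam) / (1 - lam)) atTop (nhds ((1 + lam) / (1 - lam)))).sub hzero
    simpa using this
  refine hg.congr' ?_
  filter_upwards [eventually_ge_atTop 1] with N hN
  have hNne : (N : ℝ) ≠ 0 := Nat.cast_ne_zero.2 (by omega)
  rw [Sgeom lam hne N]
  field_simp

end general

section spectral2
variable {π : Fin n → ℝ} {P : Matrix (Fin n) (Fin n) ℝ}

noncomputable def uv (hA : (symA π P).IsHermitian) (s : Fin n) : Fin n → ℝ :=
  (WithLp.equiv 2 (Fin n → ℝ)) (hA.eigenvectorBasis s)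

lemma uv_mulVec (hA : (symA π P).IsHermitian) (s : Fin n) :
    symA π P *ᵥ uv hA s = hA.eigenvalues s • uv hA s :=
  hA.mulVec_eigenvectorBasis s

lemma uv_pow_mulVec (hA : (symA π P).IsHermitian) (s : Fin n) (k : ℕ) :
    (symA π P) ^ k *ᵥ uv hA s = (hA.eigenvalues s ^ k) • uv hA s := by
  induction k with
  | zero => simp
  | succ k ih =>
    rw [pow_succ, ← Matrix.mulVec_mulVec, uv_mulVec, Matrix.mulVec_smul, ih,
      pow_succ, smul_smul, mul_comm]

lemma uv_dot (hA : (symA π P).IsHermitian) (s t : Fin n) :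
    uv hA s ⬝ᵥ uv hA t = if s = t then 1 else 0 := by
  have h := orthonormal_iff_ite.1 hA.eigenvectorBasis.orthonormal s t
  rw [EuclideanSpace.inner_eq_star_dotProduct] at h
  rw [dotProduct_comm]
  simpa [uv] using h

lemma uv_expand (hA : (symA π P).IsHermitian) (g : Fin n → ℝ) :
    g = ∑ s, (uv hA s ⬝ᵥ g) • uv hA s := by
  set e := WithLp.linearEquiv 2 ℝ (Fin n → ℝ) with he
  set G : EuclideanSpace ℝ (Fin n) := e.symm g with hG
  have hrepr : ∀ s, hA.eigenvectorBasis.repr G s = uv hA s ⬝ᵥ g := by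
    intro s
    rw [OrthonormalBasis.repr_apply_apply, EuclideanSpace.inner_eq_star_dotProduct]
    have : G.ofLp = g := rfl
    rw [this, dotProduct_comm]
    simp [uv]
  have hsum := hA.eigenvectorBasis.sum_repr G
  have := congrArg e hsum
  rw [map_sum] at this
  have hterm : ∀ s, e (hA.eigenvectorBasis.repr G s • hA.eigenvectorBasis s)
      = (uv hA s ⬝ᵥ g) • uv hA s := by
    intro s
    rw [_root_.map_smul, hrepr s]
    rfl
  rw [Finset.sum_congr rfl fun s _ => hterm s] at this
  have hEg : e G = g := rfl
  rw [hEg] at this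
  exact this.symm

lemma sum_dot (f : Fin n → Fin n → ℝ) (w : Fin n → ℝ) :
    (∑ s, f s) ⬝ᵥ w = ∑ s, f s ⬝ᵥ w := by
  simp only [dotProduct, Finset.sum_apply, Finset.sum_mul]
  exact Finset.sum_comm

lemma dot_sum (f : Fin n → Fin n → ℝ) (w : Fin n → ℝ) :
    w ⬝ᵥ (∑ s, f s) = ∑ s, w ⬝ᵥ f s := by
  simp only [dotProduct, Finset.sum_apply, Finset.mul_sum]
  exact Finset.sum_comm

lemma exp_dot (hA : (symA π P).IsHermitian) (a b : Fin n → ℝ) :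
    (∑ s, a s • uv hA s) ⬝ᵥ (∑ t, b t • uv hA t) = ∑ s, a s * b s := by
  rw [sum_dot]
  refine Finset.sum_congr rfl fun s _ => ?_
  rw [smul_dotProduct, dot_sum]
  have : ∀ t, uv hA s ⬝ᵥ b t • uv hA t = b t * (if s = t then 1 else 0) := by
    intro t
    rw [dotProduct_smul, uv_dot hA s t]
    simp [smul_eq_mul]
  rw [Finset.sum_congr rfl fun t _ => this t]
  simp [Finset.sum_ite_eq, smul_eq_mul]

end spectral2

section main
variable {π : Fin n → ℝ} {P : Matrix (Fin n) (Fin n) ℝ}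

lemma pInner_mulVec (f : Fin n → ℝ) :
    pInner π f (P.mulVec f) = ∑ x, ∑ y, π x * P x y * (f x * f y) := by
  simp only [pInner, Matrix.mulVec, dotProduct]
  refine Finset.sum_congr rfl fun x _ => ?_
  rw [Finset.mul_sum, Finset.sum_mul]
  exact Finset.sum_congr rfl fun y _ => by ring

lemma pInner_self (f : Fin n → ℝ) : pInner π f f = ∑ x, π x * (f x * f x) := by
  simp only [pInner]
  exact Finset.sum_congr rfl fun x _ => by ring

lemma gv_div (hπ : ∀ x, 0 < π x) (x : Fin n → ℝ) :
    gv π (fun i => x i / sqpi π i) = x := by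
  funext i
  simp only [gv]
  rw [mul_div_cancel₀ _ (sqpi_ne hπ i)]

lemma quadA_pinner (hπ : ∀ x, 0 < π x) (f : Fin n → ℝ) :
    gv π f ⬝ᵥ symA π P *ᵥ gv π f = pInner π f (P.mulVec f) := by
  rw [← gv_mulVec hπ, gv_dot hπ]

lemma quadA_le (hπ : ∀ x, 0 < π x) (hP : IsStochastic P) (hrev : IsReversible π P)
    (x : Fin n → ℝ) : x ⬝ᵥ symA π P *ᵥ x ≤ x ⬝ᵥ x := by
  have hx := gv_div hπ x
  set f : Fin n → ℝ := fun i => x i / sqpi π i with hf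
  rw [← hx, quadA_pinner hπ, gv_dot hπ, pInner_mulVec, pInner_self]
  exact quad_upper hπ hP hrev f

lemma quadA_ge (hπ : ∀ x, 0 < π x) (hP : IsStochastic P) (hrev : IsReversible π P)
    (x : Fin n → ℝ) : -(x ⬝ᵥ x) ≤ x ⬝ᵥ symA π P *ᵥ x := by
  have hx := gv_div hπ x
  set f : Fin n → ℝ := fun i => x i / sqpi π i with hf
  rw [← hx, quadA_pinner hπ, gv_dot hπ, pInner_mulVec, pInner_self]
  exact quad_lower hπ hP hrev f

lemma quadA_eq (hπ : ∀ x, 0 < π x) (hP : IsStochastic P) (hrev : IsReversible π P)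
    {x : Fin n → ℝ} (heq : x ⬝ᵥ symA π P *ᵥ x = x ⬝ᵥ x) : symA π P *ᵥ x = x := by
  have hx := gv_div hπ x
  set f : Fin n → ℝ := fun i => x i / sqpi π i with hf
  rw [← hx, quadA_pinner hπ, gv_dot hπ, pInner_mulVec, pInner_self] at heq
  have hPf : P.mulVec f = f := quad_eq_fixed hπ hP hrev f heq
  rw [← hx, ← gv_mulVec hπ, hPf]

lemma ev_le_one (hπ : ∀ x, 0 < π x) (hP : IsStochastic P) (hrev : IsReversible π P)
    (hA : (symA π P).IsHermitian) (s : Fin n) : hA.eigenvalues s ≤ 1 := by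
  have h := quadA_le hπ hP hrev (uv hA s)
  rw [uv_mulVec, dotProduct_smul, uv_dot hA s s, if_pos rfl] at h
  simpa using h

lemma ev_ge (hπ : ∀ x, 0 < π x) (hP : IsStochastic P) (hrev : IsReversible π P)
    (hA : (symA π P).IsHermitian) (s : Fin n) : -1 ≤ hA.eigenvalues s := by
  have h := quadA_ge hπ hP hrev (uv hA s)
  rw [uv_mulVec, dotProduct_smul, uv_dot hA s s, if_pos rfl] at h
  simpa using h

lemma sqpi_dot_uv (hπ : ∀ x, 0 < π x) (hP : IsStochastic P) (hrev : IsReversible π P)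
    (hA : (symA π P).IsHermitian) {s : Fin n} (hne : hA.eigenvalues s ≠ 1) :
    sqpi π ⬝ᵥ uv hA s = 0 := by
  have h1 : sqpi π ⬝ᵥ (symA π P *ᵥ uv hA s) = hA.eigenvalues s * (sqpi π ⬝ᵥ uv hA s) := by
    rw [uv_mulVec, dotProduct_smul]; simp
  have h2 : sqpi π ⬝ᵥ (symA π P *ᵥ uv hA s) = sqpi π ⬝ᵥ uv hA s := by
    rw [dot_symm hA, symA_mulVec_sq hπ hP, dotProduct_comm]
  have h3 : (hA.eigenvalues s - 1) * (sqpi π ⬝ᵥ uv hA s) = 0 := by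
    rw [sub_mul, one_mul, ← h1, h2, sub_self]
  rcases mul_eq_zero.1 h3 with h | h
  · exact absurd (by linarith [h] : hA.eigenvalues s = 1) hne
  · exact h

lemma vecMulVec_mulVec' (a b x : Fin n → ℝ) : vecMulVec a b *ᵥ x = (b ⬝ᵥ x) • a := by
  funext i
  simp only [Matrix.mulVec, dotProduct, vecMulVec_apply, Pi.smul_apply, smul_eq_mul]
  rw [Finset.sum_mul]
  exact Finset.sum_congr rfl fun y _ => by ring

lemma Mm_mulVec (x : Fin n → ℝ) :
    Mm π P *ᵥ x = x - symA π P *ᵥ x + (sqpi π ⬝ᵥ x) • sqpi π := by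
  rw [Mm, Matrix.add_mulVec, Matrix.sub_mulVec, Matrix.one_mulVec, vecMulVec_mulVec']

lemma Mm_quad (hπ : ∀ x, 0 < π x) (hrev : IsReversible π P) (x : Fin n → ℝ) :
    x ⬝ᵥ Mm π P *ᵥ x = x ⬝ᵥ x - x ⬝ᵥ symA π P *ᵥ x + (sqpi π ⬝ᵥ x) ^ 2 := by
  rw [Mm_mulVec, dotProduct_add, dotProduct_sub, dotProduct_smul,
    dotProduct_comm x (sqpi π)]
  simp only [smul_eq_mul]
  ring

lemma sqpi_dot_sq (hπ : ∀ x, 0 < π x) (hπs : ∑ x, π x = 1) : sqpi π ⬝ᵥ sqpi π = 1 := by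
  simp only [dotProduct]
  rw [Finset.sum_congr rfl fun x _ => sqpi_mul_self hπ x, hπs]

lemma Mm_herm (hπ : ∀ x, 0 < π x) (hrev : IsReversible π P) : (Mm π P).IsHermitian := by
  refine ((Matrix.isHermitian_one).sub (isHermitian_symA hπ hrev)).add ?_
  ext i j
  simp [conjTranspose_apply, vecMulVec_apply, mul_comm]

lemma star_id (x : Fin n → ℝ) : star x = x := by
  funext i
  simp

lemma Mm_posDef (hπ : ∀ x, 0 < π x) (hπs : ∑ x, π x = 1) (hP : IsStochastic P)
    (hirr : MatIrreducible P) (hrev : IsReversible π P) : (Mm π P).PosDef := by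
  refine Matrix.PosDef.of_dotProduct_mulVec_pos (Mm_herm hπ hrev) fun x hx => ?_
  rw [star_id, Mm_quad hπ hrev]
  have hle := quadA_le hπ hP hrev x
  rcases lt_or_eq_of_le hle with h | h
  · nlinarith [sq_nonneg (sqpi π ⬝ᵥ x)]
  · have hfix := quadA_eq hπ hP hrev h
    have hxeq := eig_one hπ hπs hP hirr hfix
    have h0 : sqpi π ⬝ᵥ x ≠ 0 := by
      intro h0
      apply hx
      rw [hxeq, h0, zero_smul]
    have : 0 < (sqpi π ⬝ᵥ x) ^ 2 := by positivity
    linarith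

lemma Mm_mulVec_sq (hπ : ∀ x, 0 < π x) (hπs : ∑ x, π x = 1) (hP : IsStochastic P) :
    Mm π P *ᵥ sqpi π = sqpi π := by
  rw [Mm_mulVec, symA_mulVec_sq hπ hP, sqpi_dot_sq hπ hπs, one_smul, sub_self, zero_add]

lemma Mm_inv_mulVec_sq (hπ : ∀ x, 0 < π x) (hπs : ∑ x, π x = 1) (hP : IsStochastic P)
    (hirr : MatIrreducible P) (hrev : IsReversible π P) :
    (Mm π P)⁻¹ *ᵥ sqpi π = sqpi π := by
  conv_lhs => rw [← Mm_mulVec_sq hπ hπs hP]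
  rw [Matrix.mulVec_mulVec, Matrix.nonsing_inv_mul _
    ((Matrix.isUnit_iff_isUnit_det _).1 (Mm_posDef hπ hπs hP hirr hrev).isUnit),
    Matrix.one_mulVec]

lemma quad_decomp_of_fix {M : Matrix (Fin n) (Fin n) ℝ} (hsym : M.IsHermitian)
    (hfix : M *ᵥ sqpi π = sqpi π) (hsq1 : sqpi π ⬝ᵥ sqpi π = 1) (x : Fin n → ℝ) :
    x ⬝ᵥ M *ᵥ x = (x - (sqpi π ⬝ᵥ x) • sqpi π) ⬝ᵥ M *ᵥ (x - (sqpi π ⬝ᵥ x) • sqpi π)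
      + (sqpi π ⬝ᵥ x) ^ 2 := by
  have hMsx : sqpi π ⬝ᵥ M *ᵥ x = sqpi π ⬝ᵥ x := by
    rw [dot_symm hsym, hfix, dotProduct_comm]
  rw [Matrix.mulVec_sub, Matrix.mulVec_smul, hfix, dotProduct_sub, sub_dotProduct,
    sub_dotProduct, dotProduct_smul, dotProduct_smul,
    smul_dotProduct, smul_dotProduct, hMsx,
    dotProduct_comm x (sqpi π), hsq1]
  simp only [smul_eq_mul]
  ring

end main

section big
variable {π : Fin n → ℝ} {P : Matrix (Fin n) (Fin n) ℝ}

lemma mulVec_sumv (M : Matrix (Fin n) (Fin n) ℝ) (v : Fin n → Fin n → ℝ) :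
    M *ᵥ (∑ s, v s) = ∑ s, M *ᵥ v s := by
  funext i
  simp only [Matrix.mulVec, dotProduct, Finset.sum_apply, Finset.mul_sum]
  exact Finset.sum_comm

lemma ctr_sum (hπs : ∑ x, π x = 1) (f : Fin n → ℝ) : ∑ x, π x * ctr π f x = 0 := by
  simp only [ctr, mul_sub]
  rw [Finset.sum_sub_distrib, ← Finset.sum_mul, hπs, one_mul, sub_self]

lemma sqpi_dot_gv (hπ : ∀ x, 0 < π x) (f : Fin n → ℝ) :
    sqpi π ⬝ᵥ gv π f = ∑ x, π x * f x := by
  simp only [dotProduct, gv]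
  refine Finset.sum_congr rfl fun x _ => ?_
  rw [← sqpi_mul_self hπ x]; ring

lemma autocov_eq (hπ : ∀ x, 0 < π x) (f : Fin n → ℝ) (k : ℕ) :
    autocov π P f k = gv π (ctr π f) ⬝ᵥ ((symA π P) ^ k *ᵥ gv π (ctr π f)) := by
  rw [← symA_pow hπ, quadA_pinner hπ, pInner_mulVec, autocov]
  refine Finset.sum_congr rfl fun x _ => Finset.sum_congr rfl fun y _ => ?_
  simp only [ctr]
  ring

theorem hasVar (hπ : ∀ x, 0 < π x) (hπs : ∑ x, π x = 1) (hP : IsStochastic P)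
    (hirr : MatIrreducible P) (hrev : IsReversible π P) (f : Fin n → ℝ) :
    HasAsymptVar π P f (Vv π P f) := by
  classical
  have hA : (symA π P).IsHermitian := isHermitian_symA hπ hrev
  set g : Fin n → ℝ := gv π (ctr π f) with hg
  set c : Fin n → ℝ := fun s => uv hA s ⬝ᵥ g with hc
  set ev : Fin n → ℝ := hA.eigenvalues with hev
  have hgexp : g = ∑ s, c s • uv hA s := uv_expand hA g
  have hpowsum : ∀ k, (symA π P) ^ k *ᵥ g = ∑ s, (c s * ev s ^ k) • uv hA s := by
    intro k
    conv_lhs => rw [hgexp]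
    rw [mulVec_sumv]
    refine Finset.sum_congr rfl fun s _ => ?_
    rw [Matrix.mulVec_smul, uv_pow_mulVec, smul_smul]
  have hgamma : ∀ k, g ⬝ᵥ ((symA π P) ^ k *ᵥ g) = ∑ s, ev s ^ k * c s ^ 2 := by
    intro k
    rw [hpowsum k]
    conv_lhs => rw [hgexp]
    rw [exp_dot]
    exact Finset.sum_congr rfl fun s _ => by ring
  have hsqg : sqpi π ⬝ᵥ g = 0 := by rw [hg, sqpi_dot_gv hπ, ctr_sum hπs]
  have hc1 : ∀ s, ev s = 1 → c s = 0 := by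
    intro s h1
    have hfix : symA π P *ᵥ uv hA s = uv hA s := by
      rw [uv_mulVec, ← hev, h1, one_smul]
    have huv := eig_one hπ hπs hP hirr hfix
    rw [hc]
    simp only
    rw [huv, smul_dotProduct, hsqg, smul_eq_mul, mul_zero]
  have hvar : ∀ N, varN π P f N = ∑ s, (c s) ^ 2 *
      ((N : ℝ)⁻¹ * ∑ i ∈ Finset.range N, ∑ j ∈ Finset.range N,
        ev s ^ (max i j - min i j)) := by
    intro N
    rw [varN]
    have h1 : ∀ i j : ℕ, autocov π P f (max i j - min i j)
        = ∑ s, ev s ^ (max i j - min i j) * c s ^ 2 := fun i j => by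
      rw [autocov_eq hπ, hgamma]
    rw [Finset.sum_congr rfl fun i _ => Finset.sum_congr rfl fun j _ => h1 i j]
    rw [Finset.sum_congr rfl fun i (_ : i ∈ Finset.range N) => Finset.sum_comm, Finset.sum_comm]
    rw [Finset.mul_sum]
    refine Finset.sum_congr rfl fun s _ => ?_
    rw [Finset.mul_sum, Finset.mul_sum, Finset.mul_sum]
    refine Finset.sum_congr rfl fun i _ => ?_
    rw [Finset.mul_sum, Finset.mul_sum, Finset.mul_sum]
    exact Finset.sum_congr rfl fun j _ => by ring
  set L : Fin n → ℝ := fun s => (c s) ^ 2 *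
    (if ev s = 1 then 0 else (1 + ev s) / (1 - ev s)) with hL
  have hTend : Tendsto (varN π P f) atTop (nhds (∑ s, L s)) := by
    refine Tendsto.congr (fun N => (hvar N).symm) ?_
    refine tendsto_finset_sum _ fun s _ => ?_
    by_cases h1 : ev s = 1
    · have hz : (fun N : ℕ => (c s) ^ 2 * ((N : ℝ)⁻¹ *
          ∑ i ∈ Finset.range N, ∑ j ∈ Finset.range N, ev s ^ (max i j - min i j)))
          = fun _ => (0 : ℝ) := by
        funext N
        rw [hc1 s h1]
        ring
      have hL0 : L s = 0 := by
        simp only [hL, if_pos h1]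
        ring
      rw [hz, hL0]
      exact tendsto_const_nhds
    · have hlt : ev s < 1 := lt_of_le_of_ne (ev_le_one hπ hP hrev hA s) h1
      have hgee : -1 ≤ ev s := ev_ge hπ hP hrev hA s
      have := (hN_tendsto hgee hlt).const_mul ((c s) ^ 2)
      rw [hL]
      simp only [if_neg h1]
      exact this
  have hVv : Vv π P f = ∑ s, L s := by
    set coefw : Fin n → ℝ := fun s => if ev s = 1 then 0 else c s / (1 - ev s) with hcoefw
    set w : Fin n → ℝ := ∑ s, coefw s • uv hA s with hw
    have hMw : Mm π P *ᵥ w = g := by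
      rw [hw, mulVec_sumv]
      conv_rhs => rw [hgexp]
      refine Finset.sum_congr rfl fun s _ => ?_
      rw [Matrix.mulVec_smul, Mm_mulVec, uv_mulVec, ← hev]
      by_cases h1 : ev s = 1
      · rw [hcoefw]
        simp only [if_pos h1]
        rw [hc1 s h1, zero_smul, zero_smul]
      · have hsq0 : sqpi π ⬝ᵥ uv hA s = 0 := sqpi_dot_uv hπ hP hrev hA (by rw [← hev]; exact h1)
        rw [hsq0, zero_smul, add_zero, hcoefw]
        simp only [if_neg h1]
        rw [show uv hA s - ev s • uv hA s = (1 - ev s) • uv hA s by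
            rw [sub_smul, one_smul],
          smul_smul, div_mul_cancel₀ _ (sub_ne_zero.2 (Ne.symm h1))]
    have hdet : IsUnit (Mm π P).det :=
      (Matrix.isUnit_iff_isUnit_det _).1 (Mm_posDef hπ hπs hP hirr hrev).isUnit
    have hMinv : (Mm π P)⁻¹ *ᵥ g = w := by
      rw [← hMw, Matrix.mulVec_mulVec, Matrix.nonsing_inv_mul _ hdet, Matrix.one_mulVec]
    have hdot1 : g ⬝ᵥ w = ∑ s, c s * coefw s := by
      conv_lhs => rw [hgexp, hw]
      exact exp_dot hA _ _
    have hdot2 : g ⬝ᵥ g = ∑ s, c s * c s := by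
      conv_lhs => rw [hgexp]
      exact exp_dot hA _ _
    have : Vv π P f = 2 * (g ⬝ᵥ w) - g ⬝ᵥ g := by rw [Vv, ← hg, hMinv]
    rw [this, hdot1, hdot2, Finset.mul_sum, ← Finset.sum_sub_distrib]
    refine Finset.sum_congr rfl fun s _ => ?_
    rw [hL, hcoefw]
    by_cases h1 : ev s = 1
    · simp only [if_pos h1]
      rw [hc1 s h1]
      ring
    · simp only [if_neg h1]
      have hne : (1 : ℝ) - ev s ≠ 0 := sub_ne_zero.2 (Ne.symm h1)
      field_simp
      ring
  rw [HasAsymptVar, hVv]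
  exact hTend

end big

end Stmt5Aux

open Stmt5Aux
theorem stmt5 {n : ℕ} (π : Fin n → ℝ) (P Q : Matrix (Fin n) (Fin n) ℝ)
    (hπpos : ∀ x, 0 < π x) (hπsum : ∑ x, π x = 1)
    (hP : IsStochastic P) (hQ : IsStochastic Q)
    (hirrP : MatIrreducible P) (hirrQ : MatIrreducible Q)
    (hrevP : IsReversible π P) (hrevQ : IsReversible π Q) :
    EffDom π P Q ↔
      ∀ f : Fin n → ℝ, (∑ x, π x * f x = 0) →
        pInner π f (P.mulVec f) ≤ pInner π f (Q.mulVec f) := by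
  have hsq1 : sqpi π ⬝ᵥ sqpi π = 1 := sqpi_dot_sq hπpos hπsum
  have hMP := Mm_posDef hπpos hπsum hP hirrP hrevP
  have hMQ := Mm_posDef hπpos hπsum hQ hirrQ hrevQ
  have hdetP : IsUnit (Mm π P).det := (Matrix.isUnit_iff_isUnit_det _).1 hMP.isUnit
  have hdetQ : IsUnit (Mm π Q).det := (Matrix.isUnit_iff_isUnit_det _).1 hMQ.isUnit
  constructor
  · intro hED f hf
    have hVineq : ∀ h : Fin n → ℝ, Vv π P h ≤ Vv π Q h := fun h =>
      hED h _ _ (hasVar hπpos hπsum hP hirrP hrevP h) (hasVar hπpos hπsum hQ hirrQ hrevQ h)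
    have hy : ∀ y : Fin n → ℝ, sqpi π ⬝ᵥ y = 0 →
        y ⬝ᵥ (Mm π P)⁻¹ *ᵥ y ≤ y ⬝ᵥ (Mm π Q)⁻¹ *ᵥ y := by
      intro y hy0
      set h : Fin n → ℝ := fun i => y i / sqpi π i with hh
      have hgv : gv π h = y := gv_div hπpos y
      have hcent : ∑ z, π z * h z = 0 := by rw [← sqpi_dot_gv hπpos, hgv]; exact hy0
      have hctr : ctr π h = h := by
        funext i
        simp [ctr, hcent]
      have hV := hVineq h
      simp only [Vv, hctr, hgv] at hV
      linarith
    have hx : ∀ x : Fin n → ℝ, x ⬝ᵥ (Mm π P)⁻¹ *ᵥ x ≤ x ⬝ᵥ (Mm π Q)⁻¹ *ᵥ x := by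
      intro x
      have hdP := quad_decomp_of_fix ((Mm_herm hπpos hrevP).inv)
        (Mm_inv_mulVec_sq hπpos hπsum hP hirrP hrevP) hsq1 x
      have hdQ := quad_decomp_of_fix ((Mm_herm hπpos hrevQ).inv)
        (Mm_inv_mulVec_sq hπpos hπsum hQ hirrQ hrevQ) hsq1 x
      have hc : sqpi π ⬝ᵥ (x - (sqpi π ⬝ᵥ x) • sqpi π) = 0 := by
        rw [dotProduct_sub, dotProduct_smul, hsq1, smul_eq_mul, mul_one, sub_self]
      have := hy _ hc
      linarith
    have hmono := inv_anti hMQ.inv hMP.inv hx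
    have hiP : ((Mm π P)⁻¹)⁻¹ = Mm π P := Matrix.nonsing_inv_nonsing_inv _ hdetP
    have hiQ : ((Mm π Q)⁻¹)⁻¹ = Mm π Q := Matrix.nonsing_inv_nonsing_inv _ hdetQ
    set g : Fin n → ℝ := gv π f with hg
    have hg0 : sqpi π ⬝ᵥ g = 0 := by rw [hg, sqpi_dot_gv hπpos]; exact hf
    have h2 := hmono g
    rw [hiP, hiQ, Mm_quad hπpos hrevQ, Mm_quad hπpos hrevP, hg0] at h2
    have heP : pInner π f (P.mulVec f) = g ⬝ᵥ symA π P *ᵥ g := (quadA_pinner hπpos f).symm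
    have heQ : pInner π f (Q.mulVec f) = g ⬝ᵥ symA π Q *ᵥ g := (quadA_pinner hπpos f).symm
    rw [heP, heQ]
    nlinarith [h2]
  · intro hD f vP vQ hvP hvQ
    have hvPeq : vP = Vv π P f := tendsto_nhds_unique hvP (hasVar hπpos hπsum hP hirrP hrevP f)
    have hvQeq : vQ = Vv π Q f := tendsto_nhds_unique hvQ (hasVar hπpos hπsum hQ hirrQ hrevQ f)
    rw [hvPeq, hvQeq]
    have hy : ∀ y : Fin n → ℝ, sqpi π ⬝ᵥ y = 0 →
        y ⬝ᵥ symA π P *ᵥ y ≤ y ⬝ᵥ symA π Q *ᵥ y := by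
      intro y hy0
      set h : Fin n → ℝ := fun i => y i / sqpi π i with hh
      have hgv : gv π h = y := gv_div hπpos y
      have hcent : ∑ z, π z * h z = 0 := by rw [← sqpi_dot_gv hπpos, hgv]; exact hy0
      have hDh := hD h hcent
      rw [← quadA_pinner hπpos (P := P), ← quadA_pinner hπpos (P := Q), hgv] at hDh
      exact hDh
    have hx : ∀ x : Fin n → ℝ, x ⬝ᵥ Mm π Q *ᵥ x ≤ x ⬝ᵥ Mm π P *ᵥ x := by
      intro x
      have hdP := quad_decomp_of_fix (isHermitian_symA hπpos hrevP)
        (symA_mulVec_sq hπpos hP) hsq1 x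
      have hdQ := quad_decomp_of_fix (isHermitian_symA hπpos hrevQ)
        (symA_mulVec_sq hπpos hQ) hsq1 x
      have hc : sqpi π ⬝ᵥ (x - (sqpi π ⬝ᵥ x) • sqpi π) = 0 := by
        rw [dotProduct_sub, dotProduct_smul, hsq1, smul_eq_mul, mul_one, sub_self]
      have := hy _ hc
      rw [Mm_quad hπpos hrevP, Mm_quad hπpos hrevQ]
      linarith
    have hmono := inv_anti hMP hMQ hx (gv π (ctr π f))
    simp only [Vv]
    linarith
end

section
/- For irreducible transition matrices P and Q reversible with respect to π on a finite state space, P efficiency-dominates Q if and only if the matrix Q−P has all eigenvalues non-negative. -/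
open Matrix BigOperators Filter

namespace St7
open Finset

variable {n : ℕ}

noncomputable def evec {A : Matrix (Fin n) (Fin n) ℝ} (hA : A.IsHermitian) (m : Fin n) : Fin n → ℝ :=
  fun x => hA.eigenvectorBasis m x

lemma evec_mulVec {A : Matrix (Fin n) (Fin n) ℝ} (hA : A.IsHermitian) (m : Fin n) :
    A *ᵥ evec hA m = fun x => hA.eigenvalues m * evec hA m x := by
  have h := hA.mulVec_eigenvectorBasis m
  ext x
  have := congrFun h x
  simp only [Pi.smul_apply, smul_eq_mul] at this
  exact this

lemma evec_ortho {A : Matrix (Fin n) (Fin n) ℝ} (hA : A.IsHermitian) (m l : Fin n) :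
    ∑ x, evec hA m x * evec hA l x = if m = l then 1 else 0 := by
  have h := (orthonormal_iff_ite).mp hA.eigenvectorBasis.orthonormal m l
  rw [PiLp.inner_apply] at h
  simpa [evec, RCLike.inner_apply, mul_comm] using h

lemma evec_expand {A : Matrix (Fin n) (Fin n) ℝ} (hA : A.IsHermitian) (w : Fin n → ℝ) (x : Fin n) :
    w x = ∑ m, (∑ y, evec hA m y * w y) * evec hA m x := by
  classical
  set W : EuclideanSpace ℝ (Fin n) := (WithLp.equiv 2 _).symm w with hW
  have h := hA.eigenvectorBasis.sum_repr W
  have hx := congrFun (congrArg (fun v : EuclideanSpace ℝ (Fin n) => (WithLp.equiv 2 _) v) h) x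
  simp only [WithLp.equiv_apply] at hx
  have hWx : W x = w x := rfl
  have hsum : ((∑ m, hA.eigenvectorBasis.repr W m • hA.eigenvectorBasis m : EuclideanSpace ℝ (Fin n))) x
      = ∑ m, hA.eigenvectorBasis.repr W m * hA.eigenvectorBasis m x := by
    rw [WithLp.ofLp_sum, Finset.sum_apply]
    rfl
  rw [hWx, hsum] at hx
  rw [← hx]
  apply Finset.sum_congr rfl
  intro m _
  congr 1
  rw [hA.eigenvectorBasis.repr_apply_apply, PiLp.inner_apply]
  simp [evec, RCLike.inner_apply, hW, WithLp.equiv_symm_apply, PiLp.toLp_apply, mul_comm]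

lemma evec_ne_zero {A : Matrix (Fin n) (Fin n) ℝ} (hA : A.IsHermitian) (m : Fin n) :
    ∃ x, evec hA m x ≠ 0 := by
  by_contra h
  push_neg at h
  have := evec_ortho hA m m
  simp [h] at this

noncomputable def bcoef {A : Matrix (Fin n) (Fin n) ℝ} (hA : A.IsHermitian) (w : Fin n → ℝ)
    (m : Fin n) : ℝ := ∑ x, evec hA m x * w x

lemma pair_eq {A : Matrix (Fin n) (Fin n) ℝ} (hA : A.IsHermitian) (v w : Fin n → ℝ) :
    ∑ x, v x * w x = ∑ m, bcoef hA v m * bcoef hA w m := by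
  calc ∑ x, v x * w x = ∑ x, (∑ m, bcoef hA v m * evec hA m x) * w x := by
        refine sum_congr rfl fun x _ => ?_
        conv_lhs => rw [evec_expand hA v x]
        simp [bcoef]
    _ = ∑ m, ∑ x, bcoef hA v m * (evec hA m x * w x) := by
        rw [Finset.sum_comm]
        refine sum_congr rfl fun x _ => ?_
        rw [Finset.sum_mul]
        exact sum_congr rfl fun m _ => by ring
    _ = ∑ m, bcoef hA v m * bcoef hA w m := by
        refine sum_congr rfl fun m _ => ?_
        rw [← Finset.mul_sum]
        rfl

lemma sym_apply {A : Matrix (Fin n) (Fin n) ℝ} (hA : A.IsHermitian) (x y : Fin n) :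
    A x y = A y x := by
  have := congrFun (congrFun hA y) x
  rw [Matrix.conjTranspose_apply] at this
  simp only [star_trivial] at this
  exact this

lemma sym_move {A : Matrix (Fin n) (Fin n) ℝ} (hA : A.IsHermitian) (v w : Fin n → ℝ) :
    ∑ x, v x * (A *ᵥ w) x = ∑ x, (A *ᵥ v) x * w x := by
  simp only [Matrix.mulVec, dotProduct, Finset.sum_mul, Finset.mul_sum]
  rw [Finset.sum_comm]
  refine sum_congr rfl fun x _ => sum_congr rfl fun y _ => ?_
  rw [sym_apply hA y x]
  ring

lemma powA_evec {A : Matrix (Fin n) (Fin n) ℝ} (hA : A.IsHermitian) (k : ℕ) (m : Fin n) :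
    (A ^ k) *ᵥ evec hA m = fun x => (hA.eigenvalues m) ^ k * evec hA m x := by
  induction k with
  | zero => simp [Matrix.one_mulVec]
  | succ k ih =>
    rw [pow_succ, ← Matrix.mulVec_mulVec]
    have h1 : A *ᵥ evec hA m = (hA.eigenvalues m) • evec hA m := by
      funext x
      rw [evec_mulVec hA m]
      simp [Pi.smul_apply, smul_eq_mul]
    rw [h1, Matrix.mulVec_smul, ih]
    funext x
    simp [Pi.smul_apply, smul_eq_mul]
    ring

lemma bcoef_mulVecPow {A : Matrix (Fin n) (Fin n) ℝ} (hA : A.IsHermitian) (k : ℕ)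
    (w : Fin n → ℝ) (m : Fin n) :
    bcoef hA ((A ^ k) *ᵥ w) m = (hA.eigenvalues m) ^ k * bcoef hA w m := by
  unfold bcoef
  rw [sym_move (hA.pow k) (evec hA m) w, powA_evec hA k m]
  rw [Finset.mul_sum]
  exact sum_congr rfl fun x _ => by ring

lemma quad {A : Matrix (Fin n) (Fin n) ℝ} (hA : A.IsHermitian) (w : Fin n → ℝ) (k : ℕ) :
    ∑ x, ∑ y, w x * (A ^ k) x y * w y = ∑ m, (bcoef hA w m) ^ 2 * (hA.eigenvalues m) ^ k := by
  have h1 : ∑ x, ∑ y, w x * (A ^ k) x y * w y = ∑ x, w x * ((A ^ k) *ᵥ w) x := by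
    refine sum_congr rfl fun x _ => ?_
    simp only [Matrix.mulVec, dotProduct, Finset.mul_sum]
    exact sum_congr rfl fun y _ => by ring
  rw [h1, pair_eq hA w ((A ^ k) *ᵥ w)]
  refine sum_congr rfl fun m _ => ?_
  rw [bcoef_mulVecPow hA k w m]
  ring

lemma quad_one {A : Matrix (Fin n) (Fin n) ℝ} (hA : A.IsHermitian) (w : Fin n → ℝ) :
    ∑ x, ∑ y, w x * A x y * w y = ∑ m, (bcoef hA w m) ^ 2 * hA.eigenvalues m := by
  have := quad hA w 1
  simpa using this

lemma norm_eq {A : Matrix (Fin n) (Fin n) ℝ} (hA : A.IsHermitian) (w : Fin n → ℝ) :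
    ∑ x, w x ^ 2 = ∑ m, (bcoef hA w m) ^ 2 := by
  have := pair_eq hA w w
  simp only [← sq] at this
  simpa using this
noncomputable def sqv (π : Fin n → ℝ) (x : Fin n) : ℝ := Real.sqrt (π x)

section chain

variable (π : Fin n → ℝ)

lemma sq_pos (hπ : ∀ x, 0 < π x) (x : Fin n) : 0 < sqv π x := Real.sqrt_pos.mpr (hπ x)

lemma sq_ne (hπ : ∀ x, 0 < π x) (x : Fin n) : sqv π x ≠ 0 := ne_of_gt (sq_pos π hπ x)

lemma sq_sq (hπ : ∀ x, 0 < π x) (x : Fin n) : sqv π x * sqv π x = π x := Real.mul_self_sqrt (hπ x).le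

noncomputable def symA (M : Matrix (Fin n) (Fin n) ℝ) : Matrix (Fin n) (Fin n) ℝ :=
  Matrix.of fun x y => sqv π x * M x y * (sqv π y)⁻¹

lemma symA_apply (M : Matrix (Fin n) (Fin n) ℝ) (x y : Fin n) :
    symA π M x y = sqv π x * M x y * (sqv π y)⁻¹ := rfl

lemma symA_herm (hπ : ∀ x, 0 < π x) {M : Matrix (Fin n) (Fin n) ℝ} (hrev : IsReversible π M) :
    (symA π M).IsHermitian := by
  ext x y
  rw [Matrix.conjTranspose_apply, star_trivial, symA_apply, symA_apply]
  have h := hrev x y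
  rw [← sq_sq π hπ x, ← sq_sq π hπ y] at h
  have hx := sq_ne π hπ x
  have hy := sq_ne π hπ y
  field_simp
  nlinarith [h]

lemma stationary {M : Matrix (Fin n) (Fin n) ℝ} (hrev : IsReversible π M)
    (hrow : ∀ x, ∑ y, M x y = 1) (y : Fin n) : ∑ x, π x * M x y = π y := by
  calc ∑ x, π x * M x y = ∑ x, π y * M y x := by
        exact Finset.sum_congr rfl fun x _ => by rw [hrev x y]
    _ = π y := by rw [← Finset.mul_sum, hrow y, mul_one]

lemma pow_nonneg_entry {M : Matrix (Fin n) (Fin n) ℝ} (h0 : ∀ x y, 0 ≤ M x y) (k : ℕ) :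
    ∀ x y, 0 ≤ (M ^ k) x y := by
  induction k with
  | zero => intro x y; rw [pow_zero]; by_cases h : x = y <;> simp [Matrix.one_apply, h]
  | succ k ih =>
    intro x y
    rw [pow_succ, Matrix.mul_apply]
    exact Finset.sum_nonneg fun z _ => mul_nonneg (ih x z) (h0 z y)

lemma pow_row_sum {M : Matrix (Fin n) (Fin n) ℝ} (hrow : ∀ x, ∑ y, M x y = 1) (k : ℕ) :
    ∀ x, ∑ y, (M ^ k) x y = 1 := by
  induction k with
  | zero => intro x; rw [pow_zero]; simp [Matrix.one_apply]
  | succ k ih =>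
    intro x
    simp only [pow_succ, Matrix.mul_apply]
    rw [Finset.sum_comm]
    calc ∑ z, ∑ y, (M ^ k) x z * M z y = ∑ z, (M ^ k) x z * ∑ y, M z y := by
          exact Finset.sum_congr rfl fun z _ => by rw [Finset.mul_sum]
      _ = 1 := by
          simp_rw [hrow]
          simpa using ih x

lemma symA_pow_apply (hπ : ∀ x, 0 < π x) {M : Matrix (Fin n) (Fin n) ℝ} (k : ℕ) (x y : Fin n) :
    ((symA π M) ^ k) x y = sqv π x * ((M ^ k) x y) * (sqv π y)⁻¹ := by
  induction k generalizing x y with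
  | zero =>
    simp only [pow_zero]
    by_cases h : x = y
    · subst h; simp [Matrix.one_apply, mul_inv_cancel₀ (sq_ne π hπ x)]
    · simp [Matrix.one_apply, h]
  | succ k ih =>
    simp only [pow_succ, Matrix.mul_apply]
    rw [Finset.sum_congr rfl fun z _ => by rw [ih, symA_apply]]
    have : ∀ z : Fin n, sqv π x * (M ^ k) x z * (sqv π z)⁻¹ * (sqv π z * M z y * (sqv π y)⁻¹)
        = sqv π x * ((M ^ k) x z * M z y) * (sqv π y)⁻¹ := by
      intro z
      have hz := sq_ne π hπ z
      have h1 : sqv π x * (M ^ k) x z * (sqv π z)⁻¹ * (sqv π z * M z y * (sqv π y)⁻¹)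
          = (sqv π z * (sqv π z)⁻¹) * (sqv π x * ((M ^ k) x z * M z y) * (sqv π y)⁻¹) := by ring
      rw [h1, mul_inv_cancel₀ hz, one_mul]
    rw [Finset.sum_congr rfl fun z _ => this z]
    rw [← Finset.sum_mul, ← Finset.mul_sum]

lemma symA_fix (hπ : ∀ x, 0 < π x) {M : Matrix (Fin n) (Fin n) ℝ} (hrow : ∀ x, ∑ y, M x y = 1) :
    (symA π M) *ᵥ (sqv π) = sqv π := by
  funext x
  simp only [Matrix.mulVec, dotProduct, symA_apply]
  have : ∀ y : Fin n, sqv π x * M x y * (sqv π y)⁻¹ * sqv π y = sqv π x * M x y := by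
    intro y
    rw [mul_assoc, inv_mul_cancel₀ (sq_ne π hπ y), mul_one]
  rw [Finset.sum_congr rfl fun y _ => this y, ← Finset.mul_sum, hrow x, mul_one]

end chain
section spectralbounds

variable {π : Fin n → ℝ} {M : Matrix (Fin n) (Fin n) ℝ}

lemma bcoef_evec {A : Matrix (Fin n) (Fin n) ℝ} (hA : A.IsHermitian) (m l : Fin n) :
    bcoef hA (evec hA m) l = if l = m then 1 else 0 := by
  unfold bcoef; rw [evec_ortho hA l m]

lemma eval_eig {A : Matrix (Fin n) (Fin n) ℝ} (hA : A.IsHermitian) (m : Fin n) :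
    ∑ x, ∑ y, evec hA m x * A x y * evec hA m y = hA.eigenvalues m := by
  rw [quad_one hA (evec hA m)]
  rw [Finset.sum_congr rfl (fun l _ => by rw [bcoef_evec hA m l])]
  simp

lemma eig_bounds (hπ : ∀ x, 0 < π x) (hst : IsStochastic M) (hrev : IsReversible π M)
    (hA : (symA π M).IsHermitian) (m : Fin n) :
    -1 ≤ hA.eigenvalues m ∧ hA.eigenvalues m ≤ 1 := by
  set u := evec hA m with hu
  set φ : Fin n → ℝ := fun x => u x * (sqv π x)⁻¹ with hφ
  have husq : ∀ x, u x = sqv π x * φ x := by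
    intro x
    show u x = sqv π x * (u x * (sqv π x)⁻¹)
    rw [mul_comm (sqv π x), mul_assoc, inv_mul_cancel₀ (sq_ne π hπ x), mul_one]
  have hunorm : ∑ x, u x * u x = 1 := by simpa using evec_ortho hA m m
  have hterm : ∀ x y : Fin n, u x * (symA π M) x y * u y = π x * M x y * (φ x * φ y) := by
    intro x y
    rw [symA_apply, husq x, husq y, ← sq_sq π hπ x]
    have hy := sq_ne π hπ y
    field_simp
  have hπφ : ∑ x, π x * (φ x * φ x) = 1 := by
    rw [← hunorm]
    refine Finset.sum_congr rfl fun x _ => ?_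
    rw [husq x, ← sq_sq π hπ x]
    ring
  have hA1 : ∑ x, ∑ y, π x * M x y * (φ x * φ x) = 1 := by
    calc ∑ x, ∑ y, π x * M x y * (φ x * φ x)
        = ∑ x, π x * (φ x * φ x) * ∑ y, M x y := by
          refine Finset.sum_congr rfl fun x _ => ?_
          rw [Finset.mul_sum]
          exact Finset.sum_congr rfl fun y _ => by ring
      _ = 1 := by
          rw [Finset.sum_congr rfl fun x (_ : x ∈ Finset.univ) => by rw [hst.2 x, mul_one]]
          exact hπφ
  have hA2 : ∑ x, ∑ y, π x * M x y * (φ y * φ y) = 1 := by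
    rw [Finset.sum_comm]
    calc ∑ y, ∑ x, π x * M x y * (φ y * φ y)
        = ∑ y, (∑ x, π x * M x y) * (φ y * φ y) := by
          refine Finset.sum_congr rfl fun y _ => ?_
          rw [Finset.sum_mul]
      _ = 1 := by
          rw [Finset.sum_congr rfl fun y (_ : y ∈ Finset.univ) => by
            rw [stationary π hrev hst.2 y]]
          exact hπφ
  have heval : ∑ x, ∑ y, π x * M x y * (φ x * φ y) = hA.eigenvalues m := by
    rw [← eval_eig hA m]
    exact (Finset.sum_congr rfl fun x _ => Finset.sum_congr rfl fun y _ => (hterm x y).symm)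
  have hsum1 : ∑ x, ∑ y, (π x * M x y * (φ x * φ x) + π x * M x y * (φ y * φ y)) / 2 = 1 := by
    simp only [add_div, Finset.sum_add_distrib]
    rw [show ∑ x, ∑ y, π x * M x y * (φ x * φ x) / 2 = (∑ x, ∑ y, π x * M x y * (φ x * φ x)) / 2 from by
      simp [Finset.sum_div],
      show ∑ x, ∑ y, π x * M x y * (φ y * φ y) / 2 = (∑ x, ∑ y, π x * M x y * (φ y * φ y)) / 2 from by
      simp [Finset.sum_div], hA1, hA2]
    norm_num
  constructor
  · rw [← heval]
    have hlb : ∑ x, ∑ y, -((π x * M x y * (φ x * φ x) + π x * M x y * (φ y * φ y)) / 2)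
        ≤ ∑ x, ∑ y, π x * M x y * (φ x * φ y) := by
      refine Finset.sum_le_sum fun x _ => Finset.sum_le_sum fun y _ => ?_
      have h1 : 0 ≤ π x * M x y := mul_nonneg (hπ x).le (hst.1 x y)
      nlinarith [sq_nonneg (φ x + φ y)]
    have heq : ∑ x, ∑ y, -((π x * M x y * (φ x * φ x) + π x * M x y * (φ y * φ y)) / 2)
        = -1 := by
      rw [Finset.sum_congr rfl fun x (_ : x ∈ Finset.univ) => @Finset.sum_neg_distrib _ _ _ _ _,
        Finset.sum_neg_distrib, hsum1]
    linarith
  · rw [← heval]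
    have hub : ∑ x, ∑ y, π x * M x y * (φ x * φ y)
        ≤ ∑ x, ∑ y, (π x * M x y * (φ x * φ x) + π x * M x y * (φ y * φ y)) / 2 := by
      refine Finset.sum_le_sum fun x _ => Finset.sum_le_sum fun y _ => ?_
      have h1 : 0 ≤ π x * M x y := mul_nonneg (hπ x).le (hst.1 x y)
      nlinarith [sq_nonneg (φ x - φ y)]
    linarith [hsum1]

end spectralbounds
section pf

variable {π : Fin n → ℝ} {M : Matrix (Fin n) (Fin n) ℝ}

lemma eig_one_bcoef (hπ : ∀ x, 0 < π x) (hst : IsStochastic M) (hirr : MatIrreducible M)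
    (hrev : IsReversible π M) (hA : (symA π M).IsHermitian) (m : Fin n)
    (hm : hA.eigenvalues m = 1) (w : Fin n → ℝ) (hw : ∑ x, sqv π x * w x = 0) :
    bcoef hA w m = 0 := by
  set u := evec hA m with hu
  set φ : Fin n → ℝ := fun x => u x * (sqv π x)⁻¹ with hφ
  have husq : ∀ x, u x = sqv π x * φ x := by
    intro x
    show u x = sqv π x * (u x * (sqv π x)⁻¹)
    rw [mul_comm (sqv π x), mul_assoc, inv_mul_cancel₀ (sq_ne π hπ x), mul_one]
  have hAu : ∀ x, ∑ y, (symA π M) x y * u y = u x := by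
    intro x
    have := congrFun (evec_mulVec hA m) x
    simp only [Matrix.mulVec, dotProduct] at this
    rw [hm, one_mul] at this
    exact this
  have hPφ : ∀ x, ∑ y, M x y * φ y = φ x := by
    intro x
    have h := hAu x
    have h2 : ∑ y, (symA π M) x y * u y = sqv π x * ∑ y, M x y * φ y := by
      rw [Finset.mul_sum]
      refine Finset.sum_congr rfl fun y _ => ?_
      rw [symA_apply]
      show sqv π x * M x y * (sqv π y)⁻¹ * u y = sqv π x * (M x y * (u y * (sqv π y)⁻¹))
      ring
    rw [h2] at h
    have h3 : u x = sqv π x * φ x := husq x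
    rw [h3] at h
    exact mul_left_cancel₀ (sq_ne π hπ x) h
  -- the Dirichlet form vanishes
  have hD1 : ∑ x, ∑ y, π x * M x y * (φ x * φ x) = ∑ x, π x * (φ x * φ x) := by
    refine Finset.sum_congr rfl fun x _ => ?_
    calc ∑ y, π x * M x y * (φ x * φ x) = π x * (φ x * φ x) * ∑ y, M x y := by
          rw [Finset.mul_sum]; exact Finset.sum_congr rfl fun y _ => by ring
      _ = π x * (φ x * φ x) := by rw [hst.2 x, mul_one]
  have hD2 : ∑ x, ∑ y, π x * M x y * (φ y * φ y) = ∑ x, π x * (φ x * φ x) := by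
    rw [Finset.sum_comm]
    refine Finset.sum_congr rfl fun y _ => ?_
    calc ∑ x, π x * M x y * (φ y * φ y) = (∑ x, π x * M x y) * (φ y * φ y) := by
          rw [Finset.sum_mul]
      _ = π y * (φ y * φ y) := by rw [stationary π hrev hst.2 y]
  have hD3 : ∑ x, ∑ y, π x * M x y * (φ x * φ y) = ∑ x, π x * (φ x * φ x) := by
    refine Finset.sum_congr rfl fun x _ => ?_
    calc ∑ y, π x * M x y * (φ x * φ y) = π x * φ x * ∑ y, M x y * φ y := by
          rw [Finset.mul_sum]; exact Finset.sum_congr rfl fun y _ => by ring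
      _ = π x * (φ x * φ x) := by rw [hPφ x]; ring
  have hE : ∑ x, ∑ y, π x * M x y * (φ x - φ y) ^ 2 = 0 := by
    have hexp : ∀ x y : Fin n, π x * M x y * (φ x - φ y) ^ 2
        = π x * M x y * (φ x * φ x) + π x * M x y * (φ y * φ y)
          - 2 * (π x * M x y * (φ x * φ y)) := by intro x y; ring
    rw [Finset.sum_congr rfl fun x (_ : x ∈ Finset.univ) =>
      Finset.sum_congr rfl fun y (_ : y ∈ Finset.univ) => hexp x y]
    rw [Finset.sum_congr rfl fun x (_ : x ∈ Finset.univ) => Finset.sum_sub_distrib _ _,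
      Finset.sum_sub_distrib]
    rw [Finset.sum_congr rfl fun x (_ : x ∈ Finset.univ) => Finset.sum_add_distrib,
      Finset.sum_add_distrib]
    rw [hD1, hD2]
    rw [show ∑ x, ∑ y, 2 * (π x * M x y * (φ x * φ y)) = 2 * ∑ x, ∑ y, π x * M x y * (φ x * φ y) from by
      rw [Finset.mul_sum]
      exact Finset.sum_congr rfl fun x _ => by rw [Finset.mul_sum]]
    rw [hD3]
    ring
  have hzero : ∀ x y, 0 < M x y → φ x = φ y := by
    intro x y hxy
    have hnn : ∀ x ∈ Finset.univ, (0:ℝ) ≤ ∑ y, π x * M x y * (φ x - φ y) ^ 2 := by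
      intro x _
      exact Finset.sum_nonneg fun y _ =>
        mul_nonneg (mul_nonneg (hπ x).le (hst.1 x y)) (sq_nonneg _)
    have h1 := (Finset.sum_eq_zero_iff_of_nonneg hnn).mp hE x (Finset.mem_univ x)
    have hnn2 : ∀ y ∈ Finset.univ, (0:ℝ) ≤ π x * M x y * (φ x - φ y) ^ 2 := fun y _ =>
      mul_nonneg (mul_nonneg (hπ x).le (hst.1 x y)) (sq_nonneg _)
    have h2 := (Finset.sum_eq_zero_iff_of_nonneg hnn2).mp h1 y (Finset.mem_univ y)
    have h3 : (φ x - φ y) ^ 2 = 0 := by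
      have hp : 0 < π x * M x y := mul_pos (hπ x) hxy
      exact (mul_eq_zero.mp h2).resolve_left (ne_of_gt hp)
    have := pow_eq_zero_iff (n := 2) (by norm_num) |>.mp h3
    linarith [this]
  have hchain : ∀ k (x y : Fin n), 0 < (M ^ k) x y → φ x = φ y := by
    intro k
    induction k with
    | zero =>
      intro x y h
      rw [pow_zero, Matrix.one_apply] at h
      by_cases hxy : x = y
      · rw [hxy]
      · simp [hxy] at h
    | succ k ih =>
      intro x y h
      rw [pow_succ, Matrix.mul_apply] at h
      have hex : ∃ z, 0 < (M ^ k) x z * M z y := by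
        by_contra hc
        push_neg at hc
        have : ∑ z, (M ^ k) x z * M z y ≤ 0 := Finset.sum_nonpos fun z _ => hc z
        linarith
      obtain ⟨z, hz⟩ := hex
      have h1 : 0 ≤ (M ^ k) x z := pow_nonneg_entry hst.1 k x z
      have h2 : 0 ≤ M z y := hst.1 z y
      have hz1 : 0 < (M ^ k) x z := by
        rcases mul_pos_iff.mp hz with ⟨ha, _⟩ | ⟨ha, hb⟩
        · exact ha
        · linarith
      have hz2 : 0 < M z y := by
        rcases mul_pos_iff.mp hz with ⟨_, hb⟩ | ⟨ha, hb⟩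
        · exact hb
        · linarith
      exact (ih x z hz1).trans (hzero z y hz2)
  have hconst : ∀ x y, φ x = φ y := fun x y => hchain (hirr x y).choose x y (hirr x y).choose_spec
  unfold bcoef
  rcases isEmpty_or_nonempty (Fin n) with hemp | hne
  · simp
  · obtain x0 := Classical.arbitrary (Fin n)
    calc ∑ x, evec hA m x * w x = ∑ x, φ x0 * (sqv π x * w x) := by
          refine Finset.sum_congr rfl fun x _ => ?_
          rw [show evec hA m x = u x from rfl, husq x, hconst x x0]
          ring
      _ = 0 := by rw [← Finset.mul_sum, hw, mul_zero]

end pf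
section fejer
open Finset

lemma Gclosed (l : ℝ) (N : ℕ) :
    (∑ i ∈ range N, ∑ j ∈ range N, l ^ (max i j - min i j)) * (1 - l) ^ 2
      = (N : ℝ) * (1 + l) * (1 - l) - 2 * l * (1 - l ^ N) := by
  induction N with
  | zero => simp
  | succ N ih =>
    have hsplit : ∑ i ∈ range (N + 1), ∑ j ∈ range (N + 1), l ^ (max i j - min i j)
        = (∑ i ∈ range N, ∑ j ∈ range N, l ^ (max i j - min i j))
          + (∑ i ∈ range N, l ^ (N - i)) + (∑ j ∈ range N, l ^ (N - j)) + 1 := by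
      rw [Finset.sum_range_succ]
      rw [Finset.sum_congr rfl fun i (hi : i ∈ range N) => Finset.sum_range_succ
        (fun j => l ^ (max i j - min i j)) N]
      rw [Finset.sum_add_distrib]
      have h1 : ∀ i ∈ range N, l ^ (max i N - min i N) = l ^ (N - i) := by
        intro i hi
        have : i ≤ N := le_of_lt (Finset.mem_range.mp hi)
        rw [max_eq_right this, min_eq_left this]
      have h2 : ∀ j ∈ range N, l ^ (max N j - min N j) = l ^ (N - j) := by
        intro j hj
        have : j ≤ N := le_of_lt (Finset.mem_range.mp hj)
        rw [max_eq_left this, min_eq_right this]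
      rw [Finset.sum_congr rfl h1]
      rw [Finset.sum_range_succ (fun j => l ^ (max N j - min N j)) N]
      rw [Finset.sum_congr rfl h2]
      simp only [max_self, min_self, Nat.sub_self, pow_zero]
      ring
    have hrefl : (∑ i ∈ range N, l ^ (N - i)) = ∑ i ∈ range N, l ^ (i + 1) := by
      have := Finset.sum_range_reflect (fun i => l ^ (i + 1)) N
      rw [← this]
      refine Finset.sum_congr rfl fun i hi => ?_
      have hi' : i < N := Finset.mem_range.mp hi
      congr 1
      omega
    have hgeom : (∑ i ∈ range N, l ^ i) * (l - 1) = l ^ N - 1 := geom_sum_mul l N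
    have hpow : (∑ i ∈ range N, l ^ (i + 1)) = l * ∑ i ∈ range N, l ^ i := by
      rw [Finset.mul_sum]
      exact Finset.sum_congr rfl fun i _ => by rw [pow_succ]; ring
    rw [hsplit, hrefl, hpow]
    push_cast
    linear_combination ih - 2 * l * (1 - l) * hgeom

lemma tendsto_FN (l : ℝ) (h1 : -1 ≤ l) (h2 : l < 1) :
    Filter.Tendsto (fun N : ℕ => ((N : ℝ))⁻¹ * ∑ i ∈ range N, ∑ j ∈ range N,
      l ^ (max i j - min i j)) Filter.atTop (nhds ((1 + l) * (1 - l)⁻¹)) := by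
  have hl1 : (1 : ℝ) - l ≠ 0 := by linarith
  have hformula : ∀ N : ℕ, 1 ≤ N →
      ((N : ℝ))⁻¹ * ∑ i ∈ range N, ∑ j ∈ range N, l ^ (max i j - min i j)
        = (1 + l) * (1 - l)⁻¹ - ((N : ℝ))⁻¹ * (2 * l * (1 - l ^ N) * ((1 - l) ^ 2)⁻¹) := by
    intro N hN
    have hNne : ((N : ℝ)) ≠ 0 := by positivity
    have h := Gclosed l N
    have hsq : ((1 : ℝ) - l) ^ 2 ≠ 0 := pow_ne_zero 2 hl1
    field_simp
    linear_combination h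
  have habs : ∀ N : ℕ, |l ^ N| ≤ 1 := by
    intro N
    rw [abs_pow]
    exact pow_le_one₀ (abs_nonneg l) (abs_le.mpr ⟨h1, h2.le⟩)
  have htend0 : Filter.Tendsto (fun N : ℕ => ((N : ℝ))⁻¹ * (2 * l * (1 - l ^ N) * ((1 - l) ^ 2)⁻¹))
      Filter.atTop (nhds 0) := by
    apply squeeze_zero_norm (a := fun N : ℕ => ((N : ℝ))⁻¹ * (4 * ((1 - l) ^ 2)⁻¹))
    · intro N
      rw [Real.norm_eq_abs, abs_mul]
      have h1a : |((N : ℝ))⁻¹| = ((N : ℝ))⁻¹ := abs_of_nonneg (by positivity)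
      rw [h1a]
      apply mul_le_mul_of_nonneg_left _ (by positivity)
      rw [abs_mul]
      have h2a : |((1 - l) ^ 2)⁻¹| = ((1 - l) ^ 2)⁻¹ := abs_of_nonneg (by positivity)
      rw [h2a]
      apply mul_le_mul_of_nonneg_right _ (by positivity)
      rw [abs_mul]
      have hl : |l| ≤ 1 := abs_le.mpr ⟨h1, h2.le⟩
      have h3a : |1 - l ^ N| ≤ 2 := by
        have := habs N
        rw [abs_le] at this ⊢
        constructor <;> linarith [this.1, this.2]
      have h4a : |2 * l| ≤ 2 := by
        rw [abs_mul]
        simp only [abs_two]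
        nlinarith [hl, abs_nonneg l]
      nlinarith [abs_nonneg (2 * l), abs_nonneg (1 - l ^ N)]
    · have hinv : Filter.Tendsto (fun N : ℕ => ((N : ℝ))⁻¹) Filter.atTop (nhds 0) :=
        tendsto_inv_atTop_zero.comp tendsto_natCast_atTop_atTop
      have := hinv.mul_const (4 * ((1 - l) ^ 2)⁻¹)
      simpa using this
  have hmain : Filter.Tendsto (fun N : ℕ => (1 + l) * (1 - l)⁻¹
      - ((N : ℝ))⁻¹ * (2 * l * (1 - l ^ N) * ((1 - l) ^ 2)⁻¹)) Filter.atTop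
      (nhds ((1 + l) * (1 - l)⁻¹ - 0)) := Filter.Tendsto.sub tendsto_const_nhds htend0
  rw [sub_zero] at hmain
  apply hmain.congr'
  filter_upwards [Filter.eventually_ge_atTop 1] with N hN
  rw [hformula N hN]

end fejer
section varlimit

variable {π : Fin n → ℝ} {P : Matrix (Fin n) (Fin n) ℝ}

noncomputable def gv (π : Fin n → ℝ) (f : Fin n → ℝ) : Fin n → ℝ :=
  fun x => sqv π x * (f x - ∑ z, π z * f z)

lemma autocov_eq (hπ : ∀ x, 0 < π x) (f : Fin n → ℝ) (k : ℕ) :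
    autocov π P f k = ∑ x, ∑ y, gv π f x * ((symA π P) ^ k) x y * gv π f y := by
  unfold autocov gv
  refine Finset.sum_congr rfl fun x _ => Finset.sum_congr rfl fun y _ => ?_
  rw [symA_pow_apply π hπ k x y]
  have hc : (sqv π y)⁻¹ * sqv π y = 1 := inv_mul_cancel₀ (sq_ne π hπ y)
  have key : (sqv π x * (f x - ∑ z, π z * f z)) * (sqv π x * (P ^ k) x y * (sqv π y)⁻¹)
        * (sqv π y * (f y - ∑ z, π z * f z))
      = (sqv π x * sqv π x) * (f x - ∑ z, π z * f z) * (P ^ k) x y * (f y - ∑ z, π z * f z)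
        * ((sqv π y)⁻¹ * sqv π y) := by ring
  rw [key, hc, mul_one, sq_sq π hπ x]

lemma varN_eq (hπ : ∀ x, 0 < π x) (hA : (symA π P).IsHermitian) (f : Fin n → ℝ) (N : ℕ) :
    varN π P f N = ∑ m, (bcoef hA (gv π f) m) ^ 2 *
      (((N : ℝ))⁻¹ * ∑ i ∈ Finset.range N, ∑ j ∈ Finset.range N,
        (hA.eigenvalues m) ^ (max i j - min i j)) := by
  unfold varN
  rw [Finset.sum_congr rfl fun i (_ : i ∈ Finset.range N) =>
    Finset.sum_congr rfl fun j (_ : j ∈ Finset.range N) => by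
      rw [autocov_eq hπ f (max i j - min i j), quad hA (gv π f) (max i j - min i j)]]
  rw [Finset.sum_congr rfl fun i (_ : i ∈ Finset.range N) => Finset.sum_comm]
  rw [Finset.sum_comm]
  rw [Finset.mul_sum]
  refine Finset.sum_congr rfl fun m _ => ?_
  rw [show ∑ i ∈ Finset.range N, ∑ j ∈ Finset.range N,
      (bcoef hA (gv π f) m) ^ 2 * (hA.eigenvalues m) ^ (max i j - min i j)
      = (bcoef hA (gv π f) m) ^ 2 * ∑ i ∈ Finset.range N, ∑ j ∈ Finset.range N,
        (hA.eigenvalues m) ^ (max i j - min i j) from by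
    rw [Finset.mul_sum]
    exact Finset.sum_congr rfl fun i _ => by rw [Finset.mul_sum]]
  ring

lemma gv_orth (hπ : ∀ x, 0 < π x) (hπsum : ∑ x, π x = 1) (f : Fin n → ℝ) :
    ∑ x, sqv π x * gv π f x = 0 := by
  unfold gv
  have h1 : ∀ x : Fin n, sqv π x * (sqv π x * (f x - ∑ z, π z * f z))
      = π x * f x - π x * (∑ z, π z * f z) := by
    intro x
    rw [← mul_assoc, sq_sq π hπ x]
    ring
  rw [Finset.sum_congr rfl fun x (_ : x ∈ Finset.univ) => h1 x, Finset.sum_sub_distrib]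
  rw [← Finset.sum_mul, hπsum, one_mul]
  simp

lemma tendsto_varN (hπ : ∀ x, 0 < π x) (hπsum : ∑ x, π x = 1) (hst : IsStochastic P)
    (hirr : MatIrreducible P) (hrev : IsReversible π P) (hA : (symA π P).IsHermitian)
    (f : Fin n → ℝ) :
    Filter.Tendsto (varN π P f) Filter.atTop (nhds (∑ m, (bcoef hA (gv π f) m) ^ 2 *
      ((1 + hA.eigenvalues m) * (1 - hA.eigenvalues m)⁻¹))) := by
  have hmain : Filter.Tendsto (fun N : ℕ => ∑ m, (bcoef hA (gv π f) m) ^ 2 *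
      (((N : ℝ))⁻¹ * ∑ i ∈ Finset.range N, ∑ j ∈ Finset.range N,
        (hA.eigenvalues m) ^ (max i j - min i j))) Filter.atTop
      (nhds (∑ m, (bcoef hA (gv π f) m) ^ 2 *
        ((1 + hA.eigenvalues m) * (1 - hA.eigenvalues m)⁻¹))) := by
    apply tendsto_finset_sum
    intro m _
    by_cases hb : bcoef hA (gv π f) m = 0
    · simpa [hb] using (tendsto_const_nhds :
        Filter.Tendsto (fun _ : ℕ => (0:ℝ)) Filter.atTop (nhds 0))
    · have hle := eig_bounds hπ hst hrev hA m
      have hne : hA.eigenvalues m ≠ 1 := fun h =>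
        hb (eig_one_bcoef hπ hst hirr hrev hA m h _ (gv_orth hπ hπsum f))
      have hlt : hA.eigenvalues m < 1 := lt_of_le_of_ne hle.2 hne
      exact (tendsto_FN _ hle.1 hlt).const_mul _
  exact hmain.congr (fun N => (varN_eq hπ hA f N).symm)

end varlimit
section varineq

variable {A : Matrix (Fin n) (Fin n) ℝ}

lemma vval_eq (hA : A.IsHermitian) (g : Fin n → ℝ)
    (hbz : ∀ m, hA.eigenvalues m = 1 → bcoef hA g m = 0) :
    ∑ m, (bcoef hA g m) ^ 2 * ((1 + hA.eigenvalues m) * (1 - hA.eigenvalues m)⁻¹)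
      = 2 * (∑ m, (bcoef hA g m) ^ 2 * (1 - hA.eigenvalues m)⁻¹) - ∑ x, g x ^ 2 := by
  rw [norm_eq hA g, Finset.mul_sum, ← Finset.sum_sub_distrib]
  refine Finset.sum_congr rfl fun m _ => ?_
  by_cases h1 : hA.eigenvalues m = 1
  · rw [hbz m h1]
    ring
  · have hne : 1 - hA.eigenvalues m ≠ 0 := fun h => h1 (by linarith)
    field_simp
    ring

lemma L1raw (hA : A.IsHermitian) (hlle : ∀ m, hA.eigenvalues m ≤ 1) (g : Fin n → ℝ)
    (hbz : ∀ m, hA.eigenvalues m = 1 → bcoef hA g m = 0) (y : Fin n → ℝ) :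
    2 * (∑ x, g x * y x) - (∑ x, y x ^ 2) + (∑ x, ∑ x', y x * A x x' * y x')
      ≤ ∑ m, (bcoef hA g m) ^ 2 * (1 - hA.eigenvalues m)⁻¹ := by
  rw [pair_eq hA g y, norm_eq hA y, quad_one hA y]
  rw [Finset.mul_sum, ← Finset.sum_sub_distrib, ← Finset.sum_add_distrib]
  refine Finset.sum_le_sum fun m _ => ?_
  set b := bcoef hA g m
  set c := bcoef hA y m
  by_cases h1 : hA.eigenvalues m = 1
  · have hb0 : b = 0 := hbz m h1
    rw [hb0, h1]
    simp
  · have hβpos : 0 < 1 - hA.eigenvalues m := by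
      have := hlle m
      cases lt_or_eq_of_le this with
      | inl h => linarith
      | inr h => exact absurd h h1
    rw [show b ^ 2 * (1 - hA.eigenvalues m)⁻¹ = b ^ 2 / (1 - hA.eigenvalues m) from
      div_eq_mul_inv _ _ |>.symm, le_div_iff₀ hβpos]
    nlinarith [sq_nonneg (b - (1 - hA.eigenvalues m) * c)]

lemma bcoef_smul_sum (hA : A.IsHermitian) (coef : Fin n → ℝ) (l : Fin n) :
    bcoef hA (fun x => ∑ m, coef m * evec hA m x) l = coef l := by
  unfold bcoef
  rw [Finset.sum_congr rfl fun x (_ : x ∈ Finset.univ) => Finset.mul_sum .. ]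
  rw [Finset.sum_comm]
  rw [Finset.sum_congr rfl fun m (_ : m ∈ Finset.univ) => by
    rw [show ∑ x, evec hA l x * (coef m * evec hA m x) = coef m * ∑ x, evec hA l x * evec hA m x from by
      rw [Finset.mul_sum]; exact Finset.sum_congr rfl fun x _ => by ring,
      evec_ortho hA l m]]
  simp

lemma L2raw (hA : A.IsHermitian) (g : Fin n → ℝ)
    (hbz : ∀ m, hA.eigenvalues m = 1 → bcoef hA g m = 0) :
    ∑ m, (bcoef hA g m) ^ 2 * (1 - hA.eigenvalues m)⁻¹
      = 2 * (∑ x, g x * (fun x => ∑ m, (bcoef hA g m * (1 - hA.eigenvalues m)⁻¹) * evec hA m x) x)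
        - (∑ x, ((fun x => ∑ m, (bcoef hA g m * (1 - hA.eigenvalues m)⁻¹) * evec hA m x) x) ^ 2)
        + (∑ x, ∑ x', ((fun x => ∑ m, (bcoef hA g m * (1 - hA.eigenvalues m)⁻¹) * evec hA m x) x)
            * A x x' * ((fun x => ∑ m, (bcoef hA g m * (1 - hA.eigenvalues m)⁻¹) * evec hA m x) x')) := by
  set y : Fin n → ℝ := fun x => ∑ m, (bcoef hA g m * (1 - hA.eigenvalues m)⁻¹) * evec hA m x with hy
  have hcy : ∀ l, bcoef hA y l = bcoef hA g l * (1 - hA.eigenvalues l)⁻¹ :=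
    fun l => bcoef_smul_sum hA _ l
  rw [pair_eq hA g y, norm_eq hA y, quad_one hA y]
  rw [Finset.mul_sum, ← Finset.sum_sub_distrib, ← Finset.sum_add_distrib]
  refine Finset.sum_congr rfl fun m _ => ?_
  rw [hcy m]
  by_cases h1 : hA.eigenvalues m = 1
  · rw [hbz m h1, h1]
    simp
  · have hne : 1 - hA.eigenvalues m ≠ 0 := fun h => h1 (by linarith)
    field_simp
    ring

lemma bcoef_sub_mulVec (hA : A.IsHermitian) (w : Fin n → ℝ) (m : Fin n) :
    bcoef hA (fun x => w x - (A *ᵥ w) x) m = (1 - hA.eigenvalues m) * bcoef hA w m := by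
  unfold bcoef
  rw [Finset.sum_congr rfl fun x (_ : x ∈ Finset.univ) => mul_sub (evec hA m x) (w x) ((A *ᵥ w) x),
    Finset.sum_sub_distrib]
  have h := bcoef_mulVecPow hA 1 w m
  rw [pow_one, pow_one] at h
  unfold bcoef at h
  rw [h]
  ring

lemma sum_beta_sq (hA : A.IsHermitian) (w : Fin n → ℝ) :
    ∑ m, ((1 - hA.eigenvalues m) * bcoef hA w m) ^ 2 * (1 - hA.eigenvalues m)⁻¹
      = (∑ x, w x ^ 2) - (∑ x, ∑ x', w x * A x x' * w x') := by
  rw [norm_eq hA w, quad_one hA w, ← Finset.sum_sub_distrib]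
  refine Finset.sum_congr rfl fun m _ => ?_
  by_cases h1 : (1 : ℝ) - hA.eigenvalues m = 0
  · rw [h1]
    have : hA.eigenvalues m = 1 := by linarith
    rw [this]
    simp
  · field_simp

end varineq
section mainhelpers

lemma quad_sub (M M' : Matrix (Fin n) (Fin n) ℝ) (y : Fin n → ℝ) :
    ∑ x, ∑ x', y x * (M - M') x x' * y x'
      = (∑ x, ∑ x', y x * M x x' * y x') - ∑ x, ∑ x', y x * M' x x' * y x' := by
  rw [← Finset.sum_sub_distrib]
  refine Finset.sum_congr rfl fun x _ => ?_
  rw [← Finset.sum_sub_distrib]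
  refine Finset.sum_congr rfl fun x' _ => ?_
  rw [Matrix.sub_apply]
  ring

lemma symA_sub (π : Fin n → ℝ) (P Q : Matrix (Fin n) (Fin n) ℝ) :
    symA π (Q - P) = symA π Q - symA π P := by
  ext x y
  rw [Matrix.sub_apply, symA_apply, symA_apply, symA_apply, Matrix.sub_apply]
  ring

lemma quad_mulVec (M : Matrix (Fin n) (Fin n) ℝ) (y w : Fin n → ℝ) :
    ∑ x, ∑ x', y x * M x x' * w x' = ∑ x, y x * (M *ᵥ w) x := by
  refine Finset.sum_congr rfl fun x _ => ?_
  simp only [Matrix.mulVec, dotProduct, Finset.mul_sum]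
  exact Finset.sum_congr rfl fun x' _ => by ring

end mainhelpers
end St7

open St7 in
theorem stmt7 {n : ℕ} (π : Fin n → ℝ) (P Q : Matrix (Fin n) (Fin n) ℝ)
    (hπpos : ∀ x, 0 < π x) (hπsum : ∑ x, π x = 1)
    (hP : IsStochastic P) (hQ : IsStochastic Q)
    (hirrP : MatIrreducible P) (hirrQ : MatIrreducible Q)
    (hrevP : IsReversible π P) (hrevQ : IsReversible π Q) :
    EffDom π P Q ↔
      ∀ (μ : ℝ) (v : Fin n → ℝ), v ≠ 0 → (Q - P).mulVec v = μ • v → 0 ≤ μ := by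
  classical
  have hAP : (symA π P).IsHermitian := symA_herm π hπpos hrevP
  have hAQ : (symA π Q).IsHermitian := symA_herm π hπpos hrevQ
  have hrevQP : IsReversible π (Q - P) := by
    intro x y
    simp only [Matrix.sub_apply, mul_sub]
    rw [hrevP x y, hrevQ x y]
  have hC : (symA π (Q - P)).IsHermitian := symA_herm π hπpos hrevQP
  have hlleP : ∀ m, hAP.eigenvalues m ≤ 1 := fun m => (eig_bounds hπpos hP hrevP hAP m).2
  have hlleQ : ∀ m, hAQ.eigenvalues m ≤ 1 := fun m => (eig_bounds hπpos hQ hrevQ hAQ m).2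
  constructor
  · -- EffDom → eigenvalues nonneg
    intro hED μ v hv hvec
    by_contra hneg
    push_neg at hneg
    have hμne : μ ≠ 0 := ne_of_lt hneg
    set w : Fin n → ℝ := fun x => sqv π x * v x with hwdef
    -- eigen equation for the symmetrized matrix
    have hw : ∀ x, ∑ y, symA π (Q - P) x y * w y = μ * w x := by
      intro x
      have hvx := congrFun hvec x
      simp only [Matrix.mulVec, dotProduct, Pi.smul_apply, smul_eq_mul] at hvx
      calc ∑ y, symA π (Q - P) x y * w y
          = sqv π x * ∑ y, (Q - P) x y * v y := by
            rw [Finset.mul_sum]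
            refine Finset.sum_congr rfl fun y _ => ?_
            rw [symA_apply]
            show sqv π x * (Q - P) x y * (sqv π y)⁻¹ * (sqv π y * v y)
              = sqv π x * ((Q - P) x y * v y)
            have hcy : (sqv π y)⁻¹ * sqv π y = 1 := inv_mul_cancel₀ (sq_ne π hπpos y)
            calc sqv π x * (Q - P) x y * (sqv π y)⁻¹ * (sqv π y * v y)
                = sqv π x * ((Q - P) x y * v y) * ((sqv π y)⁻¹ * sqv π y) := by ring
              _ = sqv π x * ((Q - P) x y * v y) := by rw [hcy, mul_one]
        _ = sqv π x * (μ * v x) := by rw [hvx]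
        _ = μ * w x := by rw [hwdef]; ring
    -- w has positive norm
    obtain ⟨x0, hx0⟩ := Function.ne_iff.mp hv
    simp only [Pi.zero_apply] at hx0
    have hs2pos : 0 < ∑ x, w x ^ 2 := by
      refine Finset.sum_pos' (fun x _ => sq_nonneg _) ⟨x0, Finset.mem_univ x0, ?_⟩
      have hwx0 : w x0 ≠ 0 := mul_ne_zero (sq_ne π hπpos x0) hx0
      positivity
    -- quadratic form value
    have hformC : ∑ x, ∑ x', w x * symA π (Q - P) x x' * w x' = μ * ∑ x, w x ^ 2 := by
      rw [quad_mulVec]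
      rw [Finset.mul_sum]
      refine Finset.sum_congr rfl fun x _ => ?_
      have : (symA π (Q - P) *ᵥ w) x = μ * w x := by
        simp only [Matrix.mulVec, dotProduct]
        exact hw x
      rw [this]
      ring
    rw [symA_sub π P Q, quad_sub] at hformC
    -- define g
    set g : Fin n → ℝ := fun x => w x - ((symA π Q) *ᵥ w) x with hgdef
    have hAQs : (symA π Q) *ᵥ sqv π = sqv π := symA_fix π hπpos hQ.2
    have hg0 : ∑ x, sqv π x * g x = 0 := by
      rw [hgdef]
      simp only [mul_sub]
      rw [Finset.sum_sub_distrib]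
      have h1 : ∑ x, sqv π x * ((symA π Q) *ᵥ w) x = ∑ x, sqv π x * w x := by
        rw [sym_move hAQ (sqv π) w, Finset.sum_congr rfl fun x (_ : x ∈ Finset.univ) => by
          rw [congrFun hAQs x]]
      rw [h1, sub_self]
    -- f with gv π f = g
    set f : Fin n → ℝ := fun x => g x * (sqv π x)⁻¹ with hfdef
    have hmean : ∑ z, π z * f z = 0 := by
      rw [← hg0]
      refine Finset.sum_congr rfl fun z _ => ?_
      rw [hfdef]
      show π z * (g z * (sqv π z)⁻¹) = sqv π z * g z
      rw [← sq_sq π hπpos z]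
      have hcz : (sqv π z)⁻¹ * sqv π z = 1 := inv_mul_cancel₀ (sq_ne π hπpos z)
      calc sqv π z * sqv π z * (g z * (sqv π z)⁻¹) = sqv π z * g z * ((sqv π z)⁻¹ * sqv π z) := by ring
        _ = sqv π z * g z := by rw [hcz, mul_one]
    have hfg : gv π f = g := by
      funext x
      unfold gv
      rw [hmean, sub_zero, hfdef]
      show sqv π x * (g x * (sqv π x)⁻¹) = g x
      rw [mul_comm (g x), ← mul_assoc, mul_inv_cancel₀ (sq_ne π hπpos x), one_mul]
    -- apply EffDom
    have hTP := tendsto_varN hπpos hπsum hP hirrP hrevP hAP f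
    have hTQ := tendsto_varN hπpos hπsum hQ hirrQ hrevQ hAQ f
    have hle := hED f _ _ hTP hTQ
    rw [hfg] at hle
    have hbzP : ∀ m, hAP.eigenvalues m = 1 → bcoef hAP g m = 0 :=
      fun m hm => eig_one_bcoef hπpos hP hirrP hrevP hAP m hm g hg0
    have hbzQ : ∀ m, hAQ.eigenvalues m = 1 → bcoef hAQ g m = 0 :=
      fun m hm => eig_one_bcoef hπpos hQ hirrQ hrevQ hAQ m hm g hg0
    rw [vval_eq hAP g hbzP, vval_eq hAQ g hbzQ] at hle
    -- identify S_Q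
    have hbQ : ∀ m, bcoef hAQ g m = (1 - hAQ.eigenvalues m) * bcoef hAQ w m := by
      intro m
      rw [hgdef]
      exact bcoef_sub_mulVec hAQ w m
    have hSQ : ∑ m, (bcoef hAQ g m) ^ 2 * (1 - hAQ.eigenvalues m)⁻¹
        = (∑ x, w x ^ 2) - (∑ x, ∑ x', w x * symA π Q x x' * w x') := by
      rw [Finset.sum_congr rfl fun m (_ : m ∈ Finset.univ) => by rw [hbQ m]]
      exact sum_beta_sq hAQ w
    -- lower bound for S_P
    have hL1 := L1raw hAP hlleP g hbzP w
    have hgw : ∑ x, g x * w x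
        = (∑ x, w x ^ 2) - (∑ x, ∑ x', w x * symA π Q x x' * w x') := by
      rw [quad_mulVec, hgdef]
      rw [← Finset.sum_sub_distrib]
      refine Finset.sum_congr rfl fun x _ => ?_
      ring
    rw [hgw] at hL1
    have hformlt : μ * ∑ x, w x ^ 2 < 0 := mul_neg_of_neg_of_pos hneg hs2pos
    linarith
  · -- eigenvalues nonneg → EffDom
    intro heig f vP vQ hvP hvQ
    have hTP := tendsto_varN hπpos hπsum hP hirrP hrevP hAP f
    have hTQ := tendsto_varN hπpos hπsum hQ hirrQ hrevQ hAQ f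
    have hvPeq : vP = ∑ m, (bcoef hAP (gv π f) m) ^ 2 *
        ((1 + hAP.eigenvalues m) * (1 - hAP.eigenvalues m)⁻¹) := tendsto_nhds_unique hvP hTP
    have hvQeq : vQ = ∑ m, (bcoef hAQ (gv π f) m) ^ 2 *
        ((1 + hAQ.eigenvalues m) * (1 - hAQ.eigenvalues m)⁻¹) := tendsto_nhds_unique hvQ hTQ
    set g : Fin n → ℝ := gv π f with hgdef
    have hg0 : ∑ x, sqv π x * g x = 0 := gv_orth hπpos hπsum f
    have hbzP : ∀ m, hAP.eigenvalues m = 1 → bcoef hAP g m = 0 :=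
      fun m hm => eig_one_bcoef hπpos hP hirrP hrevP hAP m hm g hg0
    have hbzQ : ∀ m, hAQ.eigenvalues m = 1 → bcoef hAQ g m = 0 :=
      fun m hm => eig_one_bcoef hπpos hQ hirrQ hrevQ hAQ m hm g hg0
    rw [hvPeq, hvQeq, vval_eq hAP g hbzP, vval_eq hAQ g hbzQ]
    -- PSD of C
    have hCpsd : ∀ y : Fin n → ℝ, 0 ≤ ∑ x, ∑ x', y x * symA π (Q - P) x x' * y x' := by
      intro y
      rw [quad_one hC y]
      refine Finset.sum_nonneg fun m _ => ?_
      refine mul_nonneg (sq_nonneg _) ?_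
      obtain ⟨x1, hx1⟩ := evec_ne_zero hC m
      set φ : Fin n → ℝ := fun x => evec hC m x * (sqv π x)⁻¹ with hφdef
      refine heig (hC.eigenvalues m) φ ?_ ?_
      · intro h0
        have h1 : φ x1 = 0 := congrFun h0 x1
        rw [hφdef] at h1
        have h2 : evec hC m x1 * (sqv π x1)⁻¹ = 0 := h1
        rcases mul_eq_zero.mp h2 with h3 | h3
        · exact hx1 h3
        · exact inv_ne_zero (sq_ne π hπpos x1) h3
      · funext x
        have hu := congrFun (evec_mulVec hC m) x
        simp only [Matrix.mulVec, dotProduct] at hu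
        have h2 : ∑ y', symA π (Q - P) x y' * evec hC m y'
            = sqv π x * ∑ y', (Q - P) x y' * φ y' := by
          rw [Finset.mul_sum]
          refine Finset.sum_congr rfl fun y' _ => ?_
          rw [symA_apply, hφdef]
          show sqv π x * (Q - P) x y' * (sqv π y')⁻¹ * evec hC m y'
            = sqv π x * ((Q - P) x y' * (evec hC m y' * (sqv π y')⁻¹))
          ring
        rw [h2] at hu
        have h3 : evec hC m x = sqv π x * φ x := by
          rw [hφdef]
          show evec hC m x = sqv π x * (evec hC m x * (sqv π x)⁻¹)
          rw [mul_comm (sqv π x), mul_assoc, inv_mul_cancel₀ (sq_ne π hπpos x), mul_one]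
        rw [h3] at hu
        have h4 : sqv π x * ∑ y', (Q - P) x y' * φ y'
            = sqv π x * (hC.eigenvalues m * φ x) := by
          rw [hu]; ring
        have h5 := mul_left_cancel₀ (sq_ne π hπpos x) h4
        show ((Q - P) *ᵥ φ) x = (hC.eigenvalues m • φ) x
        simp only [Matrix.mulVec, dotProduct, Pi.smul_apply, smul_eq_mul]
        exact h5
    -- assemble
    set ystar : Fin n → ℝ :=
      fun x => ∑ m, (bcoef hAP g m * (1 - hAP.eigenvalues m)⁻¹) * evec hAP m x with hysdef
    have hL2 := L2raw hAP g hbzP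
    have hL1 := L1raw hAQ hlleQ g hbzQ
      (fun x => ∑ m, (bcoef hAP g m * (1 - hAP.eigenvalues m)⁻¹) * evec hAP m x)
    have h0 := hCpsd (fun x => ∑ m, (bcoef hAP g m * (1 - hAP.eigenvalues m)⁻¹) * evec hAP m x)
    rw [symA_sub π P Q, quad_sub] at h0
    linarith
end

section
/- Let P, P', Q be reversible with respect to π, with P and P' irreducible, and let 0 < a < 1. Then P' efficiency-dominates P if and only if aP' + (1−a)Q efficiency-dominates aP + (1−a)Q. -/
open Matrix BigOperators Filter

namespace Stmt9Aux
variable {n : ℕ}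

def IsStochastic {n : ℕ} (P : Matrix (Fin n) (Fin n) ℝ) : Prop :=
  (∀ x y, 0 ≤ P x y) ∧ ∀ x, ∑ y, P x y = 1

def IsReversible {n : ℕ} (π : Fin n → ℝ) (P : Matrix (Fin n) (Fin n) ℝ) : Prop :=
  ∀ x y, π x * P x y = π y * P y x

def MatIrreducible {n : ℕ} (P : Matrix (Fin n) (Fin n) ℝ) : Prop :=
  ∀ x y, ∃ k : ℕ, 0 < (P ^ k) x y

/-- symmetrized matrix -/
noncomputable def Smat (π : Fin n → ℝ) (P : Matrix (Fin n) (Fin n) ℝ) : Matrix (Fin n) (Fin n) ℝ :=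
  Matrix.of fun x y => Real.sqrt (π x) * P x y / Real.sqrt (π y)

noncomputable def wvec (π : Fin n → ℝ) : Fin n → ℝ := fun x => Real.sqrt (π x)

variable {π : Fin n → ℝ} {P : Matrix (Fin n) (Fin n) ℝ}

lemma sqrt_pos' (hπpos : ∀ x, 0 < π x) (x : Fin n) : 0 < Real.sqrt (π x) :=
  Real.sqrt_pos.2 (hπpos x)

lemma Smat_herm (hπpos : ∀ x, 0 < π x) (hrev : IsReversible π P) :
    (Smat π P).IsHermitian := by
  apply Matrix.IsHermitian.ext
  intro x y
  have h1 := (sqrt_pos' hπpos x).ne'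
  have h2 := (sqrt_pos' hπpos y).ne'
  have hx := (hπpos x).ne'
  have hy := (hπpos y).ne'
  have hrxy := hrev x y
  have hsx : Real.sqrt (π x) * Real.sqrt (π x) = π x := Real.mul_self_sqrt (hπpos x).le
  have hsy : Real.sqrt (π y) * Real.sqrt (π y) = π y := Real.mul_self_sqrt (hπpos y).le
  simp only [Smat, Matrix.of_apply, RCLike.star_def, conj_trivial]
  field_simp
  linear_combination P y x * hsy - P x y * hsx - hrxy

lemma Smat_pow (hπpos : ∀ x, 0 < π x) (k : ℕ) :
    (Smat π P) ^ k = Matrix.of fun x y => Real.sqrt (π x) * (P ^ k) x y / Real.sqrt (π y) := by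
  induction k with
  | zero =>
    ext x y
    by_cases h : x = y
    · subst h; simp [Matrix.one_apply_eq, (sqrt_pos' hπpos x).ne']
    · simp [Matrix.one_apply_ne h, h]
  | succ k ih =>
    ext x y
    rw [pow_succ, pow_succ, ih]
    simp only [Matrix.mul_apply, Matrix.of_apply, Smat]
    rw [Finset.mul_sum, Finset.sum_div]
    apply Finset.sum_congr rfl
    intro z _
    have hz := (sqrt_pos' hπpos z).ne'
    field_simp

lemma stoch_pow (hP : IsStochastic P) (k : ℕ) : IsStochastic (P ^ k) := by
  induction k with
  | zero =>
    constructor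
    · intro x y
      by_cases h : x = y
      · subst h; simp [Matrix.one_apply_eq]
      · simp [pow_zero, Matrix.one_apply_ne h]
    · intro x; simp [pow_zero, Matrix.one_apply]
  | succ k ih =>
    constructor
    · intro x y
      rw [pow_succ, Matrix.mul_apply]
      exact Finset.sum_nonneg fun z _ => mul_nonneg (ih.1 x z) (hP.1 z y)
    · intro x
      rw [pow_succ]
      simp only [Matrix.mul_apply]
      rw [Finset.sum_comm]
      have : ∀ z ∈ Finset.univ, ∑ y, (P ^ k) x z * P z y = (P ^ k) x z := by
        intro z _
        rw [← Finset.mul_sum, hP.2 z, mul_one]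
      rw [Finset.sum_congr rfl this, ih.2 x]

lemma mulVec_pow_fixed (h : P *ᵥ v = v) (k : ℕ) : (P ^ k) *ᵥ v = v := by
  induction k with
  | zero => simp
  | succ k ih => rw [pow_succ, ← Matrix.mulVec_mulVec, h, ih]

/-- Perron: fixed vectors of irreducible stochastic matrices are constant. -/
lemma perron_const (hP : IsStochastic P) (hirr : MatIrreducible P)
    {v : Fin n → ℝ} (hfix : P *ᵥ v = v) (x y : Fin n) : v x = v y := by
  -- take x0 maximizing v
  rcases Nat.eq_zero_or_pos n with hn | hn
  · exact absurd x.2 (by omega)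
  have hne : (Finset.univ : Finset (Fin n)).Nonempty := ⟨x, Finset.mem_univ x⟩
  obtain ⟨x0, -, hx0⟩ := Finset.exists_max_image Finset.univ v hne
  have key : ∀ z, v z = v x0 := by
    intro z
    obtain ⟨k, hk⟩ := hirr x0 z
    have hPk := stoch_pow hP k
    have hfk : (P ^ k) *ᵥ v = v := mulVec_pow_fixed hfix k
    have hsum : ∑ u, (P ^ k) x0 u * (v x0 - v u) = 0 := by
      have h1 : ∑ u, (P ^ k) x0 u * v x0 = v x0 := by
        rw [← Finset.sum_mul, hPk.2 x0, one_mul]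
      have h2 : ∑ u, (P ^ k) x0 u * v u = v x0 := by
        have := congrFun hfk x0
        simpa [Matrix.mulVec, dotProduct] using this
      simp only [mul_sub]
      rw [Finset.sum_sub_distrib, h1, h2, sub_self]
    have hterm : ∀ u ∈ Finset.univ, 0 ≤ (P ^ k) x0 u * (v x0 - v u) := by
      intro u _
      exact mul_nonneg (hPk.1 x0 u) (sub_nonneg.2 (hx0 u (Finset.mem_univ u)))
    have := (Finset.sum_eq_zero_iff_of_nonneg hterm).1 hsum z (Finset.mem_univ z)
    rcases mul_eq_zero.1 this with h | h
    · exact absurd h hk.ne'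
    · linarith [sub_eq_zero.1 h]
  rw [key x, key y]

lemma Smat_mulVec_wvec (hπpos : ∀ x, 0 < π x) (hP : IsStochastic P) :
    Smat π P *ᵥ wvec π = wvec π := by
  funext x
  simp only [Matrix.mulVec, dotProduct, Smat, Matrix.of_apply, wvec]
  have : ∀ y ∈ Finset.univ, Real.sqrt (π x) * P x y / Real.sqrt (π y) * Real.sqrt (π y)
      = Real.sqrt (π x) * P x y := by
    intro y _
    rw [div_mul_cancel₀ _ (sqrt_pos' hπpos y).ne']
  rw [Finset.sum_congr rfl this, ← Finset.mul_sum, hP.2 x, mul_one]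

/-- the centered, √π-weighted vector attached to f -/
noncomputable def uvec (π f : Fin n → ℝ) : Fin n → ℝ :=
  fun x => Real.sqrt (π x) * (f x - ∑ z, π z * f z)

lemma wvec_dot_uvec (hπpos : ∀ x, 0 < π x) (hπsum : ∑ x, π x = 1) (f : Fin n → ℝ) :
    wvec π ⬝ᵥ uvec π f = 0 := by
  simp only [dotProduct, wvec, uvec]
  have : ∀ x ∈ Finset.univ, Real.sqrt (π x) * (Real.sqrt (π x) * (f x - ∑ z, π z * f z))
      = π x * f x - π x * (∑ z, π z * f z) := by
    intro x _
    rw [← mul_assoc, Real.mul_self_sqrt (hπpos x).le]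
    ring
  rw [Finset.sum_congr rfl this, Finset.sum_sub_distrib, ← Finset.sum_mul, hπsum, one_mul,
    sub_self]

lemma autocov_eq_dot (hπpos : ∀ x, 0 < π x) (f : Fin n → ℝ) (k : ℕ) :
    (∑ x, ∑ y, π x * (f x - ∑ z, π z * f z) * (P ^ k) x y * (f y - ∑ z, π z * f z))
      = uvec π f ⬝ᵥ ((Smat π P ^ k) *ᵥ uvec π f) := by
  rw [Smat_pow hπpos]
  simp only [dotProduct, Matrix.mulVec, uvec, Matrix.of_apply]
  apply Finset.sum_congr rfl
  intro x _
  rw [Finset.mul_sum]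
  apply Finset.sum_congr rfl
  intro y _
  have hx : Real.sqrt (π x) * Real.sqrt (π x) = π x := Real.mul_self_sqrt (hπpos x).le
  have hy := (sqrt_pos' hπpos y).ne'
  field_simp
  linear_combination (-((f x - ∑ z, π z * f z) * (P ^ k) x y * (f y - ∑ z, π z * f z))) * hx

variable {A : Matrix (Fin n) (Fin n) ℝ}

section Eigen
variable (hA : A.IsHermitian)

noncomputable def evec (j : Fin n) : Fin n → ℝ := ⇑(hA.eigenvectorBasis j)

noncomputable def coordv (u : Fin n → ℝ) (j : Fin n) : ℝ := evec hA j ⬝ᵥ u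

lemma inner_eq_dot (u v : EuclideanSpace ℝ (Fin n)) : inner ℝ u v = (⇑u : Fin n → ℝ) ⬝ᵥ ⇑v := by
  simp [PiLp.inner_apply, RCLike.inner_apply, dotProduct, mul_comm]

lemma evec_dot_evec (j m : Fin n) : evec hA j ⬝ᵥ evec hA m = if j = m then 1 else 0 := by
  have h := hA.eigenvectorBasis.orthonormal
  rw [orthonormal_iff_ite] at h
  have := h j m
  rw [inner_eq_dot] at this
  exact_mod_cast this

lemma sum_coord_smul (u : Fin n → ℝ) : ∑ j, coordv hA u j • evec hA j = u := by
  have h := hA.eigenvectorBasis.sum_repr (WithLp.toLp 2 u : EuclideanSpace ℝ (Fin n))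
  have h2 : ∀ j, hA.eigenvectorBasis.repr (WithLp.toLp 2 u : EuclideanSpace ℝ (Fin n)) j = coordv hA u j := by
    intro j
    rw [hA.eigenvectorBasis.repr_apply_apply, inner_eq_dot]
    rfl
  simp only [h2] at h
  simpa [evec] using congrArg WithLp.ofLp h

noncomputable def eval' (j : Fin n) : ℝ := hA.eigenvalues j

lemma pow_mulVec_evec (k : ℕ) (j : Fin n) :
    (A ^ k) *ᵥ evec hA j = (eval' hA j ^ k) • evec hA j := by
  induction k with
  | zero => simp
  | succ k ih =>
    rw [pow_succ, ← Matrix.mulVec_mulVec]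
    have := hA.mulVec_eigenvectorBasis j
    rw [show A *ᵥ evec hA j = eval' hA j • evec hA j from this] at *
    rw [Matrix.mulVec_smul, ih, pow_succ]
    rw [smul_smul, mul_comm]

lemma dot_sum' {m : ℕ} (u : Fin n → ℝ) (g : Fin m → Fin n → ℝ) :
    u ⬝ᵥ (∑ j, g j) = ∑ j, u ⬝ᵥ g j := by
  simp only [dotProduct, Finset.sum_apply, Finset.mul_sum]
  exact Finset.sum_comm

lemma sum_dot' {m : ℕ} (u : Fin n → ℝ) (g : Fin m → Fin n → ℝ) :
    (∑ j, g j) ⬝ᵥ u = ∑ j, g j ⬝ᵥ u := by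
  simp only [dotProduct, Finset.sum_apply, Finset.sum_mul]
  exact Finset.sum_comm

lemma dot_pow_mulVec (u t : Fin n → ℝ) (k : ℕ) :
    u ⬝ᵥ ((A ^ k) *ᵥ t) = ∑ j, coordv hA u j * coordv hA t j * eval' hA j ^ k := by
  have h1 : (A ^ k) *ᵥ t = ∑ m, (coordv hA t m * eval' hA m ^ k) • evec hA m := by
    conv_lhs => rw [← sum_coord_smul hA t]
    rw [← Matrix.mulVecLin_apply, map_sum]
    apply Finset.sum_congr rfl
    intro m _
    rw [_root_.map_smul, Matrix.mulVecLin_apply, pow_mulVec_evec hA k m, smul_smul, mul_comm]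
  conv_lhs => rw [h1, ← sum_coord_smul hA u]
  rw [sum_dot']
  apply Finset.sum_congr rfl
  intro j _
  rw [dot_sum']
  rw [Finset.sum_eq_single j]
  · rw [smul_dotProduct, dotProduct_smul, evec_dot_evec hA j j, if_pos rfl]
    simp [coordv, mul_comm, mul_assoc]
    ring
  · intro m _ hm
    rw [smul_dotProduct, dotProduct_smul, evec_dot_evec hA j m, if_neg (Ne.symm hm)]
    simp
  · intro h; exact absurd (Finset.mem_univ j) h

lemma dot_eq_sum_coord (u t : Fin n → ℝ) :
    u ⬝ᵥ t = ∑ j, coordv hA u j * coordv hA t j := by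
  have := dot_pow_mulVec hA u t 0
  simpa using this

lemma coordv_mulVec (t : Fin n → ℝ) (j : Fin n) :
    coordv hA (A *ᵥ t) j = eval' hA j * coordv hA t j := by
  unfold coordv
  rw [Matrix.dotProduct_mulVec]
  have : evec hA j ᵥ* A = eval' hA j • evec hA j := by
    have h := hA.mulVec_eigenvectorBasis j
    have hsymm : A.transpose = A := by
      have := hA
      unfold Matrix.IsHermitian at this
      ext x y
      have h2 := congrFun (congrFun this x) y
      simpa [Matrix.conjTranspose_apply] using h2
    rw [← Matrix.mulVec_transpose, hsymm]
    exact h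
  rw [this, smul_dotProduct]
  rfl

lemma coordv_smul_add (u v : Fin n → ℝ) (c : ℝ) (j : Fin n) :
    coordv hA (c • u + v) j = c * coordv hA u j + coordv hA v j := by
  unfold coordv
  rw [dotProduct_add, dotProduct_smul]
  rfl

lemma coordv_sum_smul_evec (g : Fin n → ℝ) (j : Fin n) :
    coordv hA (∑ m, g m • evec hA m) j = g j := by
  unfold coordv
  rw [dot_sum']
  rw [Finset.sum_eq_single j]
  · rw [dotProduct_smul, evec_dot_evec hA j j, if_pos rfl]; simp
  · intro m _ hm
    rw [dotProduct_smul, evec_dot_evec hA j m, if_neg (Ne.symm hm)]; simp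
  · intro h; exact absurd (Finset.mem_univ j) h

end Eigen



lemma geo_aux {l : ℝ} (hl : l ≠ 1) (N : ℕ) :
    ∑ j ∈ Finset.range N, l ^ (N - j) = l * ((l ^ N - 1) / (l - 1)) := by
  rw [← Finset.sum_range_reflect]
  have : ∀ j ∈ Finset.range N, l ^ (N - (N - 1 - j)) = l * l ^ j := by
    intro j hj
    rw [Finset.mem_range] at hj
    rw [show N - (N - 1 - j) = j + 1 by omega, pow_succ, mul_comm]
  rw [Finset.sum_congr rfl this, ← Finset.mul_sum, geom_sum_eq hl]

lemma closed_form {l : ℝ} (hl : l ≠ 1) (N : ℕ) :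
    ∑ i ∈ Finset.range N, ∑ j ∈ Finset.range N, l ^ (max i j - min i j)
      = N * (1 + l) / (1 - l) - 2 * l * (1 - l ^ N) / (1 - l) ^ 2 := by
  have h1 : (1 : ℝ) - l ≠ 0 := sub_ne_zero.2 (Ne.symm hl)
  induction N with
  | zero => simp
  | succ N ih =>
    rw [Finset.sum_range_succ]
    have hrow : ∀ i ∈ Finset.range N, ∑ j ∈ Finset.range (N + 1), l ^ (max i j - min i j)
        = (∑ j ∈ Finset.range N, l ^ (max i j - min i j)) + l ^ (N - i) := by
      intro i hi
      rw [Finset.mem_range] at hi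
      rw [Finset.sum_range_succ]
      congr 2
      omega
    rw [Finset.sum_congr rfl hrow, Finset.sum_add_distrib, ih]
    have hlast : ∑ j ∈ Finset.range (N + 1), l ^ (max N j - min N j)
        = (∑ j ∈ Finset.range N, l ^ (N - j)) + 1 := by
      rw [Finset.sum_range_succ]
      congr 1
      · apply Finset.sum_congr rfl
        intro j hj
        rw [Finset.mem_range] at hj
        congr 1
        omega
      · simp
    rw [hlast, geo_aux hl]
    have h2 : l - 1 ≠ 0 := sub_ne_zero.2 hl
    push_cast
    field_simp
    ring

lemma tendsto_TN {l : ℝ} (h1 : -1 ≤ l) (h2 : l < 1) :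
    Tendsto (fun N : ℕ => ((N : ℝ))⁻¹ * ∑ i ∈ Finset.range N, ∑ j ∈ Finset.range N,
      l ^ (max i j - min i j)) atTop (nhds ((1 + l) / (1 - l))) := by
  have hl : l ≠ 1 := h2.ne
  have hne : (1 : ℝ) - l ≠ 0 := sub_ne_zero.2 (Ne.symm hl)
  have habs : |l| ≤ 1 := abs_le.2 ⟨h1, h2.le⟩
  have hpow : Tendsto (fun N : ℕ => l ^ N * ((N : ℝ))⁻¹) atTop (nhds 0) := by
    apply squeeze_zero_norm (fun N => ?_) tendsto_inv_atTop_nhds_zero_nat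
    rcases Nat.eq_zero_or_pos N with h | h
    · subst h; simp
    · have hN : (0:ℝ) < N := by exact_mod_cast h
      rw [norm_mul, norm_pow, norm_inv]
      have : ‖l‖ ^ N ≤ 1 := pow_le_one₀ (norm_nonneg l) habs
      calc ‖l‖ ^ N * ‖(N:ℝ)‖⁻¹ ≤ 1 * ‖(N:ℝ)‖⁻¹ := by
            apply mul_le_mul_of_nonneg_right this (by positivity)
        _ = ((N:ℝ))⁻¹ := by rw [one_mul, Real.norm_eq_abs, abs_of_pos hN]
  have hinv : Tendsto (fun N : ℕ => ((N : ℝ))⁻¹) atTop (nhds 0) :=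
    tendsto_inv_atTop_nhds_zero_nat
  have hmain : Tendsto (fun N : ℕ => (1 + l) / (1 - l)
      - 2 * l / (1 - l) ^ 2 * ((N : ℝ))⁻¹ + 2 * l / (1 - l) ^ 2 * (l ^ N * ((N : ℝ))⁻¹))
      atTop (nhds ((1 + l) / (1 - l))) := by
    have := ((tendsto_const_nhds (x := (1 + l) / (1 - l)) (f := atTop (α := ℕ))).sub
      (hinv.const_mul (2 * l / (1 - l) ^ 2))).add (hpow.const_mul (2 * l / (1 - l) ^ 2))
    simpa using this
  apply hmain.congr'
  filter_upwards [eventually_ge_atTop 1] with N hN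
  have hN0 : ((N : ℝ)) ≠ 0 := by
    have : (0:ℝ) < N := by exact_mod_cast hN
    exact this.ne'
  rw [closed_form hl N]
  field_simp
  ring


section PerMatrix
variable {π : Fin n → ℝ} {P : Matrix (Fin n) (Fin n) ℝ}

lemma P_mulVec_of_S (hπpos : ∀ x, 0 < π x) {v : Fin n → ℝ} {l : ℝ}
    (h : Smat π P *ᵥ v = l • v) :
    P *ᵥ (fun x => v x / Real.sqrt (π x)) = l • (fun x => v x / Real.sqrt (π x)) := by
  funext x
  have hx := congrFun h x
  simp only [Matrix.mulVec, dotProduct, Smat, Matrix.of_apply, Pi.smul_apply,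
    smul_eq_mul] at hx ⊢
  have hsx := (sqrt_pos' hπpos x).ne'
  have hterm : ∀ y ∈ Finset.univ, P x y * (v y / Real.sqrt (π y))
      = (Real.sqrt (π x) * P x y / Real.sqrt (π y) * v y) / Real.sqrt (π x) := by
    intro y _
    have hsy := (sqrt_pos' hπpos y).ne'
    field_simp
  rw [Finset.sum_congr rfl hterm, ← Finset.sum_div, hx, mul_div_assoc]

lemma eval_abs_le (hπpos : ∀ x, 0 < π x) (hP : IsStochastic P)
    (hS : (Smat π P).IsHermitian) (j : Fin n) : |eval' hS j| ≤ 1 := by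
  set v := evec hS j with hv
  have hSv : Smat π P *ᵥ v = eval' hS j • v := by
    have := pow_mulVec_evec hS 1 j
    simpa using this
  set h : Fin n → ℝ := fun x => v x / Real.sqrt (π x) with hh
  have hPh : P *ᵥ h = eval' hS j • h := P_mulVec_of_S hπpos hSv
  have hvne : v ≠ 0 := by
    have := hS.eigenvectorBasis.orthonormal.ne_zero j
    intro hc
    apply this
    ext x
    exact congrFun hc x
  have hhne : ∃ x, h x ≠ 0 := by
    by_contra hc
    push_neg at hc
    apply hvne
    funext x
    have := hc x
    rw [hh] at this
    simp only at this
    have hsx := (sqrt_pos' hπpos x).ne'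
    field_simp at this
    simpa using this
  obtain ⟨x1, hx1⟩ := hhne
  have hne : (Finset.univ : Finset (Fin n)).Nonempty := ⟨x1, Finset.mem_univ x1⟩
  obtain ⟨x0, -, hx0⟩ := Finset.exists_max_image Finset.univ (fun x => |h x|) hne
  have hx0pos : 0 < |h x0| := lt_of_lt_of_le (abs_pos.2 hx1) (hx0 x1 (Finset.mem_univ x1))
  have hineq : |eval' hS j| * |h x0| ≤ |h x0| := by
    have h1 : (P *ᵥ h) x0 = eval' hS j * h x0 := by
      rw [hPh]; rfl
    have h2 : |(P *ᵥ h) x0| ≤ |h x0| := by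
      simp only [Matrix.mulVec, dotProduct]
      calc |∑ y, P x0 y * h y| ≤ ∑ y, |P x0 y * h y| := Finset.abs_sum_le_sum_abs _ _
        _ ≤ ∑ y, P x0 y * |h x0| := by
            apply Finset.sum_le_sum
            intro y _
            rw [abs_mul, abs_of_nonneg (hP.1 x0 y)]
            exact mul_le_mul_of_nonneg_left (hx0 y (Finset.mem_univ y)) (hP.1 x0 y)
        _ = |h x0| := by rw [← Finset.sum_mul, hP.2 x0, one_mul]
    rw [h1, abs_mul] at h2
    exact h2
  exact le_of_mul_le_mul_right (by linarith [hineq]) hx0pos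

lemma evec_at_one (hπpos : ∀ x, 0 < π x) (hP : IsStochastic P) (hirr : MatIrreducible P)
    (hS : (Smat π P).IsHermitian) {j : Fin n} (hj : eval' hS j = 1) :
    ∃ s : ℝ, evec hS j = s • wvec π := by
  set v := evec hS j with hv
  have hSv : Smat π P *ᵥ v = v := by
    have := pow_mulVec_evec hS 1 j
    rw [hj] at this
    simpa using this
  set h : Fin n → ℝ := fun x => v x / Real.sqrt (π x) with hh
  have hPh : P *ᵥ h = h := by
    have := P_mulVec_of_S hπpos (v := v) (l := 1) (by simpa using hSv)
    simpa using this
  rcases Nat.eq_zero_or_pos n with hn | hn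
  · exact ⟨0, by funext x; exact absurd x.2 (by omega)⟩
  have x1 : Fin n := ⟨0, hn⟩
  refine ⟨h x1, ?_⟩
  funext x
  have hconst := perron_const hP hirr hPh x x1
  have hsx := (sqrt_pos' hπpos x).ne'
  simp only [Pi.smul_apply, smul_eq_mul, wvec]
  rw [← hconst, hh]
  field_simp

lemma coordv_eq_zero_at_one (hπpos : ∀ x, 0 < π x) (hP : IsStochastic P)
    (hirr : MatIrreducible P) (hS : (Smat π P).IsHermitian) {j : Fin n}
    (hj : eval' hS j = 1) {u : Fin n → ℝ} (hu : wvec π ⬝ᵥ u = 0) :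
    coordv hS u j = 0 := by
  obtain ⟨s, hs⟩ := evec_at_one hπpos hP hirr hS hj
  unfold coordv
  rw [hs, smul_dotProduct, hu, smul_zero]

noncomputable def Lval (hS : (Smat π P).IsHermitian) (u : Fin n → ℝ) : ℝ :=
  ∑ j, if eval' hS j = 1 then 0
    else (coordv hS u j) ^ 2 * ((1 + eval' hS j) / (1 - eval' hS j))

noncomputable def Bq (hS : (Smat π P).IsHermitian) (u : Fin n → ℝ) : ℝ :=
  ∑ j, if eval' hS j = 1 then 0 else (coordv hS u j) ^ 2 / (1 - eval' hS j)

noncomputable def varN (π : Fin n → ℝ) (P : Matrix (Fin n) (Fin n) ℝ)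
    (f : Fin n → ℝ) (N : ℕ) : ℝ :=
  ((N : ℝ))⁻¹ * ∑ i ∈ Finset.range N, ∑ j ∈ Finset.range N,
    (∑ x, ∑ y, π x * (f x - ∑ z, π z * f z) * (P ^ (max i j - min i j)) x y
      * (f y - ∑ z, π z * f z))

lemma varN_eq (hπpos : ∀ x, 0 < π x) (hS : (Smat π P).IsHermitian) (f : Fin n → ℝ) (N : ℕ) :
    varN π P f N = ∑ l, (coordv hS (uvec π f) l) ^ 2 *
      (((N : ℝ))⁻¹ * ∑ i ∈ Finset.range N, ∑ j ∈ Finset.range N,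
        (eval' hS l) ^ (max i j - min i j)) := by
  unfold varN
  have hac : ∀ i ∈ Finset.range N, ∀ j ∈ Finset.range N,
      (∑ x, ∑ y, π x * (f x - ∑ z, π z * f z) * (P ^ (max i j - min i j)) x y
        * (f y - ∑ z, π z * f z))
      = ∑ l, (coordv hS (uvec π f) l) ^ 2 * (eval' hS l) ^ (max i j - min i j) := by
    intro i _ j _
    rw [autocov_eq_dot hπpos f (max i j - min i j), dot_pow_mulVec hS]
    apply Finset.sum_congr rfl
    intro l _
    ring
  rw [Finset.sum_congr rfl (fun i hi => Finset.sum_congr rfl (hac i hi))]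
  rw [Finset.sum_congr rfl (fun i (_ : i ∈ Finset.range N) => Finset.sum_comm), Finset.sum_comm,
    Finset.mul_sum]
  apply Finset.sum_congr rfl
  intro l _
  simp only [← Finset.mul_sum]
  ring

lemma tendsto_varN (hπpos : ∀ x, 0 < π x) (hπsum : ∑ x, π x = 1)
    (hP : IsStochastic P) (hirr : MatIrreducible P)
    (hS : (Smat π P).IsHermitian) (f : Fin n → ℝ) :
    Tendsto (varN π P f) atTop (nhds (Lval hS (uvec π f))) := by
  have h0 : ∀ N, varN π P f N = ∑ l, (coordv hS (uvec π f) l) ^ 2 *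
      (((N : ℝ))⁻¹ * ∑ i ∈ Finset.range N, ∑ j ∈ Finset.range N,
        (eval' hS l) ^ (max i j - min i j)) := varN_eq hπpos hS f
  rw [show varN π P f = fun (N : ℕ) => ∑ l, (coordv hS (uvec π f) l) ^ 2 *
      (((N : ℝ))⁻¹ * ∑ i ∈ Finset.range N, ∑ j ∈ Finset.range N,
        (eval' hS l) ^ (max i j - min i j)) from funext h0]
  unfold Lval
  apply tendsto_finset_sum
  intro l _
  by_cases hl : eval' hS l = 1
  · have hc : coordv hS (uvec π f) l = 0 :=
      coordv_eq_zero_at_one hπpos hP hirr hS hl (wvec_dot_uvec hπpos hπsum f)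
    rw [if_pos hl]
    simp only [hc]
    simpa using tendsto_const_nhds
  · rw [if_neg hl]
    have habs := eval_abs_le hπpos hP hS l
    rw [abs_le] at habs
    exact (tendsto_TN habs.1 (lt_of_le_of_ne habs.2 hl)).const_mul _

lemma dot_one_sub_mulVec (hS : (Smat π P).IsHermitian) (u t : Fin n → ℝ) :
    u ⬝ᵥ (((1 : Matrix (Fin n) (Fin n) ℝ) - Smat π P) *ᵥ t)
      = ∑ j, coordv hS u j * coordv hS t j * (1 - eval' hS j) := by
  rw [Matrix.sub_mulVec, Matrix.one_mulVec, dotProduct_sub]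
  have h0 := dot_pow_mulVec hS u t 0
  have h1 := dot_pow_mulVec hS u t 1
  simp only [pow_zero, pow_one] at h0 h1
  rw [h1]
  rw [show u ⬝ᵥ t = ∑ j, coordv hS u j * coordv hS t j from by simpa using h0]
  rw [← Finset.sum_sub_distrib]
  apply Finset.sum_congr rfl
  intro j _
  ring

lemma coordv_one_sub (hS : (Smat π P).IsHermitian) (t : Fin n → ℝ) (j : Fin n) :
    coordv hS (((1 : Matrix (Fin n) (Fin n) ℝ) - Smat π P) *ᵥ t) j
      = (1 - eval' hS j) * coordv hS t j := by
  rw [Matrix.sub_mulVec, Matrix.one_mulVec]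
  unfold coordv
  rw [dotProduct_sub]
  have := coordv_mulVec hS t j
  unfold coordv at this
  rw [this]
  ring

lemma ineq_C1 (hπpos : ∀ x, 0 < π x) (hP : IsStochastic P) (hirr : MatIrreducible P)
    (hS : (Smat π P).IsHermitian) {u : Fin n → ℝ} (hu : wvec π ⬝ᵥ u = 0) (t : Fin n → ℝ) :
    2 * (u ⬝ᵥ t) - t ⬝ᵥ (((1 : Matrix (Fin n) (Fin n) ℝ) - Smat π P) *ᵥ t) ≤ Bq hS u := by
  rw [dot_one_sub_mulVec hS t t, dot_eq_sum_coord hS u t, Finset.mul_sum,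
    ← Finset.sum_sub_distrib]
  unfold Bq
  apply Finset.sum_le_sum
  intro j _
  set c := coordv hS u j
  set d := coordv hS t j
  by_cases hj : eval' hS j = 1
  · rw [if_pos hj, hj]
    have hc : c = 0 := coordv_eq_zero_at_one hπpos hP hirr hS hj hu
    rw [hc]
    ring_nf
    simp
  · rw [if_neg hj]
    have habs := eval_abs_le hπpos hP hS j
    rw [abs_le] at habs
    have he : 0 < 1 - eval' hS j := by
      have := lt_of_le_of_ne habs.2 hj
      linarith
    set e := 1 - eval' hS j
    have key : 2 * c * d * e ≤ c ^ 2 + e ^ 2 * d ^ 2 := by nlinarith [sq_nonneg (c - e * d)]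
    rw [show (2 : ℝ) * (c * d) - d * d * e = (2 * c * d * e - e ^ 2 * d ^ 2) / e from by
      field_simp]
    rw [div_le_div_iff₀ he he]
    nlinarith [key, he]

lemma ineq_C3 (hπpos : ∀ x, 0 < π x) (hP : IsStochastic P) (hirr : MatIrreducible P)
    (hS : (Smat π P).IsHermitian) {u t : Fin n → ℝ} (hu : wvec π ⬝ᵥ u = 0)
    (ht : wvec π ⬝ᵥ t = 0) :
    2 * (t ⬝ᵥ u) - Bq hS u ≤ t ⬝ᵥ (((1 : Matrix (Fin n) (Fin n) ℝ) - Smat π P) *ᵥ t) := by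
  rw [dot_one_sub_mulVec hS t t, dot_eq_sum_coord hS t u, Finset.mul_sum]
  unfold Bq
  rw [← Finset.sum_sub_distrib]
  apply Finset.sum_le_sum
  intro j _
  set c := coordv hS u j with hcdef
  set d := coordv hS t j with hddef
  by_cases hj : eval' hS j = 1
  · have hc : c = 0 := coordv_eq_zero_at_one hπpos hP hirr hS hj hu
    have hd : d = 0 := coordv_eq_zero_at_one hπpos hP hirr hS hj ht
    rw [if_pos hj, hc, hd]
    simp
  · rw [if_neg hj]
    have habs := eval_abs_le hπpos hP hS j
    rw [abs_le] at habs
    have he : 0 < 1 - eval' hS j := by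
      have := lt_of_le_of_ne habs.2 hj
      linarith
    set e := 1 - eval' hS j
    have key : 2 * d * c * e ≤ c ^ 2 + e ^ 2 * d ^ 2 := by nlinarith [sq_nonneg (c - e * d)]
    have hce : c ^ 2 / e * e = c ^ 2 := div_mul_cancel₀ _ he.ne'
    have hexp : (2 * (d * c) - c ^ 2 / e) * e = 2 * d * c * e - c ^ 2 := by
      rw [sub_mul, hce]; ring
    have h3 : (2 * (d * c) - c ^ 2 / e) * e ≤ (d * d * e) * e := by rw [hexp]; nlinarith [key]
    exact le_of_mul_le_mul_right h3 he

lemma ineq_C2 (hπpos : ∀ x, 0 < π x) (hP : IsStochastic P)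
    (hS : (Smat π P).IsHermitian) (t : Fin n → ℝ) :
    Bq hS (((1 : Matrix (Fin n) (Fin n) ℝ) - Smat π P) *ᵥ t)
      = t ⬝ᵥ (((1 : Matrix (Fin n) (Fin n) ℝ) - Smat π P) *ᵥ t) := by
  rw [dot_one_sub_mulVec hS t t]
  unfold Bq
  apply Finset.sum_congr rfl
  intro j _
  rw [coordv_one_sub hS t j]
  by_cases hj : eval' hS j = 1
  · rw [if_pos hj, hj]
    ring
  · rw [if_neg hj]
    have he : (1 : ℝ) - eval' hS j ≠ 0 := sub_ne_zero.2 (Ne.symm hj)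
    field_simp

lemma ineq_C4 (hπpos : ∀ x, 0 < π x) (hP : IsStochastic P) (hirr : MatIrreducible P)
    (hS : (Smat π P).IsHermitian) {u : Fin n → ℝ} (hu : wvec π ⬝ᵥ u = 0) :
    ∃ t : Fin n → ℝ, 2 * (u ⬝ᵥ t) - t ⬝ᵥ (((1 : Matrix (Fin n) (Fin n) ℝ) - Smat π P) *ᵥ t)
      = Bq hS u := by
  set g : Fin n → ℝ := fun j => if eval' hS j = 1 then 0 else coordv hS u j / (1 - eval' hS j)
    with hg
  refine ⟨∑ j, g j • evec hS j, ?_⟩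
  have hcoord : ∀ j, coordv hS (∑ m, g m • evec hS m) j = g j := coordv_sum_smul_evec hS g
  rw [dot_one_sub_mulVec hS _ _, dot_eq_sum_coord hS u _]
  simp only [hcoord]
  have h1 : ∑ j, coordv hS u j * g j = Bq hS u := by
    unfold Bq
    apply Finset.sum_congr rfl
    intro j _
    simp only [hg]
    by_cases hj : eval' hS j = 1
    · rw [if_pos hj, if_pos hj, mul_zero]
    · rw [if_neg hj, if_neg hj]
      ring
  have h2 : ∑ j, g j * g j * (1 - eval' hS j) = Bq hS u := by
    unfold Bq
    apply Finset.sum_congr rfl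
    intro j _
    simp only [hg]
    by_cases hj : eval' hS j = 1
    · rw [if_pos hj, if_pos hj]
      ring
    · rw [if_neg hj, if_neg hj]
      have he : (1 : ℝ) - eval' hS j ≠ 0 := sub_ne_zero.2 (Ne.symm hj)
      field_simp
  rw [h1, h2]
  ring

lemma Lval_eq_Bq (hπpos : ∀ x, 0 < π x) (hP : IsStochastic P) (hirr : MatIrreducible P)
    (hS : (Smat π P).IsHermitian) {u : Fin n → ℝ} (hu : wvec π ⬝ᵥ u = 0) :
    Lval hS u = 2 * Bq hS u - u ⬝ᵥ u := by
  rw [dot_eq_sum_coord hS u u]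
  unfold Lval Bq
  rw [Finset.mul_sum, ← Finset.sum_sub_distrib]
  apply Finset.sum_congr rfl
  intro j _
  by_cases hj : eval' hS j = 1
  · rw [if_pos hj, if_pos hj]
    have hc : coordv hS u j = 0 := coordv_eq_zero_at_one hπpos hP hirr hS hj hu
    rw [hc]
    ring
  · rw [if_neg hj, if_neg hj]
    have he : (1 : ℝ) - eval' hS j ≠ 0 := sub_ne_zero.2 (Ne.symm hj)
    field_simp
    ring

lemma herm_transpose {A : Matrix (Fin n) (Fin n) ℝ} (hA : A.IsHermitian) : Aᵀ = A := by
  ext x y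
  have h2 := congrFun (congrFun hA x) y
  simpa [Matrix.conjTranspose_apply] using h2

lemma wdot_self (hπpos : ∀ x, 0 < π x) (hπsum : ∑ x, π x = 1) :
    wvec π ⬝ᵥ wvec π = 1 := by
  simp only [dotProduct, wvec]
  rw [Finset.sum_congr rfl fun x _ => Real.mul_self_sqrt (hπpos x).le, hπsum]

lemma wdot_mulVec (hπpos : ∀ x, 0 < π x) (hP : IsStochastic P)
    (hrev : IsReversible π P) (t : Fin n → ℝ) :
    wvec π ⬝ᵥ (Smat π P *ᵥ t) = wvec π ⬝ᵥ t := by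
  rw [Matrix.dotProduct_mulVec, ← Matrix.mulVec_transpose,
    herm_transpose (Smat_herm hπpos hrev), Smat_mulVec_wvec hπpos hP]

lemma dot_A_expand (t : Fin n → ℝ) :
    t ⬝ᵥ (((1 : Matrix (Fin n) (Fin n) ℝ) - Smat π P) *ᵥ t)
      = t ⬝ᵥ t - t ⬝ᵥ (Smat π P *ᵥ t) := by
  rw [Matrix.sub_mulVec, Matrix.one_mulVec, dotProduct_sub]

lemma qf_decomp (hπpos : ∀ x, 0 < π x) (hπsum : ∑ x, π x = 1) (hP : IsStochastic P)
    (hrev : IsReversible π P) (t : Fin n → ℝ) :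
    t ⬝ᵥ (Smat π P *ᵥ t) = (t - (wvec π ⬝ᵥ t) • wvec π) ⬝ᵥ
      (Smat π P *ᵥ (t - (wvec π ⬝ᵥ t) • wvec π)) + (wvec π ⬝ᵥ t) ^ 2 := by
  set al := wvec π ⬝ᵥ t with hal
  set t0 := t - al • wvec π with ht0
  have ht : t = t0 + al • wvec π := by rw [ht0]; ring_nf
  have h1 : wvec π ⬝ᵥ t0 = 0 := by
    rw [ht0, dotProduct_sub, dotProduct_smul, wdot_self hπpos hπsum]
    simp [hal]
  conv_lhs => rw [ht]
  rw [Matrix.mulVec_add, Matrix.mulVec_smul, Smat_mulVec_wvec hπpos hP]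
  rw [add_dotProduct, dotProduct_add, dotProduct_add]
  rw [smul_dotProduct, dotProduct_smul, dotProduct_smul]
  have h2 : wvec π ⬝ᵥ (Smat π P *ᵥ t0) = 0 := by
    rw [wdot_mulVec hπpos hP hrev, h1]
  have h3 : t0 ⬝ᵥ wvec π = 0 := by rw [dotProduct_comm, h1]
  have h4 : wvec π ⬝ᵥ wvec π = 1 := wdot_self hπpos hπsum
  rw [h2, h3]
  simp only [smul_zero, smul_dotProduct, dotProduct_smul, h4, smul_eq_mul]
  ring

variable {P' : Matrix (Fin n) (Fin n) ℝ}

lemma Bq_iff_qf (hπpos : ∀ x, 0 < π x) (hπsum : ∑ x, π x = 1)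
    (hP : IsStochastic P) (hrev : IsReversible π P) (hirr : MatIrreducible P)
    (hP' : IsStochastic P') (hrev' : IsReversible π P') (hirr' : MatIrreducible P')
    (hS : (Smat π P).IsHermitian) (hS' : (Smat π P').IsHermitian) :
    (∀ u, wvec π ⬝ᵥ u = 0 → Bq hS' u ≤ Bq hS u) ↔
      (∀ t, t ⬝ᵥ (Smat π P' *ᵥ t) ≤ t ⬝ᵥ (Smat π P *ᵥ t)) := by
  constructor
  · intro h t
    rw [qf_decomp hπpos hπsum hP hrev t, qf_decomp hπpos hπsum hP' hrev' t]
    set al := wvec π ⬝ᵥ t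
    set t0 := t - al • wvec π with ht0
    have h1 : wvec π ⬝ᵥ t0 = 0 := by
      rw [ht0, dotProduct_sub, dotProduct_smul, wdot_self hπpos hπsum]
      simp
      exact sub_self _
    have hq : t0 ⬝ᵥ (Smat π P' *ᵥ t0) ≤ t0 ⬝ᵥ (Smat π P *ᵥ t0) := by
      set u := ((1 : Matrix (Fin n) (Fin n) ℝ) - Smat π P) *ᵥ t0 with hu
      have hu0 : wvec π ⬝ᵥ u = 0 := by
        rw [hu, Matrix.sub_mulVec, Matrix.one_mulVec, dotProduct_sub,
          wdot_mulVec hπpos hP hrev, h1, sub_self]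
      have e1 : Bq hS u = t0 ⬝ᵥ (((1 : Matrix (Fin n) (Fin n) ℝ) - Smat π P) *ᵥ t0) :=
        ineq_C2 hπpos hP hS t0
      have e2 : t0 ⬝ᵥ u = t0 ⬝ᵥ (((1 : Matrix (Fin n) (Fin n) ℝ) - Smat π P) *ᵥ t0) := by
        rw [hu]
      have e3 := h u hu0
      have e4 := ineq_C3 hπpos hP' hirr' hS' hu0 h1
      rw [dot_A_expand] at e1 e2 e4
      rw [dot_A_expand] at e4
      linarith
    linarith
  · intro h u hu
    obtain ⟨t0, ht0⟩ := ineq_C4 hπpos hP' hirr' hS' hu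
    have h1 := ineq_C1 hπpos hP hirr hS hu t0
    have h2 := h t0
    rw [dot_A_expand] at ht0 h1
    linarith

lemma uvec_of_perp (hπpos : ∀ x, 0 < π x) {u : Fin n → ℝ} (hu : wvec π ⬝ᵥ u = 0) :
    uvec π (fun x => u x / Real.sqrt (π x)) = u := by
  have hmu : ∑ z, π z * (u z / Real.sqrt (π z)) = 0 := by
    rw [← hu]
    apply Finset.sum_congr rfl
    intro z _
    have hsz := (sqrt_pos' hπpos z).ne'
    have hz : Real.sqrt (π z) * Real.sqrt (π z) = π z := Real.mul_self_sqrt (hπpos z).le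
    simp only [dotProduct, wvec]
    have hz2 : Real.sqrt (π z) ^ 2 = π z := Real.sq_sqrt (hπpos z).le
    field_simp
    linear_combination (-(u z)) * hz2
  funext x
  unfold uvec
  rw [hmu]
  have hsx := (sqrt_pos' hπpos x).ne'
  field_simp
  simp

lemma Lval_iff_Bq (hπpos : ∀ x, 0 < π x) (hπsum : ∑ x, π x = 1)
    (hP : IsStochastic P) (hirr : MatIrreducible P)
    (hP' : IsStochastic P') (hirr' : MatIrreducible P')
    (hS : (Smat π P).IsHermitian) (hS' : (Smat π P').IsHermitian) :
    (∀ f, Lval hS' (uvec π f) ≤ Lval hS (uvec π f)) ↔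
      (∀ u, wvec π ⬝ᵥ u = 0 → Bq hS' u ≤ Bq hS u) := by
  constructor
  · intro h u hu
    have := h (fun x => u x / Real.sqrt (π x))
    rw [uvec_of_perp hπpos hu] at this
    rw [Lval_eq_Bq hπpos hP hirr hS hu, Lval_eq_Bq hπpos hP' hirr' hS' hu] at this
    linarith
  · intro h f
    have hu := wvec_dot_uvec hπpos hπsum f
    rw [Lval_eq_Bq hπpos hP hirr hS hu, Lval_eq_Bq hπpos hP' hirr' hS' hu]
    have := h _ hu
    linarith

lemma hasVar (hπpos : ∀ x, 0 < π x) (hπsum : ∑ x, π x = 1)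
    (hP : IsStochastic P) (hrev : IsReversible π P) (hirr : MatIrreducible P) (f : Fin n → ℝ) :
    Tendsto (varN π P f) atTop (nhds (Lval (Smat_herm hπpos hrev) (uvec π f))) :=
  tendsto_varN hπpos hπsum hP hirr (Smat_herm hπpos hrev) f

lemma mix_stoch {Q : Matrix (Fin n) (Fin n) ℝ} (hP : IsStochastic P) (hQ : IsStochastic Q)
    {a : ℝ} (ha0 : 0 < a) (ha1 : a < 1) : IsStochastic (a • P + (1 - a) • Q) := by
  constructor
  · intro x y
    simp only [Matrix.add_apply, Matrix.smul_apply, smul_eq_mul]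
    have := hP.1 x y
    have := hQ.1 x y
    nlinarith
  · intro x
    simp only [Matrix.add_apply, Matrix.smul_apply, smul_eq_mul]
    rw [Finset.sum_add_distrib, ← Finset.mul_sum, ← Finset.mul_sum, hP.2 x, hQ.2 x]
    ring

lemma mix_rev {Q : Matrix (Fin n) (Fin n) ℝ} (hrev : IsReversible π P)
    (hrevQ : IsReversible π Q) (a : ℝ) : IsReversible π (a • P + (1 - a) • Q) := by
  intro x y
  simp only [Matrix.add_apply, Matrix.smul_apply, smul_eq_mul]
  have h1 := hrev x y
  have h2 := hrevQ x y
  linear_combination a * h1 + (1 - a) * h2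

lemma pow_nonneg' (hPnn : ∀ x y, 0 ≤ P x y) (k : ℕ) : ∀ x y, 0 ≤ (P ^ k) x y := by
  induction k with
  | zero =>
    intro x y
    by_cases h : x = y
    · subst h; simp
    · simp [pow_zero, Matrix.one_apply_ne h]
  | succ k ih =>
    intro x y
    rw [pow_succ, Matrix.mul_apply]
    exact Finset.sum_nonneg fun z _ => mul_nonneg (ih x z) (hPnn z y)

lemma pow_entry_le {R : Matrix (Fin n) (Fin n) ℝ} {a : ℝ} (ha0 : 0 < a)
    (hRnn : ∀ x y, 0 ≤ R x y) (hPnn : ∀ x y, 0 ≤ P x y)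
    (hle : ∀ x y, a * P x y ≤ R x y) (k : ℕ) :
    ∀ x y, a ^ k * (P ^ k) x y ≤ (R ^ k) x y := by
  induction k with
  | zero =>
    intro x y
    simp
  | succ k ih =>
    intro x y
    have hps : (P ^ (k + 1)) x y = ∑ z, (P ^ k) x z * P z y := by
      rw [pow_succ, Matrix.mul_apply]
    have hrs : (R ^ (k + 1)) x y = ∑ z, (R ^ k) x z * R z y := by
      rw [pow_succ, Matrix.mul_apply]
    rw [hps, hrs, Finset.mul_sum]
    apply Finset.sum_le_sum
    intro z _
    have h1 := ih x z
    have h2 := hle z y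
    have hpk : 0 ≤ (P ^ k) x z := pow_nonneg' hPnn k x z
    have hp0 : 0 ≤ a * P z y := mul_nonneg ha0.le (hPnn z y)
    have hr0 : 0 ≤ (R ^ k) x z := pow_nonneg' hRnn k x z
    calc a ^ (k + 1) * ((P ^ k) x z * P z y)
        = (a ^ k * (P ^ k) x z) * (a * P z y) := by ring
      _ ≤ (R ^ k) x z * R z y := mul_le_mul h1 h2 hp0 hr0

lemma mix_irr {Q : Matrix (Fin n) (Fin n) ℝ} (hP : IsStochastic P) (hQ : IsStochastic Q)
    (hirr : MatIrreducible P) {a : ℝ} (ha0 : 0 < a) (ha1 : a < 1) :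
    MatIrreducible (a • P + (1 - a) • Q) := by
  intro x y
  obtain ⟨k, hk⟩ := hirr x y
  refine ⟨k, ?_⟩
  set R := a • P + (1 - a) • Q with hR
  have hRnn : ∀ x y, 0 ≤ R x y := (mix_stoch hP hQ ha0 ha1).1
  have hle : ∀ x y, a * P x y ≤ R x y := by
    intro x y
    simp only [hR, Matrix.add_apply, Matrix.smul_apply, smul_eq_mul]
    nlinarith [hQ.1 x y]
  have h2 := pow_entry_le ha0 hRnn hP.1 hle k x y
  have hak : 0 < a ^ k := pow_pos ha0 k
  nlinarith

lemma Smat_mix {Q : Matrix (Fin n) (Fin n) ℝ} (a b : ℝ) :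
    Smat π (a • P + b • Q) = a • Smat π P + b • Smat π Q := by
  ext x y
  simp only [Smat, Matrix.of_apply, Matrix.add_apply, Matrix.smul_apply, smul_eq_mul]
  ring

lemma qf_mix {Q : Matrix (Fin n) (Fin n) ℝ} (a b : ℝ) (t : Fin n → ℝ) :
    t ⬝ᵥ (Smat π (a • P + b • Q) *ᵥ t)
      = a * (t ⬝ᵥ (Smat π P *ᵥ t)) + b * (t ⬝ᵥ (Smat π Q *ᵥ t)) := by
  rw [Smat_mix, Matrix.add_mulVec, Matrix.smul_mulVec, Matrix.smul_mulVec,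
    dotProduct_add, dotProduct_smul, dotProduct_smul]
  simp [smul_eq_mul]

end PerMatrix
end Stmt9Aux

lemma effDom_iff_qf {n : ℕ} {π : Fin n → ℝ} {P P' : Matrix (Fin n) (Fin n) ℝ}
    (hπpos : ∀ x, 0 < π x) (hπsum : ∑ x, π x = 1)
    (hP : IsStochastic P) (hrev : IsReversible π P) (hirr : MatIrreducible P)
    (hP' : IsStochastic P') (hrev' : IsReversible π P') (hirr' : MatIrreducible P') :
    EffDom π P' P ↔
      ∀ t, t ⬝ᵥ (Stmt9Aux.Smat π P' *ᵥ t) ≤ t ⬝ᵥ (Stmt9Aux.Smat π P *ᵥ t) := by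
  have hPs : Stmt9Aux.IsStochastic P := hP
  have hP's : Stmt9Aux.IsStochastic P' := hP'
  have hrevs : Stmt9Aux.IsReversible π P := hrev
  have hrev's : Stmt9Aux.IsReversible π P' := hrev'
  have hirrs : Stmt9Aux.MatIrreducible P := hirr
  have hirr's : Stmt9Aux.MatIrreducible P' := hirr'
  have hS := Stmt9Aux.Smat_herm hπpos hrevs
  have hS' := Stmt9Aux.Smat_herm hπpos hrev's
  have hbridge : ∀ (R : Matrix (Fin n) (Fin n) ℝ) (f : Fin n → ℝ),
      varN π R f = Stmt9Aux.varN π R f := fun R f => funext fun N => rfl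
  have hhasP : ∀ f, HasAsymptVar π P f (Stmt9Aux.Lval hS (Stmt9Aux.uvec π f)) := by
    intro f
    unfold HasAsymptVar
    rw [hbridge]
    exact Stmt9Aux.tendsto_varN hπpos hπsum hPs hirrs hS f
  have hhasP' : ∀ f, HasAsymptVar π P' f (Stmt9Aux.Lval hS' (Stmt9Aux.uvec π f)) := by
    intro f
    unfold HasAsymptVar
    rw [hbridge]
    exact Stmt9Aux.tendsto_varN hπpos hπsum hP's hirr's hS' f
  rw [← Stmt9Aux.Bq_iff_qf hπpos hπsum hPs hrevs hirrs hP's hrev's hirr's hS hS',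
    ← Stmt9Aux.Lval_iff_Bq hπpos hπsum hPs hirrs hP's hirr's hS hS']
  constructor
  · intro hED f
    exact hED f _ _ (hhasP' f) (hhasP f)
  · intro hL f vP vQ h1 h2
    have e1 : vP = Stmt9Aux.Lval hS' (Stmt9Aux.uvec π f) := tendsto_nhds_unique h1 (hhasP' f)
    have e2 : vQ = Stmt9Aux.Lval hS (Stmt9Aux.uvec π f) := tendsto_nhds_unique h2 (hhasP f)
    rw [e1, e2]
    exact hL f

theorem stmt9 {n : ℕ} (π : Fin n → ℝ) (P P' Q : Matrix (Fin n) (Fin n) ℝ)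
    (hπpos : ∀ x, 0 < π x) (hπsum : ∑ x, π x = 1)
    (hP : IsStochastic P) (hP' : IsStochastic P') (hQ : IsStochastic Q)
    (hrevP : IsReversible π P) (hrevP' : IsReversible π P') (hrevQ : IsReversible π Q)
    (hirrP : MatIrreducible P) (hirrP' : MatIrreducible P')
    (a : ℝ) (ha0 : 0 < a) (ha1 : a < 1) :
    EffDom π P' P ↔
      EffDom π (a • P' + (1 - a) • Q) (a • P + (1 - a) • Q) := by
  classical
  have hPs : Stmt9Aux.IsStochastic P := hP
  have hP's : Stmt9Aux.IsStochastic P' := hP'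
  have hQs : Stmt9Aux.IsStochastic Q := hQ
  have hrevPs : Stmt9Aux.IsReversible π P := hrevP
  have hrevP's : Stmt9Aux.IsReversible π P' := hrevP'
  have hrevQs : Stmt9Aux.IsReversible π Q := hrevQ
  have hirrPs : Stmt9Aux.MatIrreducible P := hirrP
  have hirrP's : Stmt9Aux.MatIrreducible P' := hirrP'
  have hRs : Stmt9Aux.IsStochastic (a • P + (1 - a) • Q) :=
    Stmt9Aux.mix_stoch hPs hQs ha0 ha1
  have hR's : Stmt9Aux.IsStochastic (a • P' + (1 - a) • Q) :=
    Stmt9Aux.mix_stoch hP's hQs ha0 ha1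
  have hRrev : Stmt9Aux.IsReversible π (a • P + (1 - a) • Q) :=
    Stmt9Aux.mix_rev hrevPs hrevQs a
  have hR'rev : Stmt9Aux.IsReversible π (a • P' + (1 - a) • Q) :=
    Stmt9Aux.mix_rev hrevP's hrevQs a
  have hRirr : Stmt9Aux.MatIrreducible (a • P + (1 - a) • Q) :=
    Stmt9Aux.mix_irr hPs hQs hirrPs ha0 ha1
  have hR'irr : Stmt9Aux.MatIrreducible (a • P' + (1 - a) • Q) :=
    Stmt9Aux.mix_irr hP's hQs hirrP's ha0 ha1
  rw [effDom_iff_qf hπpos hπsum hP hrevP hirrP hP' hrevP' hirrP',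
      effDom_iff_qf hπpos hπsum hRs hRrev hRirr hR's hR'rev hR'irr]
  constructor
  · intro h t
    rw [Stmt9Aux.qf_mix (P := P') (Q := Q) a (1 - a) t,
      Stmt9Aux.qf_mix (P := P) (Q := Q) a (1 - a) t]
    nlinarith [h t]
  · intro h t
    have h2 := h t
    rw [Stmt9Aux.qf_mix (P := P') (Q := Q) a (1 - a) t,
      Stmt9Aux.qf_mix (P := P) (Q := Q) a (1 - a) t] at h2
    nlinarith [h2]
end
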